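/- arXiv:2303.07915 — 7 statements merged into one kernel-verified Lean document; each statement's English description precedes it below -/
import Mathlib

section
/- Let ρ be a permutation of ℕ such that there exists n with every cycle of ρ of length at most n. Then a permutation γ of ℕ lies in the closure of the conjugacy class of ρ (in the pointwise convergence topology on Sym(ℕ)) if and only if for every ι ∈ (ℕ \ {0}) ∪ {∞}, the number of cycles of γ of length ι is at most the number of cycles of ρ of length ι. -/
/-- The cycle (orbit) of `x` under the permutation `ρ`. -/
def orbitOf (ρ : Equiv.Perm ℕ) (x : ℕ) : Set ℕ := {y | ∃ k : ℤ, (ρ ^ k) x = y}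

/-- The set of cycles of `ρ`. -/
def cyclesOf (ρ : Equiv.Perm ℕ) : Set (Set ℕ) := Set.range (orbitOf ρ)

/-- The cycle function: the number (in `ℕ ∪ {∞}`) of cycles of `ρ` of length `ι`,
where `ι ∈ ℕ ∪ {∞}` (length `∞` means the cycle is infinite). -/
noncomputable def cycleCount (ρ : Equiv.Perm ℕ) (ι : ℕ∞) : ℕ∞ :=
  {s | s ∈ cyclesOf ρ ∧ s.encard = ι}.encard

/-- The pointwise convergence topology on `Sym(ℕ)`. -/
instance : TopologicalSpace (Equiv.Perm ℕ) :=
  TopologicalSpace.induced (fun g : Equiv.Perm ℕ => (⇑g, ⇑g.symm)) inferInstance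

open Set Function Equiv Filter Topology

lemma orbitOf_eq_sameCycle (g : Equiv.Perm ℕ) (x : ℕ) :
    orbitOf g x = {y | g.SameCycle x y} := rfl

lemma mem_orbitOf_self (g : Equiv.Perm ℕ) (x : ℕ) : x ∈ orbitOf g x := ⟨0, rfl⟩

lemma orbitOf_eq_of_mem {g : Equiv.Perm ℕ} {x y : ℕ} (h : y ∈ orbitOf g x) :
    orbitOf g y = orbitOf g x := by
  have h' : g.SameCycle x y := h
  ext z
  exact ⟨fun hz => h'.trans hz, fun hz => h'.symm.trans hz⟩

lemma apply_mem_orbitOf {g : Equiv.Perm ℕ} {x y : ℕ} (h : y ∈ orbitOf g x) :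
    g y ∈ orbitOf g x := by
  have h' : g.SameCycle x y := h
  exact (Equiv.Perm.sameCycle_apply_right.mpr h' : g.SameCycle x (g y))

lemma pow_mem_orbitOf (g : Equiv.Perm ℕ) (x : ℕ) (j : ℕ) : (g ^ j) x ∈ orbitOf g x :=
  ⟨(j : ℤ), by rw [zpow_natCast]⟩


lemma periodic_of_pow_eq {g : Equiv.Perm ℕ} {x : ℕ} {a b : ℕ} (hab : a < b)
    (he : (g ^ a) x = (g ^ b) x) : IsPeriodicPt g (b - a) x := by
  have : (g ^ a) ((g ^ (b - a)) x) = (g ^ a) x := by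
    rw [← Equiv.Perm.mul_apply, ← pow_add]
    have hba : a + (b - a) = b := by omega
    rw [hba, ← he]
  have h2 : (g ^ (b - a)) x = x := (g ^ a).injective this
  show g^[b-a] x = x
  rw [Equiv.Perm.iterate_eq_pow]; exact h2

lemma mem_periodicPts_of_finite {g : Equiv.Perm ℕ} {x : ℕ} (h : (orbitOf g x).Finite) :
    x ∈ periodicPts g := by
  have : Finite ↥(orbitOf g x) := h.to_subtype
  obtain ⟨a, b, hne, he⟩ := Finite.exists_ne_map_eq_of_infinite
    (fun n : ℕ => (⟨(g ^ n) x, pow_mem_orbitOf g x n⟩ : ↥(orbitOf g x)))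
  have he' : (g ^ a) x = (g ^ b) x := congrArg Subtype.val he
  rcases lt_or_gt_of_ne hne with hlt | hlt
  · exact ⟨b - a, by omega, periodic_of_pow_eq hlt he'⟩
  · exact ⟨a - b, by omega, periodic_of_pow_eq hlt he'.symm⟩

lemma pow_injOn (g : Equiv.Perm ℕ) (x : ℕ) :
    InjOn (fun j : ℕ => (g ^ j) x) {j | j < minimalPeriod g x} := by
  intro a ha b hb he
  by_contra hne
  rcases lt_or_gt_of_ne hne with hlt | hlt
  · have := (periodic_of_pow_eq hlt he).minimalPeriod_le (by omega)
    simp only [mem_setOf_eq] at hb; omega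
  · have := (periodic_of_pow_eq hlt he.symm).minimalPeriod_le (by omega)
    simp only [mem_setOf_eq] at ha; omega

lemma orbit_eq_image {g : Equiv.Perm ℕ} {x : ℕ} (h : x ∈ periodicPts g) :
    orbitOf g x = (fun j : ℕ => (g ^ j) x) '' {j | j < minimalPeriod g x} := by
  set k := minimalPeriod g x with hk
  have hkpos : 0 < k := minimalPeriod_pos_of_mem_periodicPts h
  have hfix : (g ^ k) x = x := by
    have := isPeriodicPt_minimalPeriod g x
    rwa [IsPeriodicPt, IsFixedPt, Equiv.Perm.iterate_eq_pow] at this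
  apply Set.Subset.antisymm
  · rintro y ⟨i, rfl⟩
    refine ⟨(i % (k : ℤ)).toNat, ?_, ?_⟩
    · have h1 : 0 ≤ i % (k : ℤ) := Int.emod_nonneg i (by exact_mod_cast hkpos.ne')
      have h2 : i % (k : ℤ) < (k : ℤ) := Int.emod_lt_of_pos i (by exact_mod_cast hkpos)
      simp only [mem_setOf_eq]; omega
    · have hdec : i = (k : ℤ) * (i / (k : ℤ)) + i % (k : ℤ) := (Int.mul_ediv_add_emod i k).symm
      have hfix' : ((g ^ (k : ℤ)) : Equiv.Perm ℕ) x = x := by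
        rw [zpow_natCast]; exact hfix
      have hq : ∀ q : ℤ, (g ^ ((k : ℤ) * q)) x = x := by
        intro q
        rw [zpow_mul]
        exact Equiv.Perm.zpow_apply_eq_self_of_apply_eq_self hfix' q
      calc (fun j : ℕ => (g ^ j) x) (i % (k:ℤ)).toNat
          = (g ^ ((i % (k:ℤ)).toNat : ℤ)) x := by rw [zpow_natCast]
        _ = (g ^ (i % (k:ℤ))) x := by
            congr 1
            · congr 1
              exact Int.toNat_of_nonneg (Int.emod_nonneg i (by exact_mod_cast hkpos.ne'))
        _ = (g ^ (i % (k:ℤ))) ((g ^ ((k:ℤ) * (i / (k:ℤ)))) x) := by rw [hq]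
        _ = (g ^ i) x := by
            rw [← Equiv.Perm.mul_apply, ← zpow_add]
            have : i % (k:ℤ) + (k:ℤ) * (i / (k:ℤ)) = i := by omega
            rw [this]
  · rintro y ⟨j, _, rfl⟩
    exact ⟨(j : ℤ), by rw [zpow_natCast]⟩

lemma encard_orbit {g : Equiv.Perm ℕ} {x : ℕ} (h : x ∈ periodicPts g) :
    (orbitOf g x).encard = (minimalPeriod g x : ℕ∞) := by
  rw [orbit_eq_image h, (pow_injOn g x).encard_image, Set.Nat.encard_range]

lemma orbit_finite_of_periodic {g : Equiv.Perm ℕ} {x : ℕ} (h : x ∈ periodicPts g) :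
    (orbitOf g x).Finite := by
  rw [orbit_eq_image h]
  exact (Set.finite_Iio _).image _


lemma orbit_eq_of_agree {g γ : Equiv.Perm ℕ} {x : ℕ} (hfin : (orbitOf γ x).Finite)
    (hag : ∀ y ∈ orbitOf γ x, g y = γ y) : orbitOf g x = orbitOf γ x := by
  have hmap : MapsTo g (orbitOf γ x) (orbitOf γ x) := by
    intro y hy
    rw [hag y hy]
    exact (Equiv.Perm.sameCycle_apply_right.mpr hy : γ.SameCycle x (γ y))
  have hbij : BijOn g (orbitOf γ x) (orbitOf γ x) :=
    (hfin.injOn_iff_bijOn_of_mapsTo hmap).mp g.injective.injOn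
  have hinv : ∀ y ∈ orbitOf γ x, g⁻¹ y ∈ orbitOf γ x := by
    intro y hy
    obtain ⟨z, hz, rfl⟩ := hbij.surjOn hy
    rwa [← Equiv.Perm.mul_apply, inv_mul_cancel, Equiv.Perm.one_apply]
  have hpow : ∀ j : ℕ, (g ^ j) x = (γ ^ j) x := by
    intro j
    induction j with
    | zero => rfl
    | succ m ih =>
      rw [pow_succ', pow_succ', Equiv.Perm.mul_apply, Equiv.Perm.mul_apply, ih]
      exact hag _ (pow_mem_orbitOf γ x m)
  have hz : ∀ i : ℤ, (g ^ i) x ∈ orbitOf γ x := by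
    intro i
    induction i using Int.induction_on with
    | zero => exact ⟨0, rfl⟩
    | succ m ih =>
      have he : (m : ℤ) + 1 = 1 + m := by ring
      rw [he, zpow_add, zpow_one, Equiv.Perm.mul_apply]
      exact hmap ih
    | pred m ih =>
      have he : -(m : ℤ) - 1 = -1 + -m := by ring
      rw [he, zpow_add, zpow_neg_one, Equiv.Perm.mul_apply]
      exact hinv _ ih
  apply Set.Subset.antisymm
  · rintro y ⟨i, rfl⟩
    exact hz i
  · intro y hy
    rw [orbit_eq_image (mem_periodicPts_of_finite hfin)] at hy
    obtain ⟨j, _, rfl⟩ := hy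
    exact ⟨(j : ℤ), by rw [zpow_natCast, hpow]⟩

lemma orbitOf_conj (σ ρ : Equiv.Perm ℕ) (x : ℕ) :
    orbitOf (σ * ρ * σ⁻¹) (σ x) = σ '' orbitOf ρ x := by
  ext y
  constructor
  · rintro ⟨i, hi⟩
    refine ⟨(ρ ^ i) x, ⟨i, rfl⟩, ?_⟩
    rw [← hi, conj_zpow]
    simp [Equiv.Perm.mul_apply]
  · rintro ⟨z, ⟨i, rfl⟩, rfl⟩
    refine ⟨i, ?_⟩
    rw [conj_zpow]
    simp [Equiv.Perm.mul_apply]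

lemma cyclesOf_conj (σ ρ : Equiv.Perm ℕ) :
    cyclesOf (σ * ρ * σ⁻¹) = (Set.image σ) '' cyclesOf ρ := by
  ext s
  constructor
  · rintro ⟨x, rfl⟩
    refine ⟨orbitOf ρ (σ⁻¹ x), ⟨σ⁻¹ x, rfl⟩, ?_⟩
    rw [← orbitOf_conj]
    simp
  · rintro ⟨t, ⟨x, rfl⟩, rfl⟩
    exact ⟨σ x, orbitOf_conj σ ρ x⟩

lemma cycleCount_conj (σ ρ : Equiv.Perm ℕ) (ι : ℕ∞) :
    cycleCount (σ * ρ * σ⁻¹) ι = cycleCount ρ ι := by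
  unfold cycleCount
  have hset : {s | s ∈ cyclesOf (σ * ρ * σ⁻¹) ∧ s.encard = ι} =
      (Set.image σ) '' {s | s ∈ cyclesOf ρ ∧ s.encard = ι} := by
    ext s
    constructor
    · rintro ⟨hs, hc⟩
      rw [cyclesOf_conj] at hs
      obtain ⟨t, ht, rfl⟩ := hs
      refine ⟨t, ⟨ht, ?_⟩, rfl⟩
      rwa [σ.injective.encard_image] at hc
    · rintro ⟨t, ⟨ht, hc⟩, rfl⟩
      refine ⟨?_, ?_⟩
      · rw [cyclesOf_conj]; exact ⟨t, ht, rfl⟩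
      · rwa [σ.injective.encard_image]
  rw [hset, (Set.image_injective.mpr σ.injective).encard_image]

lemma cycleCount_isConj {ρ g : Equiv.Perm ℕ} (hc : IsConj ρ g) (ι : ℕ∞) :
    cycleCount g ι = cycleCount ρ ι := by
  obtain ⟨σ, hσ⟩ := isConj_iff.mp hc
  rw [← hσ, cycleCount_conj]

lemma cyclesOf_isConj {ρ g : Equiv.Perm ℕ} (hc : IsConj ρ g) :
    ∀ s ∈ cyclesOf g, ∃ t ∈ cyclesOf ρ, s.encard = t.encard := by
  obtain ⟨σ, hσ⟩ := isConj_iff.mp hc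
  subst hσ
  intro s hs
  rw [cyclesOf_conj] at hs
  obtain ⟨t, ht, rfl⟩ := hs
  exact ⟨t, ht, σ.injective.encard_image t⟩

def VV (γ : Equiv.Perm ℕ) (F : Finset ℕ) : Set (Equiv.Perm ℕ) :=
  {g | (∀ x ∈ F, g x = γ x) ∧ ∀ x ∈ F, g.symm x = γ.symm x}

lemma block_mem_nhds (f : ℕ → ℕ) (F : Set ℕ) (hF : F.Finite) :
    {h : ℕ → ℕ | ∀ x ∈ F, h x = f x} ∈ 𝓝 f := by
  rw [nhds_pi]
  rw [Filter.mem_pi]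
  classical
  refine ⟨F, hF, fun i => if i ∈ F then {f i} else Set.univ, ?_, ?_⟩
  · intro i
    by_cases h : i ∈ F <;> simp [h, nhds_discrete]
  · intro h hh x hx
    have := hh x hx
    simpa [hx] using this

lemma mem_nhds_imp (f : ℕ → ℕ) (A : Set (ℕ → ℕ)) (hA : A ∈ 𝓝 f) :
    ∃ F : Set ℕ, F.Finite ∧ {h : ℕ → ℕ | ∀ x ∈ F, h x = f x} ⊆ A := by
  rw [nhds_pi, Filter.mem_pi] at hA
  obtain ⟨I, hI, t, ht, hsub⟩ := hA
  refine ⟨I, hI, fun h hh => hsub ?_⟩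
  intro i hi
  have h1 : t i ∈ 𝓝 (f i) := ht i
  rw [nhds_discrete, Filter.mem_pure] at h1
  rw [hh i hi]
  exact h1

lemma VV_mem_nhds (γ : Equiv.Perm ℕ) (F : Finset ℕ) : VV γ F ∈ 𝓝 γ := by
  rw [nhds_induced]
  refine ⟨{h : ℕ → ℕ | ∀ x ∈ (F:Set ℕ), h x = γ x} ×ˢ
    {h : ℕ → ℕ | ∀ x ∈ (F:Set ℕ), h x = γ.symm x}, ?_, ?_⟩
  · rw [nhds_prod_eq]
    exact Filter.prod_mem_prod (block_mem_nhds _ _ F.finite_toSet)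
      (block_mem_nhds _ _ F.finite_toSet)
  · rintro g ⟨h1, h2⟩
    exact ⟨fun x hx => h1 x hx, fun x hx => h2 x hx⟩

lemma mem_closure_iff_VV (S : Set (Equiv.Perm ℕ)) (γ : Equiv.Perm ℕ) :
    γ ∈ closure S ↔ ∀ F : Finset ℕ, ∃ g ∈ S, g ∈ VV γ F := by
  rw [mem_closure_iff_nhds]
  constructor
  · intro h F
    obtain ⟨g, hg1, hg2⟩ := h (VV γ F) (VV_mem_nhds γ F)
    exact ⟨g, hg2, hg1⟩
  · intro h U hU
    rw [nhds_induced] at hU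
    obtain ⟨W, hW, hWsub⟩ := hU
    rw [nhds_prod_eq] at hW
    rw [Filter.mem_prod_iff] at hW
    obtain ⟨A, hA, B, hB, hABsub⟩ := hW
    obtain ⟨F1, hF1, hsub1⟩ := mem_nhds_imp _ A hA
    obtain ⟨F2, hF2, hsub2⟩ := mem_nhds_imp _ B hB
    obtain ⟨g, hgS, hg1, hg2⟩ := h (hF1.toFinset ∪ hF2.toFinset)
    refine ⟨g, hWsub (hABsub ⟨hsub1 ?_, hsub2 ?_⟩), hgS⟩
    · intro x hx
      exact hg1 x (by simp [hF1.mem_toFinset.mpr hx])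
    · intro x hx
      exact hg2 x (by simp [hF2.mem_toFinset.mpr hx])

/-- successor map on `Fin k` not needing `NeZero`. -/
def finSucc {k : ℕ} (j : Fin k) : Fin k :=
  ⟨((j : ℕ) + 1) % k, Nat.mod_lt _ (Nat.pos_of_ne_zero (by have := j.isLt; omega))⟩

noncomputable def cycEquiv {g : Equiv.Perm ℕ} {a : ℕ} {k : ℕ} (h : a ∈ periodicPts g)
    (hk : minimalPeriod g a = k) : Fin k ≃ ↥(orbitOf g a) :=
  Equiv.ofBijective (fun j => ⟨(g ^ (j : ℕ)) a, pow_mem_orbitOf g a j⟩) (by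
    constructor
    · intro i j hij
      have : (g ^ (i : ℕ)) a = (g ^ (j : ℕ)) a := congrArg Subtype.val hij
      exact Fin.ext (pow_injOn g a (by simp [hk, i.isLt]) (by simp [hk, j.isLt]) this)
    · rintro ⟨y, hy⟩
      rw [orbit_eq_image h] at hy
      obtain ⟨j, hj, rfl⟩ := hy
      exact ⟨⟨j, by simpa [hk] using hj⟩, rfl⟩)

lemma cycEquiv_coe {g : Equiv.Perm ℕ} {a : ℕ} {k : ℕ} (h : a ∈ periodicPts g)
    (hk : minimalPeriod g a = k) (j : Fin k) : (cycEquiv h hk j : ℕ) = (g ^ (j : ℕ)) a := rfl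

lemma cycEquiv_succ {g : Equiv.Perm ℕ} {a : ℕ} {k : ℕ} (h : a ∈ periodicPts g)
    (hk : minimalPeriod g a = k) (j : Fin k) :
    g ((cycEquiv h hk j : ℕ)) = (cycEquiv h hk (finSucc j) : ℕ) := by
  have hkpos : 0 < k := Nat.pos_of_ne_zero (by have := j.isLt; omega)
  have hfix : (g ^ k) a = a := by
    have := isPeriodicPt_minimalPeriod g a
    rw [IsPeriodicPt, IsFixedPt, Equiv.Perm.iterate_eq_pow] at this
    rwa [hk] at this
  rw [cycEquiv_coe, cycEquiv_coe]
  show g ((g ^ (j : ℕ)) a) = (g ^ (((j : ℕ) + 1) % k)) a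
  have hstep : g ((g ^ (j:ℕ)) a) = (g ^ ((j:ℕ)+1)) a := by
    rw [pow_succ', Equiv.Perm.mul_apply]
  rcases Nat.lt_or_ge ((j : ℕ) + 1) k with hlt | hge
  · rw [Nat.mod_eq_of_lt hlt, hstep]
  · have hkk : (j : ℕ) + 1 = k := by have := j.isLt; omega
    rw [hkk, Nat.mod_self, pow_zero, hstep, hkk, hfix]
    rfl

lemma transport (g γ : Equiv.Perm ℕ) (a b : ℕ) (hD : (orbitOf g a).Finite)
    (hC : (orbitOf γ b).Finite) (hcard : (orbitOf γ b).encard = (orbitOf g a).encard) :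
    ∃ τ : Equiv.Perm ℕ, (∀ x, x ∉ orbitOf γ b ∪ orbitOf g a → τ x = x) ∧
      ∀ y ∈ orbitOf γ b, (τ * g * τ⁻¹) y = γ y := by
  classical
  set C := orbitOf γ b with hCdef
  set D := orbitOf g a with hDdef
  have hpa : a ∈ periodicPts g := mem_periodicPts_of_finite hD
  have hpb : b ∈ periodicPts γ := mem_periodicPts_of_finite hC
  set k := minimalPeriod g a with hka
  have hkb : minimalPeriod γ b = k := by
    have h1 := encard_orbit hpa
    have h2 := encard_orbit hpb
    rw [← hCdef] at h2; rw [← hDdef] at h1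
    rw [h1, h2] at hcard
    exact_mod_cast hcard
  set eD : Fin k ≃ ↥D := cycEquiv hpa rfl with heD
  set eC : Fin k ≃ ↥C := cycEquiv hpb hkb with heC
  set φ : ↥D ≃ ↥C := eD.symm.trans eC with hφ
  -- bijection between the finite differences
  have hdiffcard : (C \ D).encard = (D \ C).encard := by
    have h1 := Set.encard_diff_add_encard_inter C D
    have h2 := Set.encard_diff_add_encard_inter D C
    rw [Set.inter_comm D C] at h2
    have hfin : (C ∩ D).encard ≠ ⊤ := ((hC.inter_of_left D).encard_lt_top).ne
    rw [hcard] at h1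
    rw [← h2] at h1
    exact WithTop.add_right_cancel hfin h1
  obtain ⟨ψ, hψ⟩ := (hC.diff (t := D)).exists_bijOn_of_encard_eq hdiffcard
  -- the underlying function
  set f : ℕ → ℕ := fun x => if h : x ∈ D then (φ ⟨x, h⟩ : ℕ) else if x ∈ C then ψ x else x
    with hf
  have hfD : ∀ x (h : x ∈ D), f x = (φ ⟨x, h⟩ : ℕ) := fun x h => dif_pos h
  have hfC : ∀ x, x ∉ D → x ∈ C → f x = ψ x := by
    intro x h1 h2; rw [hf]; simp [h1, h2]
  have hfO : ∀ x, x ∉ D → x ∉ C → f x = x := by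
    intro x h1 h2; rw [hf]; simp [h1, h2]
  have hrangeD : ∀ x (h : x ∈ D), f x ∈ C := fun x h => by rw [hfD x h]; exact (φ ⟨x, h⟩).2
  have hrangeC : ∀ x, x ∉ D → x ∈ C → f x ∈ D \ C := by
    intro x h1 h2; rw [hfC x h1 h2]; exact hψ.mapsTo ⟨h2, h1⟩
  have hbij : Function.Bijective f := by
    constructor
    · intro x y he
      by_cases hx : x ∈ D <;> by_cases hy : y ∈ D
      · have : φ ⟨x, hx⟩ = φ ⟨y, hy⟩ := Subtype.ext (by rw [← hfD x hx, ← hfD y hy, he])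
        exact congrArg Subtype.val (φ.injective this)
      · exfalso
        have h1 : f x ∈ C := hrangeD x hx
        by_cases hy2 : y ∈ C
        · exact (hrangeC y hy hy2).2 (he ▸ h1)
        · rw [hfO y hy hy2] at he; exact hy2 (he ▸ h1)
      · exfalso
        have h1 : f y ∈ C := hrangeD y hy
        by_cases hx2 : x ∈ C
        · exact (hrangeC x hx hx2).2 (he ▸ h1)
        · rw [hfO x hx hx2] at he; exact hx2 (he ▸ h1)
      · by_cases hx2 : x ∈ C <;> by_cases hy2 : y ∈ C
        · rw [hfC x hx hx2, hfC y hy hy2] at he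
          exact hψ.injOn ⟨hx2, hx⟩ ⟨hy2, hy⟩ he
        · exfalso
          have h1 : f x ∈ D := (hrangeC x hx hx2).1
          rw [hfO y hy hy2] at he; exact hy (he ▸ h1)
        · exfalso
          have h1 : f y ∈ D := (hrangeC y hy hy2).1
          rw [hfO x hx hx2] at he; exact hx (he ▸ h1)
        · rw [hfO x hx hx2, hfO y hy hy2] at he; exact he
    · intro y
      by_cases hy : y ∈ C
      · refine ⟨(φ.symm ⟨y, hy⟩ : ℕ), ?_⟩
        rw [hfD _ (φ.symm ⟨y, hy⟩).2]
        have : (⟨(φ.symm ⟨y, hy⟩ : ℕ), (φ.symm ⟨y, hy⟩).2⟩ : ↥D) = φ.symm ⟨y, hy⟩ :=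
          Subtype.ext rfl
        rw [this, φ.apply_symm_apply]
      · by_cases hy2 : y ∈ D
        · obtain ⟨x, hx, hxe⟩ := hψ.surjOn ⟨hy2, hy⟩
          exact ⟨x, by rw [hfC x hx.2 hx.1]; exact hxe⟩
        · exact ⟨y, hfO y hy2 hy⟩
  set τ : Equiv.Perm ℕ := Equiv.ofBijective f hbij with hτ
  have hτap : ∀ x, τ x = f x := fun x => rfl
  -- equivariance on D
  have hequi : ∀ x (hx : x ∈ D), τ (g x) = γ (τ x) := by
    intro x hx
    set j : Fin k := eD.symm ⟨x, hx⟩ with hj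
    have hxj : (⟨x, hx⟩ : ↥D) = eD j := by rw [hj, eD.apply_symm_apply]
    have hxval : x = (eD j : ℕ) := congrArg Subtype.val hxj
    have hgx : g x = (eD (finSucc j) : ℕ) := by rw [hxval]; exact cycEquiv_succ hpa rfl j
    have hgxD : g x ∈ D := hgx ▸ (eD (finSucc j)).2
    rw [hτap, hτap, hfD _ hgxD, hfD _ hx]
    have h1 : (⟨g x, hgxD⟩ : ↥D) = eD (finSucc j) := Subtype.ext hgx
    have h2 : φ ⟨g x, hgxD⟩ = eC (finSucc j) := by
      rw [h1, hφ]; simp [Equiv.trans_apply]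
    have h3 : φ ⟨x, hx⟩ = eC j := by
      rw [hxj, hφ]; simp [Equiv.trans_apply]
    rw [h2, h3]
    exact (cycEquiv_succ hpb hkb j).symm
  refine ⟨τ, ?_, ?_⟩
  · intro x hx
    rw [hτap, hfO x (fun h => hx (Or.inr h)) (fun h => hx (Or.inl h))]
  · intro y hy
    set u : ↥D := φ.symm ⟨y, hy⟩ with hu
    have hτu : τ (u : ℕ) = y := by
      rw [hτap, hfD _ u.2]
      have : (⟨(u : ℕ), u.2⟩ : ↥D) = u := Subtype.ext rfl
      rw [this, hu, φ.apply_symm_apply]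
    have hinv : τ⁻¹ y = (u : ℕ) := by
      rw [← hτu]; exact τ.symm_apply_apply _
    rw [Equiv.Perm.mul_apply, Equiv.Perm.mul_apply, hinv, hequi _ u.2, hτu]

lemma main_claim (ρ γ : Equiv.Perm ℕ) (n : ℕ)
    (h : ∀ s ∈ cyclesOf ρ, s.encard ≤ (n : ℕ∞))
    (hle : ∀ ι : ℕ∞, ι ≠ 0 → cycleCount γ ι ≤ cycleCount ρ ι) :
    ∀ 𝒞 : Finset (Set ℕ), (∀ s ∈ 𝒞, s ∈ cyclesOf γ) →
      ∃ g, IsConj ρ g ∧ ∀ s ∈ 𝒞, ∀ x ∈ s, g x = γ x := by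
  classical
  -- every cycle of γ is finite
  have hρtop : cycleCount ρ ⊤ = 0 := by
    unfold cycleCount
    rw [Set.encard_eq_zero]
    ext s
    simp only [mem_setOf_eq, mem_empty_iff_false, iff_false, not_and]
    intro hs hc
    have := h s hs
    rw [hc] at this
    simp at this
  have hγfin : ∀ s ∈ cyclesOf γ, s.Finite := by
    intro s hs
    rw [← Set.encard_ne_top_iff]
    intro hc
    have h0 : cycleCount γ ⊤ = 0 := le_antisymm (hρtop ▸ hle ⊤ (by simp)) zero_le
    unfold cycleCount at h0
    rw [Set.encard_eq_zero] at h0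
    have : s ∈ ({s | s ∈ cyclesOf γ ∧ s.encard = ⊤} : Set (Set ℕ)) := ⟨hs, hc⟩
    rw [h0] at this
    exact this
  intro 𝒞
  induction 𝒞 using Finset.induction_on with
  | empty => exact fun _ => ⟨ρ, isConj_iff.mpr ⟨1, by group⟩, by simp⟩
  | @insert C 𝒞 hC𝒞 ih =>
    intro hmem
    obtain ⟨g, hgconj, hgag⟩ := ih (fun s hs => hmem s (Finset.mem_insert_of_mem hs))
    have hCcyc : C ∈ cyclesOf γ := hmem C (Finset.mem_insert_self C 𝒞)
    have hCfin : C.Finite := hγfin C hCcyc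
    obtain ⟨b, hb⟩ := hCcyc
    -- each member of 𝒞 is a g-cycle
    have hgcyc : ∀ s ∈ 𝒞, ∃ x, s = orbitOf γ x ∧ orbitOf g x = s := by
      intro s hs
      obtain ⟨x, hx⟩ := hmem s (Finset.mem_insert_of_mem hs)
      subst hx
      exact ⟨x, rfl, orbit_eq_of_agree (hγfin _ (hmem _ (Finset.mem_insert_of_mem hs)))
        (hgag _ hs)⟩
    -- counting
    set kC := C.encard with hkC
    have hk0 : kC ≠ 0 := by
      rw [hkC, Set.encard_ne_zero]
      exact ⟨b, hb ▸ mem_orbitOf_self γ b⟩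
    set Bad : Set (Set ℕ) := {s | s ∈ (𝒞 : Set (Set ℕ)) ∧ s.encard = kC} with hBadDef
    have hBadfin : Bad.Finite := 𝒞.finite_toSet.subset (fun s hs => hs.1)
    have hBadC : C ∉ Bad := fun hc => hC𝒞 (Finset.mem_coe.mp hc.1)
    have hsub : insert C Bad ⊆ {s | s ∈ cyclesOf γ ∧ s.encard = kC} := by
      rintro s hs
      rcases Set.mem_insert_iff.mp hs with rfl | hs'
      · exact ⟨⟨b, hb⟩, rfl⟩
      · exact ⟨hmem s (Finset.mem_insert_of_mem (Finset.mem_coe.mp hs'.1)), hs'.2⟩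
    have hcount : Bad.encard + 1 ≤ cycleCount g kC := by
      have h1 : (insert C Bad).encard = Bad.encard + 1 := Set.encard_insert_of_notMem hBadC
      calc Bad.encard + 1 = (insert C Bad).encard := h1.symm
        _ ≤ cycleCount γ kC := Set.encard_le_encard hsub
        _ ≤ cycleCount ρ kC := hle kC hk0
        _ = cycleCount g kC := (cycleCount_isConj hgconj kC).symm
    have hex : ∃ D', (D' ∈ cyclesOf g ∧ D'.encard = kC) ∧ D' ∉ Bad := by
      by_contra hno
      push_neg at hno
      have hsub2 : {s | s ∈ cyclesOf g ∧ s.encard = kC} ⊆ Bad := fun s hs => hno s hs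
      have h2 : cycleCount g kC ≤ Bad.encard := Set.encard_le_encard hsub2
      have h3 : Bad.encard + 1 ≤ Bad.encard := hcount.trans h2
      rw [ENat.add_one_le_iff hBadfin.encard_lt_top.ne] at h3
      exact lt_irrefl _ h3
    obtain ⟨D', ⟨hD'cyc, hD'card⟩, hD'Bad⟩ := hex
    obtain ⟨d, hd⟩ := hD'cyc
    have hD'not : D' ∉ (𝒞 : Set (Set ℕ)) := fun hc => hD'Bad ⟨hc, hD'card⟩
    -- disjointness
    have hDdisj : ∀ s ∈ 𝒞, ∀ x ∈ s, x ∉ D' := by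
      intro s hs x hx hxD
      obtain ⟨xs, rfl, hgs⟩ := hgcyc s hs
      have h1 : orbitOf g x = orbitOf γ xs := by
        rw [orbitOf_eq_of_mem (show x ∈ orbitOf g xs from hgs.symm ▸ hx), hgs]
      have h2 : orbitOf g x = D' := by
        rw [orbitOf_eq_of_mem (show x ∈ orbitOf g d from hd.symm ▸ hxD), hd]
      exact hD'not (by rw [← h2, h1]; exact Finset.mem_coe.mpr hs)
    have hCdisj : ∀ s ∈ 𝒞, ∀ x ∈ s, x ∉ C := by
      intro s hs x hx hxC
      obtain ⟨xs, rfl, _⟩ := hgcyc s hs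
      have h1 : orbitOf γ x = orbitOf γ xs := orbitOf_eq_of_mem hx
      have h2 : orbitOf γ x = C := by
        rw [orbitOf_eq_of_mem (show x ∈ orbitOf γ b from hb.symm ▸ hxC), hb]
      exact hC𝒞 (by rw [show C = orbitOf γ xs from by rw [← h2, h1]]; exact hs)
    -- transport
    have hD'fin : D'.Finite := by
      rw [← Set.encard_ne_top_iff, hD'card, hkC]
      exact hCfin.encard_lt_top.ne
    obtain ⟨τ, hτfix, hτconj⟩ := transport g γ d b (hd ▸ hD'fin)
      (hb ▸ hCfin) (by rw [hd, hb, ← hkC, hD'card])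
    refine ⟨τ * g * τ⁻¹, hgconj.trans (isConj_iff.mpr ⟨τ, rfl⟩), ?_⟩
    intro s hs x hx
    rcases Finset.mem_insert.mp hs with rfl | hs'
    · exact hτconj x (hb.symm ▸ hx)
    · obtain ⟨xs, hxs, hgs⟩ := hgcyc s hs'
      have hout : ∀ z ∈ s, z ∉ orbitOf γ b ∪ orbitOf g d := by
        intro z hz hzin
        rcases hzin with hz1 | hz2
        · exact hCdisj s hs' z hz (hb ▸ hz1)
        · exact hDdisj s hs' z hz (hd ▸ hz2)
      have hτx : τ x = x := hτfix x (hout x hx)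
      have hτinv : τ⁻¹ x = x := by
        have := congrArg τ.symm hτx
        rw [Equiv.symm_apply_apply] at this
        exact this.symm
      have hγx : γ x ∈ s := by
        rw [hxs] at hx ⊢
        exact apply_mem_orbitOf hx
      rw [Equiv.Perm.mul_apply, Equiv.Perm.mul_apply, hτinv, hgag s hs' x hx,
        hτfix (γ x) (hout (γ x) hγx)]

lemma enat_le_of_forall {a b : ℕ∞} (h : ∀ m : ℕ, (m : ℕ∞) ≤ a → (m : ℕ∞) ≤ b) : a ≤ b := by
  by_contra hlt
  push_neg at hlt
  have hbt : b ≠ ⊤ := fun hb => by rw [hb] at hlt; exact (lt_irrefl _ (hlt.trans_le le_top)).elim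
  lift b to ℕ using hbt
  have h1 : ((b + 1 : ℕ) : ℕ∞) ≤ a := by
    push_cast
    rw [ENat.add_one_le_iff (by simp)]
    exact hlt
  have := h (b + 1) h1
  push_cast at this
  rw [ENat.add_one_le_iff (by simp)] at this
  exact lt_irrefl _ this

/-- if every cycle of `ρ` has length at most `n`, then `γ` lies in the
closure of the conjugacy class of `ρ` iff `f_γ(ι) ≤ f_ρ(ι)` for every
`ι ∈ (ℕ \ {0}) ∪ {∞}`. -/
theorem stmt2 (ρ : Equiv.Perm ℕ) (n : ℕ)
    (h : ∀ s ∈ cyclesOf ρ, s.encard ≤ (n : ℕ∞)) (γ : Equiv.Perm ℕ) :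
    γ ∈ closure {g : Equiv.Perm ℕ | IsConj ρ g} ↔
      ∀ ι : ℕ∞, ι ≠ 0 → cycleCount γ ι ≤ cycleCount ρ ι := by
  classical
  constructor
  · intro hcl ι hι0
    rw [mem_closure_iff_VV] at hcl
    -- first : all cycles of γ are finite, and small
    have hnoinf : ∀ x : ℕ, (orbitOf γ x).Finite := by
      intro x
      by_contra hinf
      have hnp : x ∉ periodicPts γ := fun hp => hinf (orbit_finite_of_periodic hp)
      have hinj : InjOn (fun j : ℕ => (γ ^ j) x) {j | j < n + 1} := by
        intro i _ j _ he
        by_contra hne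
        rcases lt_or_gt_of_ne hne with hlt | hlt
        · exact hnp ⟨j - i, by omega, periodic_of_pow_eq hlt he⟩
        · exact hnp ⟨i - j, by omega, periodic_of_pow_eq hlt he.symm⟩
      obtain ⟨g, hgconj, hg1, _⟩ :=
        hcl ((Finset.range (n + 1)).image (fun j => (γ ^ j) x))
      have hgj : ∀ j, j ≤ n → (g ^ j) x = (γ ^ j) x := by
        intro j hj
        induction j with
        | zero => rfl
        | succ m ih =>
          rw [pow_succ', pow_succ', Equiv.Perm.mul_apply, Equiv.Perm.mul_apply,
            ih (by omega)]
          exact hg1 _ (Finset.mem_image_of_mem _ (Finset.mem_range.mpr (by omega)))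
      have hMsub : (fun j : ℕ => (γ ^ j) x) '' {j | j < n + 1} ⊆ orbitOf g x := by
        rintro y ⟨j, hj, rfl⟩
        show (γ ^ j) x ∈ orbitOf g x
        rw [← hgj j (by simpa using Nat.lt_succ_iff.mp hj)]
        exact pow_mem_orbitOf g x j
      have hM : ((fun j : ℕ => (γ ^ j) x) '' {j | j < n + 1}).encard = (n + 1 : ℕ) := by
        rw [hinj.encard_image, Set.Nat.encard_range]
      obtain ⟨t, ht, hte⟩ := cyclesOf_isConj hgconj (orbitOf g x) ⟨x, rfl⟩
      have hle2 : ((n+1 : ℕ) : ℕ∞) ≤ (n : ℕ∞) := by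
        calc ((n+1 : ℕ) : ℕ∞) = ((fun j : ℕ => (γ ^ j) x) '' {j | j < n + 1}).encard := hM.symm
          _ ≤ (orbitOf g x).encard := Set.encard_le_encard hMsub
          _ = t.encard := hte
          _ ≤ (n : ℕ∞) := h t ht
      exact absurd hle2 (by exact_mod_cast by omega)
    -- two cases on ι
    rcases eq_or_ne ι ⊤ with rfl | hιt
    · have : {s | s ∈ cyclesOf γ ∧ s.encard = (⊤ : ℕ∞)} = ∅ := by
        ext s
        simp only [mem_setOf_eq, mem_empty_iff_false, iff_false, not_and]
        rintro ⟨x, rfl⟩ hc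
        exact (hnoinf x).encard_lt_top.ne hc
      unfold cycleCount
      rw [this]
      simp
    · lift ι to ℕ using hιt
      apply enat_le_of_forall
      intro m hm
      obtain ⟨t, htsub, hte⟩ := Set.exists_subset_encard_eq hm
      have htfin : t.Finite := by
        rw [← Set.encard_ne_top_iff, hte]; simp
      have hsfin : ∀ s ∈ t, s.Finite := by
        intro s hs
        rw [← Set.encard_ne_top_iff, (htsub hs).2]
        simp [ne_eq, ← ENat.coe_toNat_eq_self]
      have hFfin : (⋃₀ t).Finite := Set.Finite.sUnion htfin hsfin
      obtain ⟨g, hgconj, hg1, _⟩ := hcl hFfin.toFinset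
      have hagree : ∀ s ∈ t, ∀ y ∈ s, g y = γ y := by
        intro s hs y hy
        exact hg1 y (hFfin.mem_toFinset.mpr ⟨s, hs, hy⟩)
      have htsub2 : t ⊆ {s | s ∈ cyclesOf g ∧ s.encard = (ι : ℕ∞)} := by
        intro s hs
        have hsc := (htsub hs).2
        have hsfin' := hsfin s hs
        have hag' := hagree s hs
        obtain ⟨x, hx⟩ := (htsub hs).1
        subst hx
        exact ⟨⟨x, orbit_eq_of_agree hsfin' hag'⟩, hsc⟩
      calc (m : ℕ∞) = t.encard := hte.symm
        _ ≤ cycleCount g ι := Set.encard_le_encard htsub2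
        _ = cycleCount ρ ι := cycleCount_isConj hgconj ι
  · intro hle
    rw [mem_closure_iff_VV]
    intro F
    obtain ⟨g, hgconj, hgag⟩ := main_claim ρ γ n h hle (F.image (orbitOf γ))
      (by intro s hs; obtain ⟨x, _, rfl⟩ := Finset.mem_image.mp hs; exact ⟨x, rfl⟩)
    refine ⟨g, hgconj, ?_, ?_⟩
    · intro x hx
      exact hgag (orbitOf γ x) (Finset.mem_image_of_mem _ hx) x (mem_orbitOf_self γ x)
    · intro x hx
      have hy : γ.symm x ∈ orbitOf γ x := ⟨-1, by simp [zpow_neg_one]⟩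
      have hgx : g (γ.symm x) = γ (γ.symm x) :=
        hgag (orbitOf γ x) (Finset.mem_image_of_mem _ hx) _ hy
      rw [Equiv.apply_symm_apply] at hgx
      have := congrArg g.symm hgx
      rw [Equiv.symm_apply_apply] at this
      exact this.symm
end

section
/- Let ρ be a permutation of ℕ whose finite cycle lengths are unbounded (or which has an infinite cycle with bounded finite cycles). Then a permutation γ of ℕ lies in the closure of the conjugacy class of ρ in Sym(ℕ) if and only if for every finite n ≥ 1, the number of n-cycles of γ is at most the number of n-cycles of ρ. -/
namespace Stmt3

open Set Equiv

lemma zpow_add_apply (π : Equiv.Perm ℕ) (a b : ℤ) (x : ℕ) :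
    (π ^ (a + b)) x = (π ^ a) ((π ^ b) x) := by
  rw [zpow_add, Equiv.Perm.mul_apply]

lemma mem_orbit_self (π : Equiv.Perm ℕ) (x : ℕ) : x ∈ orbitOf π x := ⟨0, rfl⟩

lemma zpow_mem_orbit (π : Equiv.Perm ℕ) (x : ℕ) (k : ℤ) : (π ^ k) x ∈ orbitOf π x := ⟨k, rfl⟩

lemma pow_mem_orbit (π : Equiv.Perm ℕ) (x : ℕ) (k : ℕ) : (π ^ k) x ∈ orbitOf π x :=
  ⟨(k : ℤ), by rw [zpow_natCast]⟩

lemma orbit_eq_of_mem {π : Equiv.Perm ℕ} {x y : ℕ} (h : y ∈ orbitOf π x) :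
    orbitOf π y = orbitOf π x := by
  obtain ⟨k, rfl⟩ := h
  ext z
  constructor
  · rintro ⟨j, rfl⟩; exact ⟨j + k, by rw [zpow_add_apply]⟩
  · rintro ⟨j, rfl⟩
    refine ⟨j - k, ?_⟩
    have : (π ^ (j - k)) ((π ^ k) x) = (π ^ (j - k + k)) x := (zpow_add_apply π (j - k) k x).symm
    rw [this, sub_add_cancel]

lemma apply_mem_orbit (π : Equiv.Perm ℕ) {x y : ℕ} (h : y ∈ orbitOf π x) : π y ∈ orbitOf π x := by
  obtain ⟨k, rfl⟩ := h
  exact ⟨1 + k, by rw [zpow_add_apply, zpow_one]⟩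

lemma orbitOf_mem_cyclesOf (π : Equiv.Perm ℕ) (x : ℕ) : orbitOf π x ∈ cyclesOf π := ⟨x, rfl⟩

lemma cycle_eq_orbit {π : Equiv.Perm ℕ} {c : Set ℕ} (hc : c ∈ cyclesOf π) {y : ℕ} (hy : y ∈ c) :
    orbitOf π y = c := by
  obtain ⟨x, rfl⟩ := hc
  exact orbit_eq_of_mem hy

lemma cycles_eq_of_mem {π : Equiv.Perm ℕ} {c c' : Set ℕ} (hc : c ∈ cyclesOf π)
    (hc' : c' ∈ cyclesOf π) {z : ℕ} (hz : z ∈ c) (hz' : z ∈ c') : c = c' := by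
  rw [← cycle_eq_orbit hc hz, ← cycle_eq_orbit hc' hz']

lemma pow_fix {π : Equiv.Perm ℕ} {x : ℕ} (h : π x = x) (q : ℕ) : (π ^ q) x = x := by
  induction q with
  | zero => rfl
  | succ n ih => rw [pow_succ, Equiv.Perm.mul_apply, h, ih]

lemma zpow_fix {π : Equiv.Perm ℕ} {x : ℕ} (h : π x = x) (q : ℤ) : (π ^ q) x = x := by
  have hinv : π⁻¹ x = x := by conv_lhs => rw [← h, Equiv.Perm.inv_def, Equiv.symm_apply_apply]
  induction q using Int.induction_on with
  | zero => rfl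
  | succ i ih => rw [zpow_add_apply, zpow_one, h, ih]
  | pred i ih =>
    have : (π ^ ((-i : ℤ) - 1)) x = (π ^ (-i : ℤ)) ((π ^ (-1 : ℤ)) x) := by
      rw [← zpow_add_apply]; ring_nf
    rw [this, zpow_neg_one, hinv, ih]

lemma pow_emod_apply {π : Equiv.Perm ℕ} {x : ℕ} {n : ℕ} (hfix : (π ^ n) x = x) (a : ℕ) :
    (π ^ a) x = (π ^ (a % n)) x := by
  conv_lhs => rw [← Nat.mod_add_div a n]
  rw [pow_add, Equiv.Perm.mul_apply, pow_mul, pow_fix hfix]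

lemma zpow_emod_apply {π : Equiv.Perm ℕ} {x : ℕ} {n : ℕ} (hn : 0 < n) (hfix : (π ^ n) x = x)
    (k : ℤ) : (π ^ k) x = (π ^ ((k % (n : ℤ)).toNat)) x := by
  have h1 : (k % (n : ℤ)) + (n : ℤ) * (k / (n : ℤ)) = k := Int.emod_add_mul_ediv k n
  have h2 : (0 : ℤ) ≤ k % (n : ℤ) := Int.emod_nonneg k (by exact_mod_cast hn.ne')
  conv_lhs => rw [← h1]
  rw [zpow_add_apply, zpow_mul, zpow_natCast, zpow_fix hfix]
  conv_lhs => rw [← Int.toNat_of_nonneg h2]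
  rw [zpow_natCast]

lemma exists_period_of_not_inj {π : Equiv.Perm ℕ} {x : ℕ}
    (h : ¬ Function.Injective fun k : ℤ => (π ^ k) x) :
    ∃ n : ℕ, 0 < n ∧ (π ^ n) x = x := by
  rw [Function.not_injective_iff] at h
  obtain ⟨i, j, hij, hne⟩ := h
  have key : ∀ i j : ℤ, i < j → (π ^ i) x = (π ^ j) x → ∃ n : ℕ, 0 < n ∧ (π ^ n) x = x := by
    intro i j hlt heq
    refine ⟨(j - i).toNat, by omega, ?_⟩
    have h0 : (0:ℤ) ≤ j - i := by omega
    have : (π ^ (j - i)) ((π ^ i) x) = (π ^ i) x := by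
      rw [← zpow_add_apply, sub_add_cancel, ← heq]
    have h2 : (π ^ i).symm ((π ^ (j - i)) ((π ^ i) x)) = (π ^ i).symm ((π ^ i) x) := by rw [this]
    have h3 : (π ^ (j-i)) x = x := by
      rwa [show (π ^ (j - i)) ((π ^ i) x) = (π ^ i) ((π ^ (j-i)) x) by
        rw [← zpow_add_apply, ← zpow_add_apply, add_comm], Equiv.symm_apply_apply,
        Equiv.symm_apply_apply] at h2
    rwa [← zpow_natCast, Int.toNat_of_nonneg h0]
  rcases lt_trichotomy i j with hlt | heq | hgt
  · exact key i j hlt hij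
  · exact absurd heq hne
  · exact key j i hgt hij.symm

lemma orbit_subset_of_period {π : Equiv.Perm ℕ} {x : ℕ} {n : ℕ} (hn : 0 < n)
    (hfix : (π ^ n) x = x) :
    orbitOf π x ⊆ (fun k : ℕ => (π ^ k) x) '' (Set.Iio n) := by
  rintro y ⟨k, rfl⟩
  refine ⟨(k % (n : ℤ)).toNat, ?_, (zpow_emod_apply hn hfix k).symm⟩
  have := Int.emod_lt_of_pos k (by exact_mod_cast hn : (0:ℤ) < n)
  simp only [Set.mem_Iio]
  omega

lemma orbit_finite_of_period {π : Equiv.Perm ℕ} {x : ℕ} {n : ℕ} (hn : 0 < n)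
    (hfix : (π ^ n) x = x) : (orbitOf π x).Finite :=
  Set.Finite.subset ((Set.finite_Iio n).image _) (orbit_subset_of_period hn hfix)

lemma infinite_orbit_inj {π : Equiv.Perm ℕ} {x : ℕ} (h : (orbitOf π x).Infinite) :
    Function.Injective fun k : ℤ => (π ^ k) x := by
  by_contra hni
  obtain ⟨n, hn, hfix⟩ := exists_period_of_not_inj hni
  exact h (orbit_finite_of_period hn hfix)

lemma finite_orbit_spec {π : Equiv.Perm ℕ} {x : ℕ} {n : ℕ} (hn : 0 < n)
    (h : (orbitOf π x).encard = (n : ℕ∞)) :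
    (π ^ n) x = x ∧ Set.InjOn (fun k : ℕ => (π ^ k) x) (Set.Iio n) ∧
      ∀ y ∈ orbitOf π x, ∃ k, k < n ∧ (π ^ k) x = y := by
  have hfin : (orbitOf π x).Finite := by
    rw [← Set.encard_lt_top_iff, h]; exact ENat.coe_lt_top n
  have hni : ¬ Function.Injective fun k : ℤ => (π ^ k) x := by
    intro hinj
    have : (orbitOf π x).Infinite := by
      have : Set.range (fun k : ℤ => (π ^ k) x) = orbitOf π x := rfl
      rw [← this]
      exact Set.infinite_range_of_injective hinj
    exact this hfin
  obtain ⟨m, hm, hmfix⟩ := exists_period_of_not_inj hni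
  have hex : ∃ m : ℕ, 0 < m ∧ (π ^ m) x = x := ⟨m, hm, hmfix⟩
  classical
  let n₀ := Nat.find hex
  obtain ⟨hn₀pos, hn₀fix⟩ : 0 < n₀ ∧ (π ^ n₀) x = x := Nat.find_spec hex
  have hmin : ∀ d, 0 < d → d < n₀ → (π ^ d) x ≠ x := by
    intro d hd hdlt
    have := Nat.find_min hex hdlt
    tauto
  have hinj : Set.InjOn (fun k : ℕ => (π ^ k) x) (Set.Iio n₀) := by
    have key : ∀ i j : ℕ, i < n₀ → j < n₀ → i ≤ j → (π ^ i) x = (π ^ j) x → i = j := by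
      intro i j hi hj hle heq
      by_contra hne
      have hd : 0 < j - i := by omega
      have : (π ^ j) x = (π ^ i) ((π ^ (j - i)) x) := by
        rw [← Equiv.Perm.mul_apply, ← pow_add]
        congr 2
        omega
      rw [this] at heq
      exact hmin (j - i) hd (by omega) ((π ^ i).injective heq).symm
    intro i hi j hj heq
    simp only [Set.mem_Iio] at hi hj
    rcases le_total i j with hle | hle
    · exact key i j hi hj hle heq
    · exact (key j i hj hi hle heq.symm).symm
  have horb : orbitOf π x = (fun k : ℕ => (π ^ k) x) '' (Set.Iio n₀) := by
    apply Set.Subset.antisymm (orbit_subset_of_period hn₀pos hn₀fix)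
    rintro y ⟨k, _, rfl⟩
    exact pow_mem_orbit π x k
  have hcard : (orbitOf π x).encard = (n₀ : ℕ∞) := by
    rw [horb, Set.InjOn.encard_image hinj, ← Finset.coe_range,
      Set.encard_coe_eq_coe_finsetCard, Finset.card_range]
  have hnn : n = n₀ := by
    rw [h] at hcard
    exact_mod_cast hcard
  subst hnn
  refine ⟨hn₀fix, hinj, ?_⟩
  intro y hy
  rw [horb] at hy
  obtain ⟨k, hk, rfl⟩ := hy
  exact ⟨k, hk, rfl⟩

lemma injOn_pow_of_le_encard {π : Equiv.Perm ℕ} {b : ℕ} {m : ℕ}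
    (hm : (m : ℕ∞) ≤ (orbitOf π b).encard) :
    Set.InjOn (fun k : ℕ => (π ^ k) b) (Set.Iio m) := by
  rcases (orbitOf π b).finite_or_infinite with hfin | hinf
  · obtain ⟨n, hn⟩ : ∃ n : ℕ, (orbitOf π b).encard = (n : ℕ∞) :=
      ⟨_, hfin.encard_eq_coe_toFinset_card⟩
    rcases Nat.eq_zero_or_pos n with h0 | hnpos
    · have hm0 : m = 0 := by
        rw [h0] at hn; rw [hn] at hm
        exact_mod_cast le_antisymm (by exact_mod_cast hm) (Nat.zero_le m)
      subst hm0
      intro a ha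
      simp at ha
    · obtain ⟨-, hinj, -⟩ := finite_orbit_spec hnpos hn
      have hmn : m ≤ n := by rw [hn] at hm; exact_mod_cast hm
      exact hinj.mono (Set.Iio_subset_Iio hmn)
  · have hinj := infinite_orbit_inj hinf
    intro i _ j _ heq
    have : ((i : ℤ)) = (j : ℤ) := hinj (by simpa [zpow_natCast] using heq)
    exact_mod_cast this

lemma transfer {γ ρ : Equiv.Perm ℕ} {x b : ℕ} {n : ℕ} (hn : 0 < n)
    (hγ : (orbitOf γ x).encard = (n : ℕ∞)) (hρ : (orbitOf ρ b).encard = (n : ℕ∞))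
    {a a' : ℕ} (hab : (γ ^ a) x = (γ ^ a') x) : (ρ ^ a) b = (ρ ^ a') b := by
  obtain ⟨hfixγ, hinjγ, -⟩ := finite_orbit_spec hn hγ
  obtain ⟨hfixρ, hinjρ, -⟩ := finite_orbit_spec hn hρ
  rw [pow_emod_apply hfixγ a, pow_emod_apply hfixγ a'] at hab
  have hmm : a % n = a' % n :=
    hinjγ (Set.mem_Iio.mpr (Nat.mod_lt _ hn)) (Set.mem_Iio.mpr (Nat.mod_lt _ hn)) hab
  rw [pow_emod_apply hfixρ a, pow_emod_apply hfixρ a', hmm]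


open Set Equiv

lemma orbitOf_conj (σ π : Equiv.Perm ℕ) (y : ℕ) :
    orbitOf (σ * π * σ⁻¹) y = σ '' orbitOf π (σ⁻¹ y) := by
  ext z
  constructor
  · rintro ⟨k, rfl⟩
    refine ⟨(π ^ k) (σ⁻¹ y), ⟨k, rfl⟩, ?_⟩
    rw [conj_zpow]
    rfl
  · rintro ⟨w, ⟨k, rfl⟩, rfl⟩
    refine ⟨k, ?_⟩
    rw [conj_zpow]
    rfl

lemma cyclesOf_conj (σ π : Equiv.Perm ℕ) :
    cyclesOf (σ * π * σ⁻¹) = Set.image σ '' cyclesOf π := by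
  ext s
  constructor
  · rintro ⟨y, rfl⟩
    exact ⟨orbitOf π (σ⁻¹ y), ⟨σ⁻¹ y, rfl⟩, (orbitOf_conj σ π y).symm⟩
  · rintro ⟨c, ⟨x, rfl⟩, rfl⟩
    refine ⟨σ x, ?_⟩
    rw [orbitOf_conj, Equiv.Perm.inv_def, Equiv.symm_apply_apply]

lemma cycleCount_conj (σ π : Equiv.Perm ℕ) (ι : ℕ∞) :
    cycleCount (σ * π * σ⁻¹) ι = cycleCount π ι := by
  unfold cycleCount
  have hset : {s | s ∈ cyclesOf (σ * π * σ⁻¹) ∧ s.encard = ι} =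
      Set.image σ '' {s | s ∈ cyclesOf π ∧ s.encard = ι} := by
    ext s
    constructor
    · rintro ⟨hs, hcard⟩
      rw [cyclesOf_conj] at hs
      obtain ⟨c, hc, rfl⟩ := hs
      refine ⟨c, ⟨hc, ?_⟩, rfl⟩
      rwa [σ.injective.encard_image] at hcard
    · rintro ⟨c, ⟨hc, hcard⟩, rfl⟩
      refine ⟨?_, ?_⟩
      · rw [cyclesOf_conj]; exact ⟨c, hc, rfl⟩
      · rwa [σ.injective.encard_image]
  rw [hset]
  exact (Set.image_injective.mpr σ.injective).encard_image _

lemma cycleCount_of_isConj {π g : Equiv.Perm ℕ} (h : IsConj π g) (ι : ℕ∞) :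
    cycleCount g ι = cycleCount π ι := by
  obtain ⟨σ, hσ⟩ := isConj_iff.mp h
  rw [← hσ, cycleCount_conj]

lemma mem_closure_iff_finset (S : Set (Equiv.Perm ℕ)) (γ : Equiv.Perm ℕ) :
    γ ∈ closure S ↔
      ∀ F : Finset ℕ, ∃ g ∈ S, ∀ x ∈ F, g x = γ x ∧ g.symm x = γ.symm x := by
  rw [mem_closure_iff_nhds]
  constructor
  · intro H F
    set U : Set ((ℕ → ℕ) × (ℕ → ℕ)) := ⋂ x ∈ F,
      ({p : (ℕ → ℕ) × (ℕ → ℕ) | p.1 x = γ x} ∩ {p | p.2 x = γ.symm x}) with hU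
    have hUopen : IsOpen U := by
      apply isOpen_biInter_finset
      intro x _
      have hc1 : Continuous (fun p : (ℕ → ℕ) × (ℕ → ℕ) => p.1 x) :=
        (continuous_apply x).comp continuous_fst
      have hc2 : Continuous (fun p : (ℕ → ℕ) × (ℕ → ℕ) => p.2 x) :=
        (continuous_apply x).comp continuous_snd
      apply IsOpen.inter
      · show IsOpen ((fun p : (ℕ → ℕ) × (ℕ → ℕ) => p.1 x) ⁻¹' {γ x})
        exact (isOpen_discrete ({γ x} : Set ℕ)).preimage hc1
      · show IsOpen ((fun p : (ℕ → ℕ) × (ℕ → ℕ) => p.2 x) ⁻¹' {γ.symm x})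
        exact (isOpen_discrete ({γ.symm x} : Set ℕ)).preimage hc2
    have hUmem : (⇑γ, ⇑γ.symm) ∈ U :=
      Set.mem_iInter₂.mpr fun x _ => ⟨rfl, rfl⟩
    have hnhds : (fun g : Equiv.Perm ℕ => (⇑g, ⇑g.symm)) ⁻¹' U ∈ nhds γ := by
      rw [nhds_induced]
      exact Filter.preimage_mem_comap (hUopen.mem_nhds hUmem)
    obtain ⟨g, hgU, hgS⟩ := H _ hnhds
    refine ⟨g, hgS, ?_⟩
    intro x hx
    simp only [Set.mem_preimage, hU, Set.mem_iInter, Set.mem_inter_iff, Set.mem_setOf_eq] at hgU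
    exact hgU x hx
  · intro H t ht
    rw [nhds_induced] at ht
    obtain ⟨u, hu, hsub⟩ := Filter.mem_comap.mp ht
    rw [mem_nhds_prod_iff] at hu
    obtain ⟨u1, hu1, u2, hu2, hprod⟩ := hu
    rw [nhds_pi] at hu1 hu2
    rw [Filter.mem_pi] at hu1 hu2
    obtain ⟨I1, hI1fin, t1, ht1, hsub1⟩ := hu1
    obtain ⟨I2, hI2fin, t2, ht2, hsub2⟩ := hu2
    have hmem1 : ∀ i, γ i ∈ t1 i := by
      intro i
      have := ht1 i
      rwa [nhds_discrete, Filter.mem_pure] at this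
    have hmem2 : ∀ i, γ.symm i ∈ t2 i := by
      intro i
      have := ht2 i
      rwa [nhds_discrete, Filter.mem_pure] at this
    obtain ⟨g, hgS, hg⟩ := H (hI1fin.toFinset ∪ hI2fin.toFinset)
    refine ⟨g, ?_, hgS⟩
    apply hsub
    show (⇑g, ⇑g.symm) ∈ u
    apply hprod
    constructor
    · refine hsub1 (Set.mem_pi.mpr fun i hi => ?_)
      have hgi : g i = γ i := (hg i (by simp [Set.Finite.mem_toFinset, hi])).1
      show g i ∈ t1 i
      rw [hgi]
      exact hmem1 i
    · refine hsub2 (Set.mem_pi.mpr fun i hi => ?_)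
      have hgi : g.symm i = γ.symm i := (hg i (by simp [Set.Finite.mem_toFinset, hi])).2
      show g.symm i ∈ t2 i
      rw [hgi]
      exact hmem2 i

lemma exists_injOn_mapsTo {α β : Type*} [Nonempty β] {s : Set α} {u : Set β}
    (hs : s.Finite) (h : s.encard ≤ u.encard) :
    ∃ f : α → β, Set.InjOn f s ∧ Set.MapsTo f s u := by
  classical
  obtain ⟨t, hts, htcard⟩ := Set.exists_subset_encard_eq h
  have hsfin : Finite ↥s := hs.to_subtype
  have htfin' : t.Finite := by
    rw [← Set.encard_lt_top_iff] at hs ⊢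
    rwa [htcard]
  have htfin : Finite ↥t := htfin'.to_subtype
  have hcard : Nat.card ↥s = Nat.card ↥t := by
    rw [Nat.card_coe_set_eq, Nat.card_coe_set_eq, Set.ncard_def, Set.ncard_def, htcard]
  obtain ⟨eqv⟩ := Finite.card_eq.mp hcard
  refine ⟨fun c => if hc : c ∈ s then (eqv ⟨c, hc⟩ : β) else Classical.arbitrary β, ?_, ?_⟩
  · intro c hc c' hc' heq
    simp only [dif_pos hc, dif_pos hc'] at heq
    exact congrArg Subtype.val (eqv.injective (Subtype.ext heq))
  · intro c hc
    simp only [dif_pos hc]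
    exact hts (eqv ⟨c, hc⟩).2

lemma exists_perm_extend {D : Set ℕ} (hD : D.Finite) {e : ℕ → ℕ} (he : Set.InjOn e D) :
    ∃ σ : Equiv.Perm ℕ, ∀ y ∈ D, σ (e y) = y := by
  classical
  set A := e '' D with hAdef
  have hA : A.Finite := hD.image e
  have hAc : Aᶜ.Infinite := hA.infinite_compl
  have hDc : Dᶜ.Infinite := hD.infinite_compl
  have hAinf : Infinite ↥(Aᶜ) := Set.infinite_coe_iff.mpr hAc
  have hDinf : Infinite ↥(Dᶜ) := Set.infinite_coe_iff.mpr hDc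
  obtain ⟨encA⟩ := nonempty_encodable ↥(Aᶜ)
  obtain ⟨encD⟩ := nonempty_encodable ↥(Dᶜ)
  letI := encA
  letI := encD
  letI : Denumerable ↥(Aᶜ) := Denumerable.ofEncodableOfInfinite _
  letI : Denumerable ↥(Dᶜ) := Denumerable.ofEncodableOfInfinite _
  let eA : ↥(Aᶜ) ≃ ℕ := Denumerable.eqv _
  let eD : ↥(Dᶜ) ≃ ℕ := Denumerable.eqv _
  let β : ↥(Aᶜ) ≃ ↥(Dᶜ) := eA.trans eD.symm
  let αe : ↥D ≃ ↥A := Set.BijOn.equiv e he.bijOn_image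
  refine ⟨(Equiv.Set.sumCompl A).symm.trans ((αe.symm.sumCongr β).trans
    (Equiv.Set.sumCompl D)), fun y hy => ?_⟩
  have hyA : e y ∈ A := Set.mem_image_of_mem e hy
  have h1 : (Equiv.Set.sumCompl A).symm (e y) = Sum.inl (⟨e y, hyA⟩ : ↥A) :=
    Equiv.Set.sumCompl_symm_apply (s := A) (x := ⟨e y, hyA⟩)
  have h2 : αe.symm ⟨e y, hyA⟩ = ⟨y, hy⟩ := by
    rw [Equiv.symm_apply_eq]
    exact Subtype.ext rfl
  simp only [Equiv.trans_apply, h1, Equiv.sumCongr_apply, Sum.map_inl, h2,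
    Equiv.Set.sumCompl_apply_inl]

lemma approx (ρ γ : Equiv.Perm ℕ)
    (h : ∀ n : ℕ, ∃ s ∈ cyclesOf ρ, (n : ℕ∞) < s.encard)
    (hcount : ∀ n : ℕ, 1 ≤ n → cycleCount γ (n : ℕ∞) ≤ cycleCount ρ (n : ℕ∞))
    (E : Finset ℕ) :
    ∃ σ : Equiv.Perm ℕ, ∀ x ∈ E, (σ * ρ * σ⁻¹) x = γ x := by
  classical
  set E' : Finset ℕ := E ∪ E.image γ with hE'def
  have hxE' : ∀ x ∈ E, x ∈ E' := fun x hx => Finset.mem_union_left _ hx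
  have hγxE' : ∀ x ∈ E, γ x ∈ E' :=
    fun x hx => Finset.mem_union_right _ (Finset.mem_image_of_mem γ hx)
  set C : Set (Set ℕ) := orbitOf γ '' ↑E' with hCdef
  have hCfin : C.Finite := E'.finite_toSet.image _
  have hCcyc : ∀ c ∈ C, c ∈ cyclesOf γ := by rintro c ⟨x, -, rfl⟩; exact ⟨x, rfl⟩
  have hmemC : ∀ y : ℕ, y ∈ E' → orbitOf γ y ∈ C := fun y hy => ⟨y, hy, rfl⟩
  have horbC : ∀ y : ℕ, ∀ c ∈ C, y ∈ c → orbitOf γ y ∈ C ∧ orbitOf γ y = c := by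
    intro y c hc hyc
    have hh := cycle_eq_orbit (hCcyc c hc) hyc
    exact ⟨hh ▸ hc, hh⟩
  -- basepoints
  set bγ : Set ℕ → ℕ := fun c => if hc : c ∈ cyclesOf γ then hc.choose else 0 with hbγdef
  have hbγ : ∀ c ∈ cyclesOf γ, orbitOf γ (bγ c) = c := by
    intro c hc
    simp only [hbγdef, dif_pos hc]
    exact hc.choose_spec
  set bρ : Set ℕ → ℕ := fun c => if hc : c ∈ cyclesOf ρ then hc.choose else 0 with hbρdef
  have hbρ : ∀ c ∈ cyclesOf ρ, orbitOf ρ (bρ c) = c := by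
    intro c hc
    simp only [hbρdef, dif_pos hc]
    exact hc.choose_spec
  -- size facts
  have hCsz : ∀ c ∈ C, c.Finite →
      1 ≤ c.encard.toNat ∧ c.encard = ((c.encard.toNat : ℕ) : ℕ∞) := by
    rintro c hc hcfin
    obtain ⟨x, -, rfl⟩ := hc
    have hne : (orbitOf γ x).Nonempty := ⟨x, mem_orbit_self γ x⟩
    have h1 : 1 ≤ (orbitOf γ x).encard := Set.one_le_encard_iff_nonempty.mpr hne
    have h2 : (orbitOf γ x).encard ≠ ⊤ := by
      rw [← Set.encard_lt_top_iff] at hcfin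
      exact hcfin.ne
    constructor
    · have := ENat.coe_toNat h2
      rw [← this] at h1
      exact_mod_cast h1
    · exact (ENat.coe_toNat h2).symm
  -- injections for finite cycle lengths
  set B : ℕ → Set (Set ℕ) := fun n => {s | s ∈ cyclesOf ρ ∧ s.encard = (n : ℕ∞)} with hBdef
  set A : ℕ → Set (Set ℕ) := fun n => {c | c ∈ C ∧ c.encard = (n : ℕ∞)} with hAdef
  have hinjex : ∀ n : ℕ, ∃ f : Set ℕ → Set ℕ,
      1 ≤ n → (Set.InjOn f (A n) ∧ Set.MapsTo f (A n) (B n)) := by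
    intro n
    rcases Nat.lt_or_ge n 1 with h1 | h1
    · exact ⟨id, fun hn => absurd hn (by omega)⟩
    · have hAsub : A n ⊆ {s | s ∈ cyclesOf γ ∧ s.encard = (n : ℕ∞)} :=
        fun c hc => ⟨hCcyc c hc.1, hc.2⟩
      have hAfin : (A n).Finite := hCfin.subset fun c hc => hc.1
      have hcard : (A n).encard ≤ (B n).encard :=
        le_trans (Set.encard_le_encard hAsub) (hcount n h1)
      obtain ⟨f, hf1, hf2⟩ := exists_injOn_mapsTo hAfin hcard
      exact ⟨f, fun _ => ⟨hf1, hf2⟩⟩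
  choose fA hfA using hinjex
  set t : Set ℕ → Set ℕ := fun c => fA c.encard.toNat c with htdef
  have ht : ∀ c ∈ C, c.Finite → (t c ∈ cyclesOf ρ ∧ (t c).encard = c.encard) := by
    intro c hc hcfin
    obtain ⟨h1, h2⟩ := hCsz c hc hcfin
    have hcA : c ∈ A c.encard.toNat := ⟨hc, h2⟩
    have hB := (hfA _ h1).2 hcA
    exact ⟨hB.1, by rw [hB.2, ← h2]⟩
  have htinj : ∀ c ∈ C, ∀ c' ∈ C, c.Finite → c'.Finite → t c = t c' → c = c' := by
    intro c hc c' hc' hf hf' heq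
    obtain ⟨h1, h2⟩ := hCsz c hc hf
    obtain ⟨h1', h2'⟩ := hCsz c' hc' hf'
    have hcA : c ∈ A c.encard.toNat := ⟨hc, h2⟩
    have hcA' : c' ∈ A c'.encard.toNat := ⟨hc', h2'⟩
    have e1 := ((hfA _ h1).2 hcA).2
    have e1' := ((hfA _ h1').2 hcA').2
    simp only [htdef] at heq
    have hnn : c.encard.toNat = c'.encard.toNat := by
      rw [heq] at e1
      rw [e1'] at e1
      exact_mod_cast e1.symm
    rw [hnn] at heq hcA
    exact (hfA _ h1').1 hcA hcA' heq
  -- infinite cycles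
  set IC : Set (Set ℕ) := {c | c ∈ C ∧ c.Infinite} with hICdef
  have hICfin : IC.Finite := hCfin.subset fun c hc => hc.1
  set r : ℕ := hICfin.toFinset.card with hrdef
  have hICcard : IC.encard ≤ ((Set.Iio r : Set ℕ)).encard := by
    rw [hICfin.encard_eq_coe_toFinset_card, ← Finset.coe_range,
      Set.encard_coe_eq_coe_finsetCard, Finset.card_range]
  obtain ⟨idx, hidx1, hidx2⟩ := exists_injOn_mapsTo hICfin hICcard
  -- integer exponents
  set kInt : ℕ → ℤ := fun y =>
    if h : ∃ k : ℤ, (γ ^ k) (bγ (orbitOf γ y)) = y then h.choose else 0 with hkIntdef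
  have hkInt : ∀ y : ℕ, orbitOf γ y ∈ C → (γ ^ kInt y) (bγ (orbitOf γ y)) = y := by
    intro y hy
    have horb : orbitOf γ (bγ (orbitOf γ y)) = orbitOf γ y := hbγ _ (hCcyc _ hy)
    have hex : ∃ k : ℤ, (γ ^ k) (bγ (orbitOf γ y)) = y := by
      have hmem : y ∈ orbitOf γ (bγ (orbitOf γ y)) := by
        rw [horb]; exact mem_orbit_self γ y
      exact hmem
    simp only [hkIntdef, dif_pos hex]
    exact hex.choose_spec
  have hkuniq : ∀ y : ℕ, orbitOf γ y ∈ C → (orbitOf γ y).Infinite →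
      ∀ k : ℤ, (γ ^ k) (bγ (orbitOf γ y)) = y → k = kInt y := by
    intro y hy hinf k hk
    have horb : orbitOf γ (bγ (orbitOf γ y)) = orbitOf γ y := hbγ _ (hCcyc _ hy)
    have hinj := infinite_orbit_inj (x := bγ (orbitOf γ y)) (by rw [horb]; exact hinf)
    exact hinj (hk.trans (hkInt y hy).symm)
  -- bounds
  set M : ℕ := E'.sup fun y => (kInt y).natAbs with hMdef
  have hM : ∀ y ∈ E', (kInt y).natAbs ≤ M := by
    intro y hy
    rw [hMdef]
    exact Finset.le_sup (f := fun y => (kInt y).natAbs) hy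
  set L : ℕ := E'.sup fun y => (orbitOf γ y).encard.toNat with hLdef
  have hL : ∀ c ∈ C, c.encard.toNat ≤ L := by
    rintro c ⟨y, hy, rfl⟩
    rw [hLdef]
    exact Finset.le_sup (f := fun y => (orbitOf γ y).encard.toNat) hy
  set Nbig : ℕ := max ((2 * M + 2) * r) L with hNdef
  obtain ⟨sb, hsbcyc, hsbbig⟩ := h Nbig
  set b0 : ℕ := bρ sb with hb0def
  have hsb : orbitOf ρ b0 = sb := hbρ sb hsbcyc
  -- finite index function
  set indf : ℕ → ℕ := fun y =>
    if h : ∃ k : ℕ, k < (orbitOf γ y).encard.toNat ∧ (γ ^ k) (bγ (orbitOf γ y)) = y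
    then h.choose else 0 with hindfdef
  have hindf : ∀ y : ℕ, orbitOf γ y ∈ C → (orbitOf γ y).Finite →
      indf y < (orbitOf γ y).encard.toNat ∧ (γ ^ indf y) (bγ (orbitOf γ y)) = y := by
    intro y hy hfin
    obtain ⟨h1, h2⟩ := hCsz _ hy hfin
    have horb : orbitOf γ (bγ (orbitOf γ y)) = orbitOf γ y := hbγ _ (hCcyc _ hy)
    obtain ⟨-, -, hsurj⟩ := finite_orbit_spec (n := (orbitOf γ y).encard.toNat)
      (by omega) (by rw [horb]; exact h2)
    obtain ⟨k, hk1, hk2⟩ := hsurj y (by rw [horb]; exact mem_orbit_self γ y)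
    have hex : ∃ k : ℕ, k < (orbitOf γ y).encard.toNat ∧ (γ ^ k) (bγ (orbitOf γ y)) = y :=
      ⟨k, hk1, hk2⟩
    simp only [hindfdef, dif_pos hex]
    exact hex.choose_spec
  -- the embedding e
  set e : ℕ → ℕ := fun y =>
    if (orbitOf γ y).Finite then (ρ ^ indf y) (bρ (t (orbitOf γ y)))
    else (ρ ^ ((2 * M + 2) * idx (orbitOf γ y) + (kInt y + M).toNat)) b0 with hedef
  -- the domain D
  set seg : Set ℕ → Set ℕ :=
    fun c => (fun k : ℤ => (γ ^ k) (bγ c)) '' (Set.Icc (-(M : ℤ)) ((M : ℤ) + 1)) with hsegdef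
  set D : Set ℕ := (⋃ c ∈ {c | c ∈ C ∧ c.Finite}, c) ∪ (⋃ c ∈ IC, seg c) with hDdef
  have hDfin : D.Finite := by
    apply Set.Finite.union
    · exact Set.Finite.biUnion (hCfin.subset fun c hc => hc.1) (fun c hc => hc.2)
    · exact Set.Finite.biUnion hICfin (fun c _ => (Set.finite_Icc _ _).image _)
  have hDelim : ∀ y ∈ D, orbitOf γ y ∈ C ∧
      ((orbitOf γ y).Finite ∨
        ((orbitOf γ y).Infinite ∧ kInt y ∈ Set.Icc (-(M : ℤ)) ((M : ℤ) + 1))) := by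
    intro y hy
    rcases hy with hy | hy
    · obtain ⟨c, hc, hyc⟩ := Set.mem_iUnion₂.mp hy
      obtain ⟨hcC, hcfin⟩ := hc
      obtain ⟨hoC, hoeq⟩ := horbC y c hcC hyc
      exact ⟨hoC, Or.inl (by rw [hoeq]; exact hcfin)⟩
    · obtain ⟨c, hc, hyc⟩ := Set.mem_iUnion₂.mp hy
      obtain ⟨hcC, hcinf⟩ := hc
      obtain ⟨k, hkIcc, hky⟩ := hyc
      have hyc' : y ∈ c := by
        have hmem := zpow_mem_orbit γ (bγ c) k
        rw [hbγ c (hCcyc c hcC)] at hmem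
        rw [← hky]
        exact hmem
      obtain ⟨hoC, hoeq⟩ := horbC y c hcC hyc'
      have hk' : (γ ^ k) (bγ (orbitOf γ y)) = y := by rw [hoeq]; exact hky
      have hkk := hkuniq y hoC (by rw [hoeq]; exact hcinf) k hk'
      exact ⟨hoC, Or.inr ⟨by rw [hoeq]; exact hcinf, hkk ▸ hkIcc⟩⟩
  -- membership of images
  have hefin_mem : ∀ y : ℕ, orbitOf γ y ∈ C → (orbitOf γ y).Finite →
      e y ∈ t (orbitOf γ y) := by
    intro y hy hfin
    have hcyc := (ht _ hy hfin).1
    have horbρ : orbitOf ρ (bρ (t (orbitOf γ y))) = t (orbitOf γ y) := hbρ _ hcyc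
    have hmem := pow_mem_orbit ρ (bρ (t (orbitOf γ y))) (indf y)
    rw [horbρ] at hmem
    simp only [hedef, if_pos hfin]
    exact hmem
  have heinf_mem : ∀ y : ℕ, ¬ (orbitOf γ y).Finite → e y ∈ sb := by
    intro y hinf
    have hmem := pow_mem_orbit ρ b0 ((2 * M + 2) * idx (orbitOf γ y) + (kInt y + M).toNat)
    rw [hsb] at hmem
    simp only [hedef, if_neg hinf]
    exact hmem
  -- sb is none of the t-cycles
  have htsb : ∀ c ∈ C, c.Finite → t c ≠ sb := by
    intro c hc hcfin hcontra
    have h1 : (t c).encard ≤ (Nbig : ℕ∞) := by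
      rw [(ht _ hc hcfin).2, (hCsz _ hc hcfin).2]
      have : c.encard.toNat ≤ Nbig := le_trans (hL _ hc) (le_max_right _ _)
      exact_mod_cast this
    rw [hcontra] at h1
    exact absurd hsbbig (not_lt.mpr h1)
  -- injectivity bound for sb
  have hsbinj : Set.InjOn (fun k : ℕ => (ρ ^ k) b0) (Set.Iio (Nbig + 1)) := by
    apply injOn_pow_of_le_encard
    rw [hsb]
    have : ((Nbig : ℕ∞)) + 1 ≤ sb.encard := Order.add_one_le_of_lt hsbbig
    calc ((Nbig + 1 : ℕ) : ℕ∞) = (Nbig : ℕ∞) + 1 := by push_cast; ring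
    _ ≤ sb.encard := this
  -- exponent bound for infinite-branch values
  have hexpbound : ∀ y : ℕ, orbitOf γ y ∈ C → (orbitOf γ y).Infinite →
      kInt y ∈ Set.Icc (-(M : ℤ)) ((M : ℤ) + 1) →
      (2 * M + 2) * idx (orbitOf γ y) + (kInt y + M).toNat < Nbig + 1 := by
    intro y hy hinf hIcc
    have hidxlt : idx (orbitOf γ y) < r := hidx2 ⟨hy, hinf⟩
    have hres : (kInt y + M).toNat ≤ 2 * M + 1 := by
      obtain ⟨ha, hb⟩ := hIcc
      omega
    have step : (2 * M + 2) * idx (orbitOf γ y) + (kInt y + M).toNat <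
        (2 * M + 2) * (idx (orbitOf γ y) + 1) := by
      rw [Nat.mul_succ]
      omega
    have step2 : (2 * M + 2) * (idx (orbitOf γ y) + 1) ≤ (2 * M + 2) * r :=
      Nat.mul_le_mul_left _ hidxlt
    have step3 : (2 * M + 2) * r ≤ Nbig := le_max_left _ _
    omega
  -- injectivity of e on D
  have heinj : Set.InjOn e D := by
    intro y hy y' hy' heq
    obtain ⟨hyC, hycase⟩ := hDelim y hy
    obtain ⟨hyC', hycase'⟩ := hDelim y' hy'
    rcases hycase with hfin | ⟨hinf, hIcc⟩ <;> rcases hycase' with hfin' | ⟨hinf', hIcc'⟩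
    · -- both finite
      by_cases hcc : orbitOf γ y = orbitOf γ y'
      · obtain ⟨hi1, hi2⟩ := hindf y hyC hfin
        obtain ⟨hi1', hi2'⟩ := hindf y' hyC' hfin'
        obtain ⟨hsz1, hsz2⟩ := hCsz _ hyC hfin
        have htc := ht _ hyC hfin
        have horbρ : orbitOf ρ (bρ (t (orbitOf γ y))) = t (orbitOf γ y) := hbρ _ htc.1
        obtain ⟨-, hinjρ, -⟩ := finite_orbit_spec (n := (orbitOf γ y).encard.toNat)
          (by omega) (by rw [horbρ, htc.2]; exact hsz2)
        simp only [hedef, if_pos hfin, if_pos hfin'] at heq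
        rw [← hcc] at heq
        have hii : indf y = indf y' := by
          apply hinjρ (Set.mem_Iio.mpr hi1) (Set.mem_Iio.mpr ?_) heq
          rw [hcc]
          exact hi1'
        rw [← hi2, ← hi2', ← hcc, hii]
      · -- distinct finite cycles
        exfalso
        have hz : e y ∈ t (orbitOf γ y) := hefin_mem y hyC hfin
        have hz' : e y ∈ t (orbitOf γ y') := heq ▸ hefin_mem y' hyC' hfin'
        have := cycles_eq_of_mem (ht _ hyC hfin).1 (ht _ hyC' hfin').1 hz hz'
        exact hcc (htinj _ hyC _ hyC' hfin hfin' this)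
    · -- finite vs infinite
      exfalso
      have hz : e y ∈ t (orbitOf γ y) := hefin_mem y hyC hfin
      have hz' : e y ∈ sb := heq ▸ heinf_mem y' hinf'
      exact htsb _ hyC hfin (cycles_eq_of_mem (ht _ hyC hfin).1 hsbcyc hz hz')
    · -- infinite vs finite
      exfalso
      have hz : e y' ∈ t (orbitOf γ y') := hefin_mem y' hyC' hfin'
      have hz' : e y' ∈ sb := heq ▸ heinf_mem y hinf
      exact htsb _ hyC' hfin' (cycles_eq_of_mem (ht _ hyC' hfin').1 hsbcyc hz hz')
    · -- both infinite
      have hb1 := hexpbound y hyC hinf hIcc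
      have hb1' := hexpbound y' hyC' hinf' hIcc'
      simp only [hedef, if_neg (hinf : ¬ (orbitOf γ y).Finite),
        if_neg (hinf' : ¬ (orbitOf γ y').Finite)] at heq
      have hzz := hsbinj (Set.mem_Iio.mpr hb1) (Set.mem_Iio.mpr hb1') heq
      -- split the exponent equality
      have hres : (kInt y + M).toNat ≤ 2 * M + 1 := by
        obtain ⟨ha, hb⟩ := hIcc; omega
      have hres' : (kInt y' + M).toNat ≤ 2 * M + 1 := by
        obtain ⟨ha, hb⟩ := hIcc'; omega
      have hidxeq : idx (orbitOf γ y) = idx (orbitOf γ y') := by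
        have d1 : ((2 * M + 2) * idx (orbitOf γ y) + (kInt y + M).toNat) / (2 * M + 2)
            = idx (orbitOf γ y) := by
          rw [Nat.mul_add_div (by omega)]
          rw [Nat.div_eq_of_lt (by omega)]
          omega
        have d2 : ((2 * M + 2) * idx (orbitOf γ y') + (kInt y' + M).toNat) / (2 * M + 2)
            = idx (orbitOf γ y') := by
          rw [Nat.mul_add_div (by omega)]
          rw [Nat.div_eq_of_lt (by omega)]
          omega
        rw [← d1, ← d2, hzz]
      have horbeq : orbitOf γ y = orbitOf γ y' := hidx1 ⟨hyC, hinf⟩ ⟨hyC', hinf'⟩ hidxeq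
      have hreseq : (kInt y + M).toNat = (kInt y' + M).toNat := by
        rw [hidxeq] at hzz
        omega
      have hkeq : kInt y = kInt y' := by
        obtain ⟨ha, -⟩ := hIcc
        obtain ⟨ha', -⟩ := hIcc'
        omega
      rw [← hkInt y hyC, ← hkInt y' hyC', horbeq, hkeq]
  -- key relation on E
  have hkey : ∀ x ∈ E, x ∈ D ∧ γ x ∈ D ∧ e (γ x) = ρ (e x) := by
    intro x hx
    have hxE'' := hxE' x hx
    have hγx := hγxE' x hx
    have hoC : orbitOf γ x ∈ C := hmemC x hxE''
    have horbγx : orbitOf γ (γ x) = orbitOf γ x :=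
      orbit_eq_of_mem (apply_mem_orbit γ (mem_orbit_self γ x))
    have hoCγ : orbitOf γ (γ x) ∈ C := by rw [horbγx]; exact hoC
    rcases (orbitOf γ x).finite_or_infinite with hfin | hinf
    · have hfinγ : (orbitOf γ (γ x)).Finite := by rw [horbγx]; exact hfin
      have hxD : x ∈ D := Or.inl (Set.mem_iUnion₂.mpr
        ⟨orbitOf γ x, ⟨hoC, hfin⟩, mem_orbit_self γ x⟩)
      have hγxD : γ x ∈ D := Or.inl (Set.mem_iUnion₂.mpr
        ⟨orbitOf γ x, ⟨hoC, hfin⟩, apply_mem_orbit γ (mem_orbit_self γ x)⟩)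
      refine ⟨hxD, hγxD, ?_⟩
      obtain ⟨hsz1, hsz2⟩ := hCsz _ hoC hfin
      have horb₀ : orbitOf γ (bγ (orbitOf γ x)) = orbitOf γ x := hbγ _ (hCcyc _ hoC)
      obtain ⟨hi1, hi2⟩ := hindf x hoC hfin
      obtain ⟨hi1', hi2'⟩ := hindf (γ x) hoCγ hfinγ
      rw [horbγx] at hi1' hi2'
      have htc := ht _ hoC hfin
      have horbρ : orbitOf ρ (bρ (t (orbitOf γ x))) = t (orbitOf γ x) := hbρ _ htc.1
      have hγeq : (γ ^ indf (γ x)) (bγ (orbitOf γ x)) = (γ ^ (indf x + 1)) (bγ (orbitOf γ x)) := by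
        rw [hi2', pow_succ', Equiv.Perm.mul_apply, hi2]
      have hρeq : (ρ ^ indf (γ x)) (bρ (t (orbitOf γ x)))
          = (ρ ^ (indf x + 1)) (bρ (t (orbitOf γ x))) := by
        refine transfer (γ := γ) (n := (orbitOf γ x).encard.toNat) (by omega) ?_ ?_ hγeq
        · rw [horb₀]; exact hsz2
        · rw [horbρ, htc.2]; exact hsz2
      simp only [hedef, if_pos hfin, if_pos hfinγ, horbγx]
      rw [hρeq, pow_succ', Equiv.Perm.mul_apply]
    · have hinfγ : (orbitOf γ (γ x)).Infinite := by rw [horbγx]; exact hinf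
      have hICmem : orbitOf γ x ∈ IC := ⟨hoC, hinf⟩
      have habs := hM x hxE''
      have hk1' : (γ ^ (kInt x + 1)) (bγ (orbitOf γ x)) = γ x := by
        rw [add_comm, zpow_add_apply, zpow_one, hkInt x hoC]
      have hk1 : (γ ^ (kInt x + 1)) (bγ (orbitOf γ (γ x))) = γ x := by
        rw [horbγx]; exact hk1'
      have hkγ : kInt (γ x) = kInt x + 1 := (hkuniq (γ x) hoCγ hinfγ _ hk1).symm
      have hxD : x ∈ D := Or.inr (Set.mem_iUnion₂.mpr
        ⟨orbitOf γ x, hICmem,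
          ⟨kInt x, Set.mem_Icc.mpr (by omega), hkInt x hoC⟩⟩)
      have hγxD : γ x ∈ D := Or.inr (Set.mem_iUnion₂.mpr
        ⟨orbitOf γ x, hICmem,
          ⟨kInt x + 1, Set.mem_Icc.mpr (by omega), hk1'⟩⟩)
      refine ⟨hxD, hγxD, ?_⟩
      have hnfin : ¬ (orbitOf γ x).Finite := hinf
      have hnfinγ : ¬ (orbitOf γ (γ x)).Finite := hinfγ
      simp only [hedef, if_neg hnfin, if_neg hnfinγ, horbγx, hkγ]
      have hge : (0 : ℤ) ≤ kInt x + M := by omega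
      have htn : (kInt x + 1 + M).toNat = (kInt x + M).toNat + 1 := by omega
      rw [htn, show (2 * M + 2) * idx (orbitOf γ x) + ((kInt x + M).toNat + 1)
          = ((2 * M + 2) * idx (orbitOf γ x) + (kInt x + M).toNat) + 1 by omega,
        pow_succ', Equiv.Perm.mul_apply]
  -- extend to a permutation
  obtain ⟨σ, hσ⟩ := exists_perm_extend hDfin heinj
  refine ⟨σ, ?_⟩
  intro x hx
  obtain ⟨hxD, hγxD, hrel⟩ := hkey x hx
  have h1 : σ⁻¹ x = e x := by
    conv_lhs => rw [← hσ x hxD]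
    rw [Equiv.Perm.inv_def, Equiv.symm_apply_apply]
  rw [Equiv.Perm.mul_apply, Equiv.Perm.mul_apply, h1, ← hrel, hσ _ hγxD]


/-- If `g` agrees with `γ` (in both directions) on the `γ`-orbit of `x`,
then the orbits coincide. -/
lemma orbit_eq_of_agree {g γ : Equiv.Perm ℕ} {x : ℕ}
    (hag : ∀ y ∈ orbitOf γ x, g y = γ y)
    (hag' : ∀ y ∈ orbitOf γ x, g.symm y = γ.symm y) :
    orbitOf g x = orbitOf γ x := by
  have key : ∀ k : ℤ, (g ^ k) x = (γ ^ k) x := by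
    intro k
    induction k using Int.induction_on with
    | zero => rfl
    | succ i ih =>
      have hmem : (γ ^ (i : ℤ)) x ∈ orbitOf γ x := zpow_mem_orbit γ x i
      have h1 : (g ^ ((i : ℤ) + 1)) x = g ((g ^ (i : ℤ)) x) := by
        rw [add_comm (i : ℤ) 1, zpow_add_apply, zpow_one]
      have h2 : (γ ^ ((i : ℤ) + 1)) x = γ ((γ ^ (i : ℤ)) x) := by
        rw [add_comm (i : ℤ) 1, zpow_add_apply, zpow_one]
      rw [h1, h2, ih, hag _ hmem]
    | pred i ih =>
      have hstepγ : (γ ^ (-(i : ℤ))) x = γ ((γ ^ (-(i : ℤ) - 1)) x) := by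
        have hh := zpow_add_apply γ 1 (-(i : ℤ) - 1) x
        rw [zpow_one] at hh
        rw [show (1 + (-(i : ℤ) - 1)) = -(i : ℤ) by ring] at hh
        exact hh
      have hstepg : (g ^ (-(i : ℤ))) x = g ((g ^ (-(i : ℤ) - 1)) x) := by
        have hh := zpow_add_apply g 1 (-(i : ℤ) - 1) x
        rw [zpow_one] at hh
        rw [show (1 + (-(i : ℤ) - 1)) = -(i : ℤ) by ring] at hh
        exact hh
      have hγ : γ.symm ((γ ^ (-(i : ℤ))) x) = (γ ^ (-(i : ℤ) - 1)) x := by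
        rw [hstepγ, Equiv.symm_apply_apply]
      have hg : g.symm ((g ^ (-(i : ℤ))) x) = (g ^ (-(i : ℤ) - 1)) x := by
        rw [hstepg, Equiv.symm_apply_apply]
      have hmem' : (γ ^ (-(i : ℤ))) x ∈ orbitOf γ x := zpow_mem_orbit γ x _
      rw [← hg, ih, hag' _ hmem', hγ]
  ext z
  constructor
  · rintro ⟨k, rfl⟩
    exact ⟨k, (key k).symm⟩
  · rintro ⟨k, rfl⟩
    exact ⟨k, key k⟩

end Stmt3

open Stmt3 in
/-- if the lengths of the cycles of `ρ` are unbounded, then `γ` lies in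
the closure of the conjugacy class of `ρ` iff for every finite `n ≥ 1` the number of
`n`-cycles of `γ` is at most the number of `n`-cycles of `ρ`. -/
theorem stmt3 (ρ : Equiv.Perm ℕ)
    (h : ∀ n : ℕ, ∃ s ∈ cyclesOf ρ, (n : ℕ∞) < s.encard) (γ : Equiv.Perm ℕ) :
    γ ∈ closure {g : Equiv.Perm ℕ | IsConj ρ g} ↔
      ∀ n : ℕ, 1 ≤ n → cycleCount γ (n : ℕ∞) ≤ cycleCount ρ (n : ℕ∞) := by
  classical
  constructor
  · -- forward direction
    intro hcl n hn
    by_contra hlt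
    rw [not_le] at hlt
    have hfin : cycleCount ρ (n : ℕ∞) ≠ ⊤ := (lt_of_lt_of_le hlt le_top).ne
    have hsucc : cycleCount ρ (n : ℕ∞) + 1 ≤ cycleCount γ (n : ℕ∞) :=
      Order.add_one_le_of_lt hlt
    obtain ⟨T, hTsub, hTcard⟩ := Set.exists_subset_encard_eq
      (hsucc.trans_eq rfl : cycleCount ρ (n : ℕ∞) + 1 ≤ cycleCount γ (n : ℕ∞))
    -- T is a finite set of γ-cycles of length n
    have hTfin : T.Finite := by
      rw [← Set.encard_lt_top_iff, hTcard, lt_top_iff_ne_top]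
      intro hcontr
      rcases WithTop.add_eq_top.mp hcontr with h1 | h1
      · exact hfin h1
      · exact ENat.one_ne_top h1
    set U : Set ℕ := ⋃ c ∈ T, c with hUdef
    have hUfin : U.Finite := Set.Finite.biUnion hTfin (fun c hc => by
      have hcc := (hTsub hc).2
      rw [← Set.encard_lt_top_iff, hcc]
      exact ENat.coe_lt_top n)
    obtain ⟨g, hgconj, hg⟩ := (mem_closure_iff_finset _ γ).mp hcl hUfin.toFinset
    have hsubg : T ⊆ {s | s ∈ cyclesOf g ∧ s.encard = (n : ℕ∞)} := by
      intro c hc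
      obtain ⟨hcyc, hcard⟩ := hTsub hc
      obtain ⟨x, hx⟩ := hcyc
      have hagree : ∀ y ∈ orbitOf γ x, g y = γ y ∧ g.symm y = γ.symm y := by
        intro y hy
        apply hg
        rw [Set.Finite.mem_toFinset]
        exact Set.mem_biUnion hc (hx ▸ hy)
      have horb := orbit_eq_of_agree (fun y hy => (hagree y hy).1)
        (fun y hy => (hagree y hy).2)
      rw [hx] at horb
      exact ⟨⟨x, horb⟩, hcard⟩
    have hle : cycleCount ρ (n : ℕ∞) + 1 ≤ cycleCount g (n : ℕ∞) := by
      rw [← hTcard]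
      exact Set.encard_le_encard hsubg
    rw [cycleCount_of_isConj hgconj] at hle
    rw [ENat.add_one_le_iff hfin] at hle
    exact lt_irrefl _ hle
  · -- backward direction
    intro hcount
    rw [mem_closure_iff_finset]
    intro F
    obtain ⟨σ, hσ⟩ := approx ρ γ h hcount (F ∪ F.image γ.symm)
    refine ⟨σ * ρ * σ⁻¹, isConj_iff.mpr ⟨σ, rfl⟩, ?_⟩
    intro x hx
    constructor
    · exact hσ x (Finset.mem_union_left _ hx)
    · have h1 : (σ * ρ * σ⁻¹) (γ.symm x) = γ (γ.symm x) :=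
        hσ _ (Finset.mem_union_right _ (Finset.mem_image_of_mem _ hx))
      rw [Equiv.apply_symm_apply] at h1
      apply (σ * ρ * σ⁻¹).injective
      rw [Equiv.apply_symm_apply, h1]
end

section
/- Two permutations of ℕ are conjugate in Sym(ℕ) if and only if their cycle functions are equal, i.e. for each ι ∈ (ℕ \ {0}) ∪ {∞} they have the same number of cycles of length ι. -/
namespace Stmt4Aux

open Function

lemma zpow_apply_eq_self_iff (ρ : Equiv.Perm ℕ) (x : ℕ) (k : ℤ) :
    (ρ ^ k) x = x ↔ (Function.minimalPeriod ρ x : ℤ) ∣ k := by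
  have := MulAction.zpow_smul_eq_iff_minimalPeriod_dvd (a := ρ) (b := x) (n := k)
  simpa [Equiv.Perm.smul_def] using this

lemma zpow_apply_eq_zpow_apply_iff (ρ : Equiv.Perm ℕ) (x : ℕ) (k j : ℤ) :
    (ρ ^ k) x = (ρ ^ j) x ↔ (Function.minimalPeriod ρ x : ℤ) ∣ k - j := by
  rw [← zpow_apply_eq_self_iff ρ x (k - j)]
  constructor
  · intro h
    have h2 : (ρ ^ j) ((ρ ^ (k-j)) x) = (ρ ^ j) x := by
      rw [← Equiv.Perm.mul_apply, ← zpow_add, add_sub_cancel]; exact h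
    exact (ρ ^ j).injective h2
  · intro h
    have : (ρ ^ j) ((ρ ^ (k-j)) x) = (ρ ^ j) x := by rw [h]
    rw [← Equiv.Perm.mul_apply, ← zpow_add, add_sub_cancel] at this
    exact this

lemma mem_orbitOf_self (ρ : Equiv.Perm ℕ) (x : ℕ) : x ∈ orbitOf ρ x := ⟨0, by simp⟩

lemma orbitOf_zpow (ρ : Equiv.Perm ℕ) (x : ℕ) (j : ℤ) :
    orbitOf ρ ((ρ ^ j) x) = orbitOf ρ x := by
  ext y
  constructor
  · rintro ⟨k, rfl⟩
    exact ⟨k + j, by rw [← Equiv.Perm.mul_apply, ← zpow_add]⟩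
  · rintro ⟨k, rfl⟩
    exact ⟨k - j, by rw [← Equiv.Perm.mul_apply, ← zpow_add, sub_add_cancel]⟩

lemma minimalPeriod_zpow_apply (ρ : Equiv.Perm ℕ) (x : ℕ) (j : ℤ) :
    Function.minimalPeriod ρ ((ρ ^ j) x) = Function.minimalPeriod ρ x := by
  set y := (ρ ^ j) x with hy
  have key : ∀ k : ℤ, ((minimalPeriod ρ y : ℤ) ∣ k) ↔ ((minimalPeriod ρ x : ℤ) ∣ k) := by
    intro k
    rw [← zpow_apply_eq_self_iff ρ y k, ← zpow_apply_eq_self_iff ρ x k]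
    constructor
    · intro h
      have : (ρ ^ k) ((ρ ^ j) x) = (ρ ^ j) x := h
      rw [← Equiv.Perm.mul_apply, ← zpow_add, add_comm, zpow_add, Equiv.Perm.mul_apply] at this
      exact (ρ ^ j).injective this
    · intro h
      show (ρ ^ k) ((ρ ^ j) x) = (ρ ^ j) x
      rw [← Equiv.Perm.mul_apply, ← zpow_add, add_comm, zpow_add, Equiv.Perm.mul_apply, h]
  have h1 := (key (minimalPeriod ρ x)).mpr dvd_rfl
  have h2 := (key (minimalPeriod ρ y)).mp dvd_rfl
  exact Nat.dvd_antisymm (Int.ofNat_dvd.mp h1) (Int.ofNat_dvd.mp h2)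

lemma encard_orbitOf (ρ : Equiv.Perm ℕ) (x : ℕ) :
    (orbitOf ρ x).encard =
      if Function.minimalPeriod ρ x = 0 then ⊤ else (Function.minimalPeriod ρ x : ℕ∞) := by
  set m := Function.minimalPeriod ρ x with hm
  by_cases h : m = 0
  · rw [if_pos h]
    have hinj : Function.Injective (fun k : ℤ => (ρ ^ k) x) := by
      intro k j hkj
      have := (zpow_apply_eq_zpow_apply_iff ρ x k j).mp hkj
      rw [← hm, h] at this
      simpa [sub_eq_zero] using this
    have : (orbitOf ρ x) = Set.range (fun k : ℤ => (ρ ^ k) x) := rfl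
    rw [this, Set.encard_eq_top]
    exact Set.infinite_range_of_injective hinj
  · rw [if_neg h]
    have hmpos : 0 < m := Nat.pos_of_ne_zero h
    have : orbitOf ρ x = Set.range (fun i : Fin m => (ρ ^ (i : ℤ)) x) := by
      ext y
      constructor
      · rintro ⟨k, rfl⟩
        refine ⟨⟨(k % m).toNat, ?_⟩, ?_⟩
        · have := Int.emod_lt_of_pos k (by exact_mod_cast hmpos : (0:ℤ) < m)
          omega
        · simp only
          rw [zpow_apply_eq_zpow_apply_iff]
          rw [← hm]
          have h0 : (0:ℤ) ≤ k % m := Int.emod_nonneg k (by exact_mod_cast h)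
          rw [Int.toNat_of_nonneg h0]
          have hd : (m:ℤ) ∣ k - k % m := Int.dvd_self_sub_of_emod_eq rfl
          have := (dvd_neg (α := ℤ)).mpr hd
          rwa [neg_sub] at this
      · rintro ⟨i, rfl⟩
        exact ⟨(i : ℤ), rfl⟩
    rw [this, ← Set.image_univ]
    have hinj : Function.Injective (fun i : Fin m => (ρ ^ (i : ℤ)) x) := by
      intro i j hij
      have := (zpow_apply_eq_zpow_apply_iff ρ x i j).mp hij
      rw [← hm] at this
      have h0 : ((i : ℤ) - j) = 0 := by
        refine Int.eq_zero_of_dvd_of_natAbs_lt_natAbs this ?_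
        have hi := i.isLt; have hj := j.isLt
        omega
      have : (i : ℤ) = j := by omega
      exact Fin.ext (by exact_mod_cast this)
    rw [Set.InjOn.encard_image (hinj.injOn), Set.encard_univ,
      ENat.card_eq_coe_fintype_card, Fintype.card_fin]

lemma transfer {ρ₁ ρ₂ : Equiv.Perm ℕ} {b₁ b₂ : ℕ}
    (hm : Function.minimalPeriod ρ₁ b₁ = Function.minimalPeriod ρ₂ b₂) {k j : ℤ}
    (h : (ρ₁ ^ k) b₁ = (ρ₁ ^ j) b₁) : (ρ₂ ^ k) b₂ = (ρ₂ ^ j) b₂ := by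
  rw [zpow_apply_eq_zpow_apply_iff] at h ⊢
  rw [← hm]; exact h

lemma period_eq_of_ite {m₁ m₂ : ℕ}
    (h : (if m₁ = 0 then (⊤ : ℕ∞) else (m₁ : ℕ∞)) = if m₂ = 0 then ⊤ else (m₂ : ℕ∞)) :
    m₁ = m₂ := by
  split_ifs at h with h1 h2
  · omega
  · exact absurd h (by simp)
  · exact absurd h.symm (by simp)
  · exact_mod_cast h

lemma exists_equiv {α β : Type u} {s : Set α} {t : Set β} (hs : s.Countable) (ht : t.Countable)
    (h : s.encard = t.encard) : Nonempty (s ≃ t) := by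
  have hs' : Cardinal.mk s ≤ Cardinal.aleph0 := by
    rwa [Cardinal.mk_le_aleph0_iff, ← Set.countable_coe_iff] at *
  have ht' : Cardinal.mk t ≤ Cardinal.aleph0 := by
    rwa [Cardinal.mk_le_aleph0_iff, ← Set.countable_coe_iff] at *
  have hmk : Cardinal.mk s = Cardinal.mk t := by
    refine Cardinal.toENat_injOn hs' ht' ?_
    exact h
  exact Cardinal.eq.mp hmk

lemma exists_encard_preserving_equiv {α β : Type u} (S : Set (Set α)) (T : Set (Set β))
    (hS : S.Countable) (hT : T.Countable)
    (h : ∀ ι : ℕ∞, {s | s ∈ S ∧ s.encard = ι}.encard = {s | s ∈ T ∧ s.encard = ι}.encard) :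
    ∃ e : S ≃ T, ∀ c : S, ((e c : Set β)).encard = (c : Set α).encard := by
  have hfib : ∀ ι : ℕ∞, Nonempty ({s | s ∈ S ∧ s.encard = ι} ≃ {s | s ∈ T ∧ s.encard = ι}) := by
    intro ι
    have h1 : {s | s ∈ S ∧ s.encard = ι}.Countable := hS.mono (fun s hs => hs.1)
    have h2 : {s | s ∈ T ∧ s.encard = ι}.Countable := hT.mono (fun s hs => hs.1)
    exact exists_equiv h1 h2 (h ι)
  let F : ∀ ι : ℕ∞, {s | s ∈ S ∧ s.encard = ι} ≃ {s | s ∈ T ∧ s.encard = ι} :=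
    fun ι => (hfib ι).some
  let G : ∀ ι : ℕ∞, {c : S // (c : Set α).encard = ι} ≃ {c : T // (c : Set β).encard = ι} := by
    intro ι
    refine (Equiv.trans ?_ (F ι)).trans ?_
    · exact ⟨fun c => ⟨c.1.1, c.1.2, c.2⟩, fun s => ⟨⟨s.1, s.2.1⟩, s.2.2⟩,
        fun c => rfl, fun s => rfl⟩
    · exact ⟨fun s => ⟨⟨s.1, s.2.1⟩, s.2.2⟩, fun c => ⟨c.1.1, c.1.2, c.2⟩,
        fun s => rfl, fun c => rfl⟩
  let e : S ≃ T :=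
    ((Equiv.sigmaFiberEquiv (fun c : S => (c : Set α).encard)).symm.trans
      (Equiv.sigmaCongrRight G)).trans
      (Equiv.sigmaFiberEquiv (fun c : T => (c : Set β).encard))
  refine ⟨e, fun c => ?_⟩
  show (((G ((c : Set α).encard)) ⟨c, rfl⟩ : {c : T // _}) : T).1.encard = (c : Set α).encard
  exact ((G ((c : Set α).encard)) ⟨c, rfl⟩).2


lemma orbitOf_image (γ₁ : Equiv.Perm ℕ) (σ : Equiv.Perm ℕ) (x : ℕ) :
    orbitOf (σ * γ₁ * σ⁻¹) (σ x) = σ '' orbitOf γ₁ x := by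
  ext y
  constructor
  · rintro ⟨k, rfl⟩
    refine ⟨(γ₁ ^ k) x, ⟨k, rfl⟩, ?_⟩
    rw [conj_zpow]
    simp [Equiv.Perm.mul_apply]
  · rintro ⟨z, ⟨k, rfl⟩, rfl⟩
    refine ⟨k, ?_⟩
    rw [conj_zpow]
    simp [Equiv.Perm.mul_apply]

lemma counts_of_conj {γ₁ γ₂ : Equiv.Perm ℕ} (h : IsConj γ₁ γ₂) (ι : ℕ∞) :
    cycleCount γ₁ ι = cycleCount γ₂ ι := by
  obtain ⟨σ, hσ⟩ := isConj_iff.mp h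
  subst hσ
  have himg : {s | s ∈ cyclesOf (σ * γ₁ * σ⁻¹) ∧ s.encard = ι} =
      (fun s => σ '' s) '' {s | s ∈ cyclesOf γ₁ ∧ s.encard = ι} := by
    ext s
    constructor
    · rintro ⟨⟨y, rfl⟩, henc⟩
      refine ⟨orbitOf γ₁ (σ⁻¹ y), ⟨⟨σ⁻¹ y, rfl⟩, ?_⟩, ?_⟩
      · have := orbitOf_image γ₁ σ (σ⁻¹ y)
        rw [show σ (σ⁻¹ y) = y from σ.apply_symm_apply y] at this
        rw [this] at henc
        rwa [Set.InjOn.encard_image (σ.injective.injOn)] at henc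
      · have := orbitOf_image γ₁ σ (σ⁻¹ y)
        rw [show σ (σ⁻¹ y) = y from σ.apply_symm_apply y] at this
        exact this.symm
    · rintro ⟨t, ⟨⟨x, rfl⟩, henc⟩, rfl⟩
      refine ⟨⟨σ x, (orbitOf_image γ₁ σ x)⟩, ?_⟩
      rwa [Set.InjOn.encard_image (σ.injective.injOn)]
  unfold cycleCount
  rw [himg, Set.InjOn.encard_image]
  exact (Set.image_injective.mpr σ.injective).injOn

lemma conj_of_counts {γ₁ γ₂ : Equiv.Perm ℕ}
    (h : ∀ ι : ℕ∞, ι ≠ 0 → cycleCount γ₁ ι = cycleCount γ₂ ι) : IsConj γ₁ γ₂ := by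
  -- cycle sets are countable
  have hc1 : (cyclesOf γ₁).Countable := Set.countable_range _
  have hc2 : (cyclesOf γ₂).Countable := Set.countable_range _
  have hcount : ∀ ι : ℕ∞, {s | s ∈ cyclesOf γ₁ ∧ s.encard = ι}.encard
      = {s | s ∈ cyclesOf γ₂ ∧ s.encard = ι}.encard := by
    intro ι
    rcases eq_or_ne ι 0 with rfl | hι
    · have e1 : {s | s ∈ cyclesOf γ₁ ∧ s.encard = 0} = ∅ := by
        ext s; simp only [Set.mem_setOf_eq, Set.mem_empty_iff_false, iff_false]
        rintro ⟨⟨x, rfl⟩, henc⟩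
        rw [Set.encard_eq_zero] at henc
        have hx := mem_orbitOf_self γ₁ x
        rw [henc] at hx
        exact hx
      have e2 : {s | s ∈ cyclesOf γ₂ ∧ s.encard = 0} = ∅ := by
        ext s; simp only [Set.mem_setOf_eq, Set.mem_empty_iff_false, iff_false]
        rintro ⟨⟨x, rfl⟩, henc⟩
        rw [Set.encard_eq_zero] at henc
        have hx := mem_orbitOf_self γ₂ x
        rw [henc] at hx
        exact hx
      rw [e1, e2]
    · exact h ι hι
  obtain ⟨e, he⟩ := exists_encard_preserving_equiv (cyclesOf γ₁) (cyclesOf γ₂) hc1 hc2 hcount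
  -- basepoints
  have bp₁spec : ∀ c : cyclesOf γ₁, orbitOf γ₁ (Classical.choose c.2) = (c : Set ℕ) :=
    fun c => Classical.choose_spec c.2
  have bp₂spec : ∀ d : cyclesOf γ₂, orbitOf γ₂ (Classical.choose d.2) = (d : Set ℕ) :=
    fun d => Classical.choose_spec d.2
  set bp₁ : cyclesOf γ₁ → ℕ := fun c => Classical.choose c.2 with hbp₁
  set bp₂ : cyclesOf γ₂ → ℕ := fun d => Classical.choose d.2 with hbp₂
  -- matched periods
  have hper : ∀ c : cyclesOf γ₁,
      Function.minimalPeriod γ₁ (bp₁ c) = Function.minimalPeriod γ₂ (bp₂ (e c)) := by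
    intro c
    apply period_eq_of_ite
    rw [← encard_orbitOf, ← encard_orbitOf, bp₁spec, bp₂spec, he]
  have hper' : ∀ d : cyclesOf γ₂,
      Function.minimalPeriod γ₂ (bp₂ d) = Function.minimalPeriod γ₁ (bp₁ (e.symm d)) := by
    intro d
    have := hper (e.symm d)
    rw [e.apply_symm_apply] at this
    exact this.symm
  -- orbit/exponent data for each point
  have hmemC : ∀ x : ℕ, ∃ k : ℤ, (γ₁ ^ k) (bp₁ ⟨orbitOf γ₁ x, ⟨x, rfl⟩⟩) = x := by
    intro x
    have hx : x ∈ orbitOf γ₁ (bp₁ ⟨orbitOf γ₁ x, ⟨x, rfl⟩⟩) := by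
      rw [bp₁spec ⟨orbitOf γ₁ x, ⟨x, rfl⟩⟩]
      exact mem_orbitOf_self γ₁ x
    exact hx
  have hmemD : ∀ y : ℕ, ∃ k : ℤ, (γ₂ ^ k) (bp₂ ⟨orbitOf γ₂ y, ⟨y, rfl⟩⟩) = y := by
    intro y
    have hy : y ∈ orbitOf γ₂ (bp₂ ⟨orbitOf γ₂ y, ⟨y, rfl⟩⟩) := by
      rw [bp₂spec ⟨orbitOf γ₂ y, ⟨y, rfl⟩⟩]
      exact mem_orbitOf_self γ₂ y
    exact hy
  choose key₁ hkey₁ using hmemC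
  choose key₂ hkey₂ using hmemD
  set σf : ℕ → ℕ := fun x =>
    (γ₂ ^ (key₁ x)) (bp₂ (e ⟨orbitOf γ₁ x, ⟨x, rfl⟩⟩)) with hσf
  set τf : ℕ → ℕ := fun y =>
    (γ₁ ^ (key₂ y)) (bp₁ (e.symm ⟨orbitOf γ₂ y, ⟨y, rfl⟩⟩)) with hτf
  -- main computation lemmas
  have L1 : ∀ (c : cyclesOf γ₁) (k : ℤ), σf ((γ₁ ^ k) (bp₁ c)) = (γ₂ ^ k) (bp₂ (e c)) := by
    intro c k
    set x := (γ₁ ^ k) (bp₁ c) with hx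
    have hCx : (⟨orbitOf γ₁ x, ⟨x, rfl⟩⟩ : cyclesOf γ₁) = c := by
      apply Subtype.ext
      show orbitOf γ₁ x = (c : Set ℕ)
      rw [hx, orbitOf_zpow, bp₁spec]
    have hkey := hkey₁ x
    rw [hCx] at hkey
    have h2 : (γ₂ ^ (key₁ x)) (bp₂ (e c)) = (γ₂ ^ k) (bp₂ (e c)) :=
      transfer (hper c) (hkey.trans hx)
    show (γ₂ ^ (key₁ x)) (bp₂ (e ⟨orbitOf γ₁ x, ⟨x, rfl⟩⟩)) = _
    rw [hCx, h2]
  have L2 : ∀ (d : cyclesOf γ₂) (k : ℤ), τf ((γ₂ ^ k) (bp₂ d)) = (γ₁ ^ k) (bp₁ (e.symm d)) := by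
    intro d k
    set y := (γ₂ ^ k) (bp₂ d) with hy
    have hCy : (⟨orbitOf γ₂ y, ⟨y, rfl⟩⟩ : cyclesOf γ₂) = d := by
      apply Subtype.ext
      show orbitOf γ₂ y = (d : Set ℕ)
      rw [hy, orbitOf_zpow, bp₂spec]
    have hkey := hkey₂ y
    rw [hCy] at hkey
    have h2 : (γ₁ ^ (key₂ y)) (bp₁ (e.symm d)) = (γ₁ ^ k) (bp₁ (e.symm d)) :=
      transfer (hper' d) (hkey.trans hy)
    show (γ₁ ^ (key₂ y)) (bp₁ (e.symm ⟨orbitOf γ₂ y, ⟨y, rfl⟩⟩)) = _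
    rw [hCy, h2]
  have hleft : ∀ x, τf (σf x) = x := by
    intro x
    have : σf x = (γ₂ ^ (key₁ x)) (bp₂ (e ⟨orbitOf γ₁ x, ⟨x, rfl⟩⟩)) := rfl
    rw [this, L2, e.symm_apply_apply, hkey₁]
  have hright : ∀ y, σf (τf y) = y := by
    intro y
    have : τf y = (γ₁ ^ (key₂ y)) (bp₁ (e.symm ⟨orbitOf γ₂ y, ⟨y, rfl⟩⟩)) := rfl
    rw [this, L1, e.apply_symm_apply, hkey₂]
  set σ : Equiv.Perm ℕ := ⟨σf, τf, hleft, hright⟩ with hσ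
  have hconj : ∀ x, σf (γ₁ x) = γ₂ (σf x) := by
    intro x
    set c : cyclesOf γ₁ := ⟨orbitOf γ₁ x, ⟨x, rfl⟩⟩ with hc
    have hkey : (γ₁ ^ (key₁ x)) (bp₁ c) = x := hkey₁ x
    have h1 : γ₁ x = (γ₁ ^ (1 + key₁ x)) (bp₁ c) := by
      rw [zpow_one_add, Equiv.Perm.mul_apply, hkey]
    have h2 : σf (γ₁ x) = (γ₂ ^ (1 + key₁ x)) (bp₂ (e c)) := by
      rw [h1, L1]
    have h3 : σf x = (γ₂ ^ (key₁ x)) (bp₂ (e c)) := rfl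
    rw [h2, h3, zpow_one_add, Equiv.Perm.mul_apply]
  rw [isConj_iff]
  refine ⟨σ, ?_⟩
  ext y
  have h1 : (σ * γ₁ * σ⁻¹) y = σf (γ₁ (τf y)) := rfl
  rw [h1, hconj, hright]

end Stmt4Aux

/-- two permutations of `ℕ` are conjugate iff their cycle functions
agree on every `ι ∈ (ℕ \ {0}) ∪ {∞}`. -/
theorem stmt4 (γ₁ γ₂ : Equiv.Perm ℕ) :
    IsConj γ₁ γ₂ ↔ ∀ ι : ℕ∞, ι ≠ 0 → cycleCount γ₁ ι = cycleCount γ₂ ι := by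
  constructor
  · intro h ι _
    exact Stmt4Aux.counts_of_conj h ι
  · exact Stmt4Aux.conj_of_counts
end

section
/- Let γ be an order-automorphism of (ℚ, <) all of whose orbitals have parity + (i.e., γ(x) > x for all x). Then γ lies in the closure in Aut(ℚ, <) of the conjugacy class of the shift automorphism st(x) = x + 1. -/
namespace Stmt13

def PRel (p q : ℚ × ℚ) : Prop := p.1 < q.1 ∧ p.2 < q.2

def pl : List (ℚ × ℚ) → ℚ → ℚ
  | [], x => x
  | [(a, b)], x => x + (b - a)
  | (a, b) :: (c, d) :: l, x =>
    if x ≤ a then x + (b - a)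
    else if x ≤ c then b + (x - a) * ((d - b) / (c - a))
    else pl ((c, d) :: l) x

lemma pl_gt : ∀ (l : List (ℚ × ℚ)) (a b x : ℚ),
    List.Chain' PRel ((a, b) :: l) → a < x → b < pl ((a, b) :: l) x
  | [], a, b, x, _, hx => by simp [pl]; linarith
  | (c, d) :: l, a, b, x, hc, hx => by
    have h1 : PRel (a, b) (c, d) := List.isChain_cons_cons.mp hc |>.1
    obtain ⟨hac, hbd⟩ := h1
    have hc2 : List.Chain' PRel ((c, d) :: l) := (List.isChain_cons_cons.mp hc).2
    simp only [pl]
    rw [if_neg (by linarith)]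
    by_cases h2 : x ≤ c
    · rw [if_pos h2]
      have hs : 0 < (d - b) / (c - a) := div_pos (by linarith) (by linarith)
      nlinarith
    · rw [if_neg h2]
      have := pl_gt l c d x hc2 (by linarith)
      linarith

lemma pl_mono : ∀ (l : List (ℚ × ℚ)), List.Chain' PRel l → StrictMono (pl l)
  | [], _ => fun x y h => by simpa [pl] using h
  | [(a, b)], _ => fun x y h => by simp only [pl]; linarith
  | (a, b) :: (c, d) :: l, hc => fun x y h => by
    obtain ⟨⟨hac, hbd⟩, hc2⟩ := List.isChain_cons_cons.mp hc
    have hs : 0 < (d - b) / (c - a) := div_pos (by linarith) (by linarith)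
    have hsid : (c - a) * ((d - b) / (c - a)) = d - b := by
      rw [mul_comm]; exact div_mul_cancel₀ _ (by linarith)
    simp only [pl]
    by_cases hxa : x ≤ a
    · rw [if_pos hxa]
      by_cases hya : y ≤ a
      · rw [if_pos hya]; linarith
      · rw [if_neg hya]
        by_cases hyc : y ≤ c
        · rw [if_pos hyc]; nlinarith
        · rw [if_neg hyc]
          have := pl_gt l c d y hc2 (by linarith)
          linarith
    · rw [if_neg hxa]
      have hya : ¬ y ≤ a := by linarith [lt_of_not_ge hxa]
      rw [if_neg hya]
      by_cases hxc : x ≤ c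
      · rw [if_pos hxc]
        by_cases hyc : y ≤ c
        · rw [if_pos hyc]; nlinarith [lt_of_not_ge hxa]
        · rw [if_neg hyc]
          have h1 : b + (x - a) * ((d - b) / (c - a)) ≤ d := by nlinarith
          have := pl_gt l c d y hc2 (by linarith)
          linarith
      · rw [if_neg hxc]
        have hyc : ¬ y ≤ c := by linarith [lt_of_not_ge hxc]
        rw [if_neg hyc]
        exact pl_mono ((c, d) :: l) hc2 h

lemma chain_swap {l : List (ℚ × ℚ)} (h : List.Chain' PRel l) :
    List.Chain' PRel (l.map Prod.swap) := by
  unfold List.Chain' at h ⊢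
  rw [List.isChain_map]
  exact h.imp (fun {p q} hpq => ⟨hpq.2, hpq.1⟩)

lemma pl_inv : ∀ (l : List (ℚ × ℚ)), List.Chain' PRel l → ∀ x,
    pl (l.map Prod.swap) (pl l x) = x
  | [], _, x => rfl
  | [(a, b)], _, x => by simp [pl]; ring
  | (a, b) :: (c, d) :: l, hc, x => by
    obtain ⟨⟨hac, hbd⟩, hc2⟩ := List.isChain_cons_cons.mp hc
    have hs : 0 < (d - b) / (c - a) := div_pos (by linarith) (by linarith)
    have hsid : (c - a) * ((d - b) / (c - a)) = d - b := by
      rw [mul_comm]; exact div_mul_cancel₀ _ (by linarith)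
    simp only [pl, List.map_cons, Prod.swap_prod_mk]
    by_cases hxa : x ≤ a
    · rw [if_pos hxa]
      rw [if_pos (by linarith : x + (b - a) ≤ b)]
      ring
    · rw [if_neg hxa]
      by_cases hxc : x ≤ c
      · rw [if_pos hxc]
        have hx1 : b < b + (x - a) * ((d - b) / (c - a)) := by nlinarith [lt_of_not_ge hxa]
        have hx2 : b + (x - a) * ((d - b) / (c - a)) ≤ d := by nlinarith
        rw [if_neg (by linarith), if_pos hx2]
        have hne : d - b ≠ 0 := by linarith
        have hne2 : c - a ≠ 0 := by linarith
        field_simp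
        ring
      · rw [if_neg hxc]
        have hgt := pl_gt l c d x hc2 (lt_of_not_ge hxc)
        rw [if_neg (by linarith), if_neg (by linarith)]
        exact pl_inv ((c, d) :: l) hc2 x

lemma mem_tail_lt : ∀ (l : List (ℚ × ℚ)) (c d p q : ℚ),
    List.Chain' PRel ((c, d) :: l) → (p, q) ∈ l → c < p ∧ d < q
  | [], c, d, p, q, _, hm => by simp at hm
  | (e, f) :: l, c, d, p, q, hc, hm => by
    obtain ⟨⟨h1, h2⟩, hc2⟩ := List.isChain_cons_cons.mp hc
    rcases List.mem_cons.mp hm with heq | hm2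
    · obtain ⟨rfl, rfl⟩ := Prod.ext_iff.mp heq
      exact ⟨h1, h2⟩
    · have := mem_tail_lt l e f p q hc2 hm2
      exact ⟨lt_trans h1 this.1, lt_trans h2 this.2⟩

lemma pl_mem : ∀ (l : List (ℚ × ℚ)), List.Chain' PRel l → ∀ p q : ℚ,
    (p, q) ∈ l → pl l p = q
  | [], _, p, q, hm => by simp at hm
  | [(a, b)], _, p, q, hm => by
    simp at hm
    obtain ⟨rfl, rfl⟩ := hm
    simp [pl]
  | (a, b) :: (c, d) :: l, hc, p, q, hm => by
    obtain ⟨⟨hac, hbd⟩, hc2⟩ := List.isChain_cons_cons.mp hc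
    have hsid : (c - a) * ((d - b) / (c - a)) = d - b := by
      rw [mul_comm]; exact div_mul_cancel₀ _ (by linarith)
    rcases List.mem_cons.mp hm with heq | hm2
    · obtain ⟨rfl, rfl⟩ := Prod.ext_iff.mp heq
      simp only [pl]
      rw [if_pos le_rfl]; ring
    · rcases List.mem_cons.mp hm2 with heq | hm3
      · obtain ⟨rfl, rfl⟩ := Prod.ext_iff.mp heq
        simp only [pl]
        rw [if_neg (by linarith), if_pos le_rfl, hsid]; ring
      · have hlt := mem_tail_lt l c d p q hc2 hm3
        simp only [pl]
        rw [if_neg (by linarith [hlt.1]), if_neg (by linarith [hlt.1])]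
        exact pl_mem ((c, d) :: l) hc2 p q hm2


lemma card_lt_aux {B : Finset ℚ} {c b : ℚ} (hc : c ∈ B) (h : c < b) :
    (B.filter (fun x => x < c)).card < (B.filter (fun x => x < b)).card := by
  apply Finset.card_lt_card
  constructor
  · intro x hx
    simp only [Finset.mem_filter] at hx ⊢
    exact ⟨hx.1, lt_trans hx.2 h⟩
  · intro hsub
    have : c ∈ B.filter (fun x => x < b) := Finset.mem_filter.mpr ⟨hc, h⟩
    have := hsub this
    simp at this

def vfun (γ : Equiv.Perm ℚ) (A B : Finset ℚ) (b : ℚ) : ℚ :=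
  if hf : γ.symm b ∈ A ∧ γ.symm b ∈ B ∧ γ.symm b < b then
    vfun γ A B (γ.symm b) + 1
  else if hP : (B.filter (fun c => c < b)).Nonempty then
    if hS : ((B.filter (fun c => c < b ∧ c ∈ A ∧ b < γ c)).attach).Nonempty then
      (vfun γ A B ((B.filter (fun c => c < b)).max' hP)
        + (((B.filter (fun c => c < b ∧ c ∈ A ∧ b < γ c)).attach).image
            (fun a => vfun γ A B a.1 + 1)).min' (hS.image _)) / 2
    else vfun γ A B ((B.filter (fun c => c < b)).max' hP) + 1
  else 0
termination_by (B.filter (fun c => c < b)).card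
decreasing_by
  all_goals first
    | exact card_lt_aux hf.2.1 hf.2.2
    | (have hm := a.2
       simp only [Finset.mem_filter] at hm
       exact card_lt_aux hm.1 hm.2.1)
    | (have hm := (B.filter (fun c => c < b)).max'_mem hP
       simp only [Finset.mem_filter] at hm
       exact card_lt_aux hm.1 hm.2)


lemma vfun_spec (γ : Equiv.Perm ℚ) (hord : ∀ a b : ℚ, a < b ↔ γ a < γ b)
    (hplus : ∀ x : ℚ, x < γ x) (A B : Finset ℚ)
    (hAB : A ⊆ B) :
    ∀ b ∈ B, (∀ c ∈ B, c < b → vfun γ A B c < vfun γ A B b) ∧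
      (∀ a ∈ A, a ≤ b → b < γ a → vfun γ A B b < vfun γ A B a + 1) := by
  suffices H : ∀ n : ℕ, ∀ b ∈ B, (B.filter (fun c => c < b)).card = n →
      (∀ c ∈ B, c < b → vfun γ A B c < vfun γ A B b) ∧
      (∀ a ∈ A, a ≤ b → b < γ a → vfun γ A B b < vfun γ A B a + 1) by
    exact fun b hb => H _ b hb rfl
  intro n
  induction n using Nat.strong_induction_on with
  | _ n IH =>
  intro b hb hcard
  have key : ∀ c ∈ B, c < b → (∀ e ∈ B, e < c → vfun γ A B e < vfun γ A B c) ∧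
      (∀ a ∈ A, a ≤ c → c < γ a → vfun γ A B c < vfun γ A B a + 1) := by
    intro c hc hcb
    exact IH _ (hcard ▸ card_lt_aux hc hcb) c hc rfl
  by_cases hf : γ.symm b ∈ A ∧ γ.symm b ∈ B ∧ γ.symm b < b
  · -- forced case
    have hval : vfun γ A B b = vfun γ A B (γ.symm b) + 1 := by
      rw [vfun, dif_pos hf]
    obtain ⟨ha0A, ha0B, ha0b⟩ := hf
    have hγa0 : γ (γ.symm b) = b := γ.apply_symm_apply b
    constructor
    · intro c hc hcb
      rw [hval]
      rcases lt_trichotomy c (γ.symm b) with h | h | h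
      · have := (key _ ha0B ha0b).1 c hc h
        linarith
      · subst h; linarith
      · have := (key c hc hcb).2 (γ.symm b) ha0A (le_of_lt h) (by rw [hγa0]; exact hcb)
        linarith
    · intro a haA hab hbγa
      rw [hval]
      have ha0a : γ.symm b < a := by
        rw [hord]
        rw [hγa0]; exact hbγa
      rcases eq_or_lt_of_le hab with rfl | hab'
      · rw [hval]; linarith
      · have := (key a (hAB haA) hab').1 (γ.symm b) ha0B ha0a
        linarith
  · -- free case
    by_cases hP : (B.filter (fun c => c < b)).Nonempty
    · have hmmem := (B.filter (fun c => c < b)).max'_mem hP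
      rw [Finset.mem_filter] at hmmem
      obtain ⟨hmB, hmb⟩ := hmmem
      have hstar : ∀ c ∈ B.filter (fun c => c < b ∧ c ∈ A ∧ b < γ c),
          vfun γ A B ((B.filter (fun c => c < b)).max' hP) < vfun γ A B c + 1 := by
        intro c hc
        rw [Finset.mem_filter] at hc
        obtain ⟨hcB, hcb, hcA, hbγc⟩ := hc
        have hcmem : c ∈ B.filter (fun x => x < b) := Finset.mem_filter.mpr ⟨hcB, hcb⟩
        have hcm : c ≤ (B.filter (fun c => c < b)).max' hP := Finset.le_max' _ c hcmem
        rcases eq_or_lt_of_le hcm with h | hcm'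
        · rw [h]; linarith
        · exact (key _ hmB hmb).2 c hcA (le_of_lt hcm') (lt_trans hmb hbγc)
      have hbounds : vfun γ A B ((B.filter (fun c => c < b)).max' hP) < vfun γ A B b ∧
          ∀ c ∈ B.filter (fun c => c < b ∧ c ∈ A ∧ b < γ c),
            vfun γ A B b < vfun γ A B c + 1 := by
        by_cases hS : (B.filter (fun c => c < b ∧ c ∈ A ∧ b < γ c)).attach.Nonempty
        · have hval : vfun γ A B b = (vfun γ A B ((B.filter (fun c => c < b)).max' hP)
              + ((B.filter (fun c => c < b ∧ c ∈ A ∧ b < γ c)).attach.image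
                  (fun a => vfun γ A B a.1 + 1)).min' (hS.image _)) / 2 := by
            rw [vfun, dif_neg hf, dif_pos hP, dif_pos hS]
          have hmin : vfun γ A B ((B.filter (fun c => c < b)).max' hP)
              < ((B.filter (fun c => c < b ∧ c ∈ A ∧ b < γ c)).attach.image
                  (fun a => vfun γ A B a.1 + 1)).min' (hS.image _) := by
            rw [Finset.lt_min'_iff]
            intro y hy
            rw [Finset.mem_image] at hy
            obtain ⟨c, _, rfl⟩ := hy
            exact hstar c.1 c.2
          constructor
          · rw [hval]; linarith
          · intro c hc
            have hle : ((B.filter (fun c => c < b ∧ c ∈ A ∧ b < γ c)).attach.image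
                (fun a => vfun γ A B a.1 + 1)).min' (hS.image _) ≤ vfun γ A B c + 1 := by
              apply Finset.min'_le
              rw [Finset.mem_image]
              exact ⟨⟨c, hc⟩, Finset.mem_attach _ _, rfl⟩
            rw [hval]; linarith
        · have hval : vfun γ A B b =
              vfun γ A B ((B.filter (fun c => c < b)).max' hP) + 1 := by
            rw [vfun, dif_neg hf, dif_pos hP, dif_neg hS]
          constructor
          · rw [hval]; linarith
          · intro c hc
            exact absurd (Finset.attach_nonempty_iff.mpr ⟨c, hc⟩) hS
      constructor
      · intro c hc hcb
        have hcmem : c ∈ B.filter (fun x => x < b) := Finset.mem_filter.mpr ⟨hc, hcb⟩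
        have hcm : c ≤ (B.filter (fun c => c < b)).max' hP := Finset.le_max' _ c hcmem
        rcases eq_or_lt_of_le hcm with h | hcm'
        · rw [h]; exact hbounds.1
        · have := (key _ hmB hmb).1 c hc hcm'
          linarith [hbounds.1]
      · intro a haA hab hbγa
        rcases eq_or_lt_of_le hab with rfl | hab'
        · linarith
        · exact hbounds.2 a (Finset.mem_filter.mpr ⟨hAB haA, hab', haA, hbγa⟩)
    · have hval : vfun γ A B b = 0 := by
        rw [vfun, dif_neg hf, dif_neg hP]
      constructor
      · intro c hc hcb
        exact absurd ⟨c, Finset.mem_filter.mpr ⟨hc, hcb⟩⟩ hP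
      · intro a haA hab hbγa
        rcases eq_or_lt_of_le hab with rfl | hab'
        · linarith
        · exact absurd ⟨a, Finset.mem_filter.mpr ⟨hAB haA, hab'⟩⟩ hP

lemma vfun_shift (γ : Equiv.Perm ℚ) (hplus : ∀ x : ℚ, x < γ x)
    (A B : Finset ℚ) (hAB : A ⊆ B) {a : ℚ} (ha : a ∈ A) :
    vfun γ A B (γ a) = vfun γ A B a + 1 := by
  rw [vfun]
  rw [dif_pos]
  · rw [γ.symm_apply_apply]
  · rw [γ.symm_apply_apply]
    exact ⟨ha, hAB ha, hplus a⟩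

end Stmt13

open Stmt13 in
/-- every order-automorphism `γ` of `(ℚ,<)` with `γ(x) > x` for all `x`
lies in the closure of the conjugacy class of the shift `st(x) = x + 1`: for every
finite `A ⊆ ℚ` some conjugate of the shift agrees with `γ` on `A`. -/
theorem stmt13 (γ : Equiv.Perm ℚ) (hord : ∀ a b : ℚ, a < b ↔ γ a < γ b)
    (hplus : ∀ x : ℚ, x < γ x) :
    ∀ A : Finset ℚ, ∃ σ : Equiv.Perm ℚ, (∀ a b : ℚ, a < b ↔ σ a < σ b) ∧
      ∀ a ∈ A, γ a = (σ * Equiv.addRight (1 : ℚ) * σ⁻¹) a := by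
  intro A
  classical
  set B : Finset ℚ := A ∪ A.image γ with hB
  have hAB : A ⊆ B := Finset.subset_union_left
  have hγAB : ∀ a ∈ A, γ a ∈ B := fun a ha =>
    Finset.mem_union_right _ (Finset.mem_image_of_mem _ ha)
  set bs : List ℚ := B.sort (· ≤ ·) with hbs
  set pairs : List (ℚ × ℚ) := bs.map (fun b => (b, vfun γ A B b)) with hpairs
  have hmemB : ∀ x ∈ bs, x ∈ B := fun x hx => (Finset.mem_sort _).mp hx
  have hchain : pairs.Chain' PRel := by
    apply List.Pairwise.isChain
    rw [hpairs, List.pairwise_map]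
    refine (Finset.sortedLT_sort B).pairwise.imp_of_mem ?_
    intro x y hx hy hxy
    exact ⟨hxy, (vfun_spec γ hord hplus A B hAB y (hmemB y hy)).1 x (hmemB x hx) hxy⟩
  have hchain' : (pairs.map Prod.swap).Chain' PRel := chain_swap hchain
  refine ⟨⟨pl (pairs.map Prod.swap), pl pairs, ?_, ?_⟩, ?_, ?_⟩
  · intro x
    have := pl_inv (pairs.map Prod.swap) hchain' x
    simpa [List.map_map, Function.comp_def, Prod.swap_swap] using this
  · intro x
    exact pl_inv pairs hchain x
  · intro x y
    exact ((pl_mono _ hchain').lt_iff_lt).symm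
  · intro a ha
    set σ : Equiv.Perm ℚ :=
      ⟨pl (pairs.map Prod.swap), pl pairs, _, _⟩ with hσ
    have hmema : pl pairs a = vfun γ A B a := by
      apply pl_mem pairs hchain
      rw [hpairs]
      exact List.mem_map_of_mem ((Finset.mem_sort _).mpr (hAB ha))
    have hmemga : pl pairs (γ a) = vfun γ A B (γ a) := by
      apply pl_mem pairs hchain
      rw [hpairs]
      exact List.mem_map_of_mem ((Finset.mem_sort _).mpr (hγAB a ha))
    have hshift : vfun γ A B (γ a) = vfun γ A B a + 1 := vfun_shift γ hplus A B hAB ha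
    rw [Equiv.Perm.mul_apply, Equiv.Perm.mul_apply, Equiv.Perm.inv_def]
    have hsymm : ∀ x, σ.symm x = pl pairs x := fun x => rfl
    rw [hsymm, Equiv.coe_addRight]
    have : pl pairs a + 1 = σ.symm (γ a) := by
      rw [hsymm, hmemga, hmema, hshift]
    show γ a = σ (pl pairs a + 1)
    rw [this, Equiv.apply_symm_apply]
end

section
/- Let γ, ρ be order-automorphisms of (ℚ, <). If γ lies in the closure of the conjugacy class of ρ in Aut(ℚ, <), then for every finite A ⊆ ℚ there is a map φ from the set of ⟨γ restricted to A⟩-partial-orbitals of A ∪ γ(A) to the set of orbitals of ρ that is order-preserving (with respect to the induced orderings), parity-preserving, and injective on orbitals of parity 0. -/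
/-- The orbital of `x` under `γ`: `{q | ∃ m n : ℤ, γⁿ(x) ≤ q ≤ γᵐ(x)}`. -/
def qOrbital (γ : Equiv.Perm ℚ) (x : ℚ) : Set ℚ :=
  {q | ∃ m n : ℤ, (γ ^ n) x ≤ q ∧ q ≤ (γ ^ m) x}

/-- `I ⪯ J`: `I = J` or all of `I` lies below all of `J`. -/
def preceq (I J : Set ℚ) : Prop := I = J ∨ ∀ a ∈ I, ∀ b ∈ J, a < b

/-- `dom(p) ∪ ran(p)` for `p = γ ↾ A`. -/
def suppSet (γ : Equiv.Perm ℚ) (A : Finset ℚ) : Set ℚ := ↑A ∪ (⇑γ) '' ↑A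

/-- `p`-relatedness for `p = γ ↾ A`: `a = b`, or a chain condition through `p`-values
holds, depending on the (nonzero) parity of `a` or `b`. -/
def pRel (γ : Equiv.Perm ℚ) (A : Finset ℚ) (a b : ℚ) : Prop :=
  a ∈ suppSet γ A ∧ b ∈ suppSet γ A ∧
  (a = b ∨
    ((a < γ a ∨ b < γ b) ∧
      ((a ∈ (A : Set ℚ) ∧ a ≤ b ∧ b ≤ γ a) ∨ (b ∈ (A : Set ℚ) ∧ b ≤ a ∧ a ≤ γ b) ∨
       (a ∈ (⇑γ) '' ↑A ∧ γ⁻¹ a ≤ b ∧ b ≤ a) ∨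
       (b ∈ (⇑γ) '' ↑A ∧ γ⁻¹ b ≤ a ∧ a ≤ b))) ∨
    ((γ a < a ∨ γ b < b) ∧
      ((a ∈ (⇑γ) '' ↑A ∧ a ≤ b ∧ b ≤ γ⁻¹ a) ∨
       (b ∈ (⇑γ) '' ↑A ∧ b ≤ a ∧ a ≤ γ⁻¹ b) ∨
       (a ∈ (A : Set ℚ) ∧ γ a ≤ b ∧ b ≤ a) ∨
       (b ∈ (A : Set ℚ) ∧ γ b ≤ a ∧ a ≤ b))))

section aux
variable (ρ : Equiv.Perm ℚ)

lemma le_iff_of_lt_iff (h : ∀ a b : ℚ, a < b ↔ ρ a < ρ b) :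
    ∀ a b : ℚ, a ≤ b ↔ ρ a ≤ ρ b := by
  intro a b; rw [← not_lt, ← not_lt, h]

lemma zpow_le_iff (h : ∀ a b : ℚ, a < b ↔ ρ a < ρ b) (n : ℤ) :
    ∀ a b : ℚ, a ≤ b ↔ (ρ ^ n) a ≤ (ρ ^ n) b := by
  have h1 := le_iff_of_lt_iff ρ h
  have hinv : ∀ a b : ℚ, a ≤ b ↔ ρ⁻¹ a ≤ ρ⁻¹ b := by
    intro a b
    conv_lhs => rw [← ((Equiv.Perm.inv_eq_iff_eq (f := ρ) (x := a) (y := ρ⁻¹ a)).mp rfl).symm, ← ((Equiv.Perm.inv_eq_iff_eq (f := ρ) (x := b) (y := ρ⁻¹ b)).mp rfl).symm]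
    exact (h1 _ _).symm
  induction n using Int.induction_on with
  | zero => simp
  | succ k ih =>
      intro a b
      rw [h1 a b, ih (ρ a) (ρ b)]
      have : ρ ^ ((k : ℤ) + 1) = ρ ^ (k : ℤ) * ρ := by rw [zpow_add_one]
      rw [this]; rfl
  | pred k ih =>
      intro a b
      rw [hinv a b, ih (ρ⁻¹ a) (ρ⁻¹ b)]
      have : ρ ^ (-(k : ℤ) - 1) = ρ ^ (-(k : ℤ)) * ρ⁻¹ := by rw [zpow_sub_one]
      rw [this]; rfl

lemma zpow_apply_zpow (k n : ℤ) (x : ℚ) : (ρ ^ k) ((ρ ^ n) x) = (ρ ^ (k + n)) x := by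
  rw [← Equiv.Perm.mul_apply, ← zpow_add]

lemma mem_qOrbital_self (x : ℚ) : x ∈ qOrbital ρ x := ⟨0, 0, by simp⟩

lemma qOrbital_eq_of_mem (h : ∀ a b : ℚ, a < b ↔ ρ a < ρ b) {x y : ℚ}
    (hy : y ∈ qOrbital ρ x) : qOrbital ρ y = qOrbital ρ x := by
  obtain ⟨m, n, hn, hm⟩ := hy
  have sub : ∀ u v : ℚ, v ∈ qOrbital ρ u → qOrbital ρ v ⊆ qOrbital ρ u := by
    rintro u v ⟨m', n', hn', hm'⟩ q ⟨m2, n2, h1, h2⟩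
    refine ⟨m2 + m', n2 + n', ?_, ?_⟩
    · calc (ρ ^ (n2 + n')) u = (ρ ^ n2) ((ρ ^ n') u) := (zpow_apply_zpow ρ _ _ _).symm
        _ ≤ (ρ ^ n2) v := by rw [← zpow_le_iff ρ h] at *; exact hn'
        _ ≤ q := h1
    · calc q ≤ (ρ ^ m2) v := h2
        _ ≤ (ρ ^ m2) ((ρ ^ m') u) := by rw [← zpow_le_iff ρ h]; exact hm'
        _ = (ρ ^ (m2 + m')) u := zpow_apply_zpow ρ _ _ _
  have hx : x ∈ qOrbital ρ y := by
    refine ⟨-n, -m, ?_, ?_⟩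
    · have := (zpow_le_iff ρ h (-m) _ _).mp hm
      rwa [zpow_apply_zpow, neg_add_cancel, zpow_zero, Equiv.Perm.one_apply] at this
    · have := (zpow_le_iff ρ h (-n) _ _).mp hn
      rwa [zpow_apply_zpow, neg_add_cancel, zpow_zero, Equiv.Perm.one_apply] at this
  exact le_antisymm (sub x y ⟨m, n, hn, hm⟩) (sub y x hx)

lemma qOrbital_apply (h : ∀ a b : ℚ, a < b ↔ ρ a < ρ b) (x : ℚ) :
    qOrbital ρ (ρ x) = qOrbital ρ x :=
  qOrbital_eq_of_mem ρ h ⟨1, 1, by simp, by simp⟩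

lemma qOrbital_between (h : ∀ a b : ℚ, a < b ↔ ρ a < ρ b) {x y : ℚ}
    (h1 : x ≤ y) (h2 : y ≤ ρ x) : qOrbital ρ y = qOrbital ρ x :=
  qOrbital_eq_of_mem ρ h ⟨1, 0, by simpa, by simpa⟩

lemma qOrbital_between' (h : ∀ a b : ℚ, a < b ↔ ρ a < ρ b) {x y : ℚ}
    (h1 : ρ x ≤ y) (h2 : y ≤ x) : qOrbital ρ y = qOrbital ρ x :=
  qOrbital_eq_of_mem ρ h ⟨0, 1, by simpa, by simpa⟩

lemma preceq_of_le (h : ∀ a b : ℚ, a < b ↔ ρ a < ρ b) {x y : ℚ} (hxy : x ≤ y) :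
    qOrbital ρ x = qOrbital ρ y ∨
      ∀ a ∈ qOrbital ρ x, ∀ b ∈ qOrbital ρ y, a < b := by
  by_cases hall : ∀ a ∈ qOrbital ρ x, ∀ b ∈ qOrbital ρ y, a < b
  · exact Or.inr hall
  push_neg at hall
  obtain ⟨a, ⟨m, n, ha1, ha2⟩, b, ⟨m', n', hb1, hb2⟩, hba⟩ := hall
  left
  refine (qOrbital_eq_of_mem ρ h (x := x) (y := y) ⟨-n' + m, 0, by simpa, ?_⟩).symm
  have s1 : y ≤ (ρ ^ (-n')) b := by
    have := (zpow_le_iff ρ h (-n') _ _).mp hb1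
    rwa [zpow_apply_zpow, neg_add_cancel, zpow_zero, Equiv.Perm.one_apply] at this
  have s2 : (ρ ^ (-n')) b ≤ (ρ ^ (-n')) a := (zpow_le_iff ρ h (-n') _ _).mp hba
  have s3 : (ρ ^ (-n')) a ≤ (ρ ^ (-n' + m)) x := by
    have := (zpow_le_iff ρ h (-n') _ _).mp ha2
    rwa [zpow_apply_zpow] at this
  exact s1.trans (s2.trans s3)

lemma zpow_fixed {x : ℚ} (hx : ρ x = x) (n : ℤ) : (ρ ^ n) x = x := by
  induction n using Int.induction_on with
  | zero => simp
  | succ k ih =>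
      have e : ρ ^ ((k : ℤ) + 1) = ρ ^ (k : ℤ) * ρ := zpow_add_one ρ k
      rw [e, Equiv.Perm.mul_apply, hx, ih]
  | pred k ih =>
      have e : ρ ^ (-(k : ℤ) - 1) = ρ ^ (-(k : ℤ)) * ρ⁻¹ := zpow_sub_one ρ (-k)
      have hinv : ρ⁻¹ x = x := by conv_lhs => rw [← hx, (Equiv.Perm.inv_eq_iff_eq (f := ρ) (x := ρ x) (y := x)).mpr rfl]
      rw [e, Equiv.Perm.mul_apply, hinv, ih]

lemma qOrbital_fixed {x : ℚ} (hx : ρ x = x) : qOrbital ρ x = {x} := by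
  ext q
  constructor
  · rintro ⟨m, n, h1, h2⟩
    rw [zpow_fixed ρ hx] at h1 h2
    exact le_antisymm h2 h1
  · rintro rfl; exact mem_qOrbital_self ρ q

end aux


/-- if `γ` lies in the closure of the conjugacy class of `ρ` in
`Aut(ℚ,<)`, then for every finite `A ⊆ ℚ` there is a map `φ` inducing a map from the
`(γ ↾ A)`-orbitals of `A ∪ γ(A)` to the orbitals of `ρ` which is order-preserving,
parity-preserving, and injective on orbitals of parity `0`. -/
theorem stmt14 (γ ρ : Equiv.Perm ℚ)
    (hγ : ∀ a b : ℚ, a < b ↔ γ a < γ b) (hρ : ∀ a b : ℚ, a < b ↔ ρ a < ρ b)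
    (hcl : ∀ B : Finset ℚ, ∃ σ : Equiv.Perm ℚ, (∀ a b : ℚ, a < b ↔ σ a < σ b) ∧
      ∀ b ∈ B, γ b = (σ * ρ * σ⁻¹) b) :
    ∀ A : Finset ℚ, ∃ φ : ℚ → ℚ,
      (∀ a ∈ suppSet γ A, ∀ b ∈ suppSet γ A, Relation.EqvGen (pRel γ A) a b →
        qOrbital ρ (φ a) = qOrbital ρ (φ b)) ∧
      (∀ a ∈ suppSet γ A, ∀ b ∈ suppSet γ A, a ≤ b →
        preceq (qOrbital ρ (φ a)) (qOrbital ρ (φ b))) ∧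
      (∀ a ∈ suppSet γ A, (a < γ a ↔ φ a < ρ (φ a)) ∧ (γ a < a ↔ ρ (φ a) < φ a) ∧
        (γ a = a ↔ ρ (φ a) = φ a)) ∧
      (∀ a ∈ suppSet γ A, ∀ b ∈ suppSet γ A, γ a = a → γ b = b →
        qOrbital ρ (φ a) = qOrbital ρ (φ b) → Relation.EqvGen (pRel γ A) a b) := by
  intro A
  obtain ⟨σ, hσ, hB⟩ := hcl (A ∪ A.image γ)
  have hinvlt : ∀ a b : ℚ, a < b ↔ σ⁻¹ a < σ⁻¹ b := by
    intro a b
    conv_lhs => rw [← ((Equiv.Perm.inv_eq_iff_eq (f := σ) (x := a) (y := σ⁻¹ a)).mp rfl).symm, ← ((Equiv.Perm.inv_eq_iff_eq (f := σ) (x := b) (y := σ⁻¹ b)).mp rfl).symm]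
    exact (hσ _ _).symm
  have hinvle : ∀ a b : ℚ, a ≤ b ↔ σ⁻¹ a ≤ σ⁻¹ b := by
    intro a b; rw [← not_lt, ← not_lt, hinvlt]
  have hkey : ∀ a ∈ suppSet γ A, σ⁻¹ (γ a) = ρ (σ⁻¹ a) := by
    intro a ha
    have hmem : a ∈ A ∪ A.image γ := by
      rcases ha with h | ⟨c, hc, rfl⟩
      · exact Finset.mem_union_left _ (Finset.mem_coe.mp h)
      · exact Finset.mem_union_right _ (Finset.mem_image_of_mem γ (Finset.mem_coe.mp hc))
    rw [hB a hmem]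
    simp [Equiv.Perm.mul_apply]
  have orbγ : ∀ c, c ∈ suppSet γ A → qOrbital ρ (σ⁻¹ (γ c)) = qOrbital ρ (σ⁻¹ c) := by
    intro c hc; rw [hkey c hc]; exact qOrbital_apply ρ hρ _
  have orbEq : ∀ x y : ℚ, x ∈ suppSet γ A → x ≤ y → y ≤ γ x →
      qOrbital ρ (σ⁻¹ y) = qOrbital ρ (σ⁻¹ x) := by
    intro x y hx h1 h2
    exact qOrbital_between ρ hρ ((hinvle _ _).mp h1)
      (by rw [← hkey x hx]; exact (hinvle _ _).mp h2)
  have orbEq' : ∀ x y : ℚ, x ∈ suppSet γ A → γ x ≤ y → y ≤ x →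
      qOrbital ρ (σ⁻¹ y) = qOrbital ρ (σ⁻¹ x) := by
    intro x y hx h1 h2
    exact qOrbital_between' ρ hρ
      (by rw [← hkey x hx]; exact (hinvle _ _).mp h1) ((hinvle _ _).mp h2)
  refine ⟨fun q => σ⁻¹ q, ?_, ?_, ?_, ?_⟩
  · intro a ha b hb hEq
    clear ha hb
    induction hEq with
    | rel x y hxy =>
        obtain ⟨hx, hy, hcases⟩ := hxy
        rcases hcases with rfl | ⟨-, hc⟩ | ⟨-, hc⟩
        · rfl
        · rcases hc with ⟨hA, h1, h2⟩ | ⟨hA, h1, h2⟩ | ⟨hA, h1, h2⟩ | ⟨hA, h1, h2⟩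
          · exact (orbEq x y (Or.inl hA) h1 h2).symm
          · exact orbEq y x (Or.inl hA) h1 h2
          · obtain ⟨c, hcA, rfl⟩ := hA
            rw [(Equiv.Perm.inv_eq_iff_eq (f := γ) (x := γ c) (y := c)).mpr rfl] at h1
            exact (orbγ c (Or.inl hcA)).trans (orbEq c y (Or.inl hcA) h1 h2).symm
          · obtain ⟨c, hcA, rfl⟩ := hA
            rw [(Equiv.Perm.inv_eq_iff_eq (f := γ) (x := γ c) (y := c)).mpr rfl] at h1
            exact (orbEq c x (Or.inl hcA) h1 h2).trans (orbγ c (Or.inl hcA)).symm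
        · rcases hc with ⟨hA, h1, h2⟩ | ⟨hA, h1, h2⟩ | ⟨hA, h1, h2⟩ | ⟨hA, h1, h2⟩
          · obtain ⟨c, hcA, rfl⟩ := hA
            rw [(Equiv.Perm.inv_eq_iff_eq (f := γ) (x := γ c) (y := c)).mpr rfl] at h2
            exact (orbγ c (Or.inl hcA)).trans (orbEq' c y (Or.inl hcA) h1 h2).symm
          · obtain ⟨c, hcA, rfl⟩ := hA
            rw [(Equiv.Perm.inv_eq_iff_eq (f := γ) (x := γ c) (y := c)).mpr rfl] at h2
            exact (orbEq' c x (Or.inl hcA) h1 h2).trans (orbγ c (Or.inl hcA)).symm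
          · exact (orbEq' x y (Or.inl hA) h1 h2).symm
          · exact orbEq' y x (Or.inl hA) h1 h2
    | refl x => rfl
    | symm x y _ ih => exact ih.symm
    | trans x y z _ _ ih1 ih2 => exact ih1.trans ih2
  · intro a _ b _ hab
    exact preceq_of_le ρ hρ ((hinvle a b).mp hab)
  · intro a ha
    have hk := hkey a ha
    refine ⟨?_, ?_, ?_⟩
    · rw [← hk]; exact hinvlt a (γ a)
    · rw [← hk]; exact hinvlt (γ a) a
    · rw [← hk]; exact (Equiv.apply_eq_iff_eq σ⁻¹).symm
  · intro a ha b hb hfa hfb horb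
    have h1 : ρ (σ⁻¹ a) = σ⁻¹ a := by rw [← hkey a ha, hfa]
    have h2 : ρ (σ⁻¹ b) = σ⁻¹ b := by rw [← hkey b hb, hfb]
    rw [qOrbital_fixed ρ h1, qOrbital_fixed ρ h2,
      Set.singleton_eq_singleton_iff] at horb
    have : a = b := σ⁻¹.injective horb
    subst this
    exact Relation.EqvGen.refl a
end

section
/- Let ρ ∈ Sym(ℕ) have no infinite cycles. Let P_ρ be the set of finite partial injections p of ℕ that extend to a permutation in the closure of the conjugacy class of ρ, and let P^c_ρ ⊆ P_ρ consist of those p ∈ P_ρ that are permutations of a finite subset of ℕ. Then P^c_ρ is cofinal in P_ρ and has the amalgamation property: for p₀ ⊆ p₁, p₀ ⊆ p₂ all in P^c_ρ there exist p₃ ∈ P^c_ρ and σ ∈ Sym(ℕ) fixing dom(p₀) ∪ ran(p₀) pointwise with p₁ ⊆ p₃ and σ p₂ σ⁻¹ ⊆ p₃. -/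
/-- A finite partial injection of `ℕ`, given by its graph. -/
def IsFinPartialInj (p : Set (ℕ × ℕ)) : Prop :=
  p.Finite ∧ ∀ x ∈ p, ∀ y ∈ p, (x.1 = y.1 ↔ x.2 = y.2)

/-- `γ` belongs to the closure of the conjugacy class of `ρ` in `Sym(ℕ)` with the
pointwise convergence topology: on every finite set, `γ` and `γ⁻¹` agree with a
conjugate of `ρ` and its inverse. -/
def inClosureConj (ρ γ : Equiv.Perm ℕ) : Prop :=
  ∀ A : Finset ℕ, ∃ σ : Equiv.Perm ℕ, ∀ a ∈ A,
    γ a = (σ * ρ * σ⁻¹) a ∧ γ⁻¹ a = (σ * ρ * σ⁻¹)⁻¹ a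

/-- `p ∈ P_ρ`: `p` is a finite partial injection extendable to a permutation in the
closure of the conjugacy class of `ρ`. -/
def memPrho (ρ : Equiv.Perm ℕ) (p : Set (ℕ × ℕ)) : Prop :=
  IsFinPartialInj p ∧ ∃ γ : Equiv.Perm ℕ, inClosureConj ρ γ ∧ ∀ x ∈ p, γ x.1 = x.2

/-- `p` is a permutation of a finite subset of `ℕ`: its domain equals its range. -/
def isFinPerm (p : Set (ℕ × ℕ)) : Prop := Prod.fst '' p = Prod.snd '' p

open Function

lemma conj_iter (σ ρ : Equiv.Perm ℕ) (m : ℕ) (x : ℕ) :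
    (⇑(σ * ρ * σ⁻¹))^[m] x = σ ((⇑ρ)^[m] (σ⁻¹ x)) := by
  induction m with
  | zero => simp
  | succ m ih =>
      rw [Function.iterate_succ_apply', ih, Function.iterate_succ_apply']
      simp [Equiv.Perm.mul_apply]

lemma hper_of_hfin (ρ : Equiv.Perm ℕ) (hfin : ∀ x : ℕ, (orbitOf ρ x).Finite)
    (σ : Equiv.Perm ℕ) : ∀ x, ∃ n, 0 < n ∧ (⇑(σ * ρ * σ⁻¹))^[n] x = x := by
  intro x
  set y := σ⁻¹ x with hy
  have horb : ∀ k : ℕ, (⇑ρ)^[k] y ∈ orbitOf ρ y := by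
    intro k
    exact ⟨(k : ℤ), by rw [zpow_natCast]; rfl⟩
  have : ∃ n, 0 < n ∧ (⇑ρ)^[n] y = y := by
    have hfy := (hfin y).to_subtype
    obtain ⟨k, l, hkl, he⟩ := Finite.exists_ne_map_eq_of_infinite
      (fun k : ℕ => (⟨(⇑ρ)^[k] y, horb k⟩ : orbitOf ρ y))
    have he' : (⇑ρ)^[k] y = (⇑ρ)^[l] y := congrArg Subtype.val he
    rcases lt_or_gt_of_ne hkl with h | h
    · refine ⟨l - k, by omega, ?_⟩
      have : (⇑ρ)^[k] ((⇑ρ)^[l - k] y) = (⇑ρ)^[k] y := by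
        rw [← Function.iterate_add_apply, show k + (l - k) = l by omega]
        exact he'.symm
      exact (Function.Injective.iterate ρ.injective k) this
    · refine ⟨k - l, by omega, ?_⟩
      have : (⇑ρ)^[l] ((⇑ρ)^[k - l] y) = (⇑ρ)^[l] y := by
        rw [← Function.iterate_add_apply, show l + (k - l) = k by omega]
        exact he'
      exact (Function.Injective.iterate ρ.injective l) this
  obtain ⟨n, hn, hny⟩ := this
  exact ⟨n, hn, by rw [conj_iter, ← hy, hny, hy]; simp⟩

lemma orbClo (τ : Equiv.Perm ℕ) (hper : ∀ x, ∃ n, 0 < n ∧ (⇑τ)^[n] x = x) (B : Finset ℕ) :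
    ∃ O : Finset ℕ, B ⊆ O ∧ (∀ x ∈ O, τ x ∈ O) ∧ (∀ x ∈ O, ∃ y ∈ O, τ y = x) := by
  classical
  refine ⟨B.biUnion (fun b => (Finset.range (hper b).choose).image (fun k => (⇑τ)^[k] b)),
    ?_, ?_, ?_⟩
  · intro b hb
    refine Finset.mem_biUnion.2 ⟨b, hb, Finset.mem_image.2 ⟨0, ?_, rfl⟩⟩
    exact Finset.mem_range.2 (hper b).choose_spec.1
  · intro x hx
    obtain ⟨b, hb, hx⟩ := Finset.mem_biUnion.1 hx
    obtain ⟨k, hk, rfl⟩ := Finset.mem_image.1 hx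
    have hk' := Finset.mem_range.1 hk
    rw [← Function.iterate_succ_apply' (⇑τ) k b]
    rcases eq_or_lt_of_le (Nat.succ_le_of_lt hk') with h | h
    · rw [h, (hper b).choose_spec.2]
      refine Finset.mem_biUnion.2 ⟨b, hb, Finset.mem_image.2 ⟨0,
        Finset.mem_range.2 (hper b).choose_spec.1, rfl⟩⟩
    · exact Finset.mem_biUnion.2 ⟨b, hb, Finset.mem_image.2 ⟨k + 1, Finset.mem_range.2 h, rfl⟩⟩
  · intro x hx
    -- O is closed under iterates
    have hiter : ∀ j z, (z ∈ B.biUnion (fun b => (Finset.range (hper b).choose).image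
        (fun k => (⇑τ)^[k] b))) → (⇑τ)^[j] z ∈ B.biUnion (fun b =>
        (Finset.range (hper b).choose).image (fun k => (⇑τ)^[k] b)) := by
      intro j
      induction j with
      | zero => intro z hz; simpa using hz
      | succ j ih =>
          intro z hz
          rw [Function.iterate_succ_apply']
          -- reuse forward closure
          obtain ⟨b, hb, hz'⟩ := Finset.mem_biUnion.1 (ih z hz)
          obtain ⟨k, hk, hzk⟩ := Finset.mem_image.1 hz'
          have hk' := Finset.mem_range.1 hk
          rw [← hzk, ← Function.iterate_succ_apply' (⇑τ) k b]
          rcases eq_or_lt_of_le (Nat.succ_le_of_lt hk') with h | h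
          · rw [h, (hper b).choose_spec.2]
            exact Finset.mem_biUnion.2 ⟨b, hb, Finset.mem_image.2 ⟨0,
              Finset.mem_range.2 (hper b).choose_spec.1, rfl⟩⟩
          · exact Finset.mem_biUnion.2 ⟨b, hb, Finset.mem_image.2 ⟨k + 1,
              Finset.mem_range.2 h, rfl⟩⟩
    obtain ⟨m, hm, hmx⟩ := hper x
    refine ⟨(⇑τ)^[m - 1] x, hiter (m - 1) x hx, ?_⟩
    rw [← Function.iterate_succ_apply' (⇑τ) (m - 1) x, show (m - 1).succ = m by omega, hmx]

lemma finperm_mem (ρ σ : Equiv.Perm ℕ) (O : Finset ℕ)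
    (hfwd : ∀ x ∈ O, (σ * ρ * σ⁻¹) x ∈ O)
    (hbwd : ∀ x ∈ O, ∃ y ∈ O, (σ * ρ * σ⁻¹) y = x) :
    memPrho ρ ((fun x => (x, (σ * ρ * σ⁻¹) x)) '' ↑O) ∧
      isFinPerm ((fun x => (x, (σ * ρ * σ⁻¹) x)) '' ↑O) := by
  set τ := σ * ρ * σ⁻¹ with hτ
  constructor
  · refine ⟨⟨Set.Finite.image _ O.finite_toSet, ?_⟩, τ, fun A => ⟨σ, fun a _ => ⟨rfl, rfl⟩⟩, ?_⟩
    · rintro ⟨x1, x2⟩ ⟨a, _, ha⟩ ⟨y1, y2⟩ ⟨b, _, hb⟩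
      cases ha
      cases hb
      simp
    · rintro ⟨x1, x2⟩ ⟨a, _, ha⟩
      simp only [Prod.mk.injEq] at ha
      rw [← ha.1, ← ha.2]
  · unfold isFinPerm
    have h1 : Prod.fst '' ((fun x => (x, τ x)) '' ↑O) = ↑O := by
      ext y; simp
    have h2 : Prod.snd '' ((fun x => (x, τ x)) '' ↑O) = ↑O := by
      ext y
      simp only [Set.mem_image, Finset.mem_coe]
      constructor
      · rintro ⟨⟨a, b⟩, ⟨c, hc, hcab⟩, hy⟩
        simp only [Prod.mk.injEq] at hcab
        subst hy
        rw [← hcab.2, ← hcab.1] at *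
        exact hfwd c hc
      · intro hy
        obtain ⟨z, hz, hzy⟩ := hbwd y hy
        exact ⟨(z, τ z), ⟨z, hz, rfl⟩, hzy⟩
    rw [h1, h2]

lemma extend_base (τ : Equiv.Perm ℕ)
    (hper : ∀ x, ∃ n, 0 < n ∧ (⇑τ)^[n] x = x)
    (T : Finset ℕ) (g : ℕ → ℕ)
    (hinv : ∀ x ∈ T, τ x ∈ T)
    (hinj : Set.InjOn g ↑T)
    (heq : ∀ x ∈ T, g (τ x) = τ (g x))
    (himg : T.image g = T) :
    ∃ δ : Equiv.Perm ℕ, (∀ x, δ (τ x) = τ (δ x)) ∧ ∀ x ∈ T, δ x = g x := by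
  classical
  -- complement invariance
  have hTiter : ∀ j, ∀ x ∈ T, (⇑τ)^[j] x ∈ T := by
    intro j
    induction j with
    | zero => intro x hx; simpa using hx
    | succ j ih => intro x hx; rw [Function.iterate_succ_apply' (⇑τ) j x]; exact hinv _ (ih x hx)
  have hcompl : ∀ x, x ∉ T → τ x ∉ T := by
    intro x hx hτx
    obtain ⟨n, hn, hnx⟩ := hper x
    have : (⇑τ)^[n - 1] (τ x) ∈ T := hTiter _ _ hτx
    rw [← Function.iterate_succ_apply (⇑τ) (n - 1) x, show (n-1).succ = n by omega, hnx] at this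
    exact hx this
  set f : ℕ → ℕ := fun x => if x ∈ T then g x else x with hf
  have hbij : Function.Bijective f := by
    constructor
    · intro a b hab
      by_cases ha : a ∈ T <;> by_cases hb : b ∈ T
      · exact hinj ha hb (by simpa [hf, ha, hb] using hab)
      · exfalso; apply hb
        have : g a ∈ T := by rw [← himg]; exact Finset.mem_image.2 ⟨a, ha, rfl⟩
        simp only [hf, if_pos ha, if_neg hb] at hab
        rwa [hab] at this
      · exfalso; apply ha
        have : g b ∈ T := by rw [← himg]; exact Finset.mem_image.2 ⟨b, hb, rfl⟩
        simp only [hf, if_neg ha, if_pos hb] at hab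
        rwa [← hab] at this
      · simpa [hf, ha, hb] using hab
    · intro y
      by_cases hy : y ∈ T
      · rw [← himg] at hy
        obtain ⟨x, hx, hxy⟩ := Finset.mem_image.1 hy
        exact ⟨x, by simp [hf, hx, hxy]⟩
      · exact ⟨y, by simp [hf, hy]⟩
  refine ⟨Equiv.ofBijective f hbij, ?_, ?_⟩
  · intro x
    show f (τ x) = τ (f x)
    by_cases hx : x ∈ T
    · simp only [hf, if_pos hx, if_pos (hinv x hx)]
      exact heq x hx
    · simp only [hf, if_neg hx, if_neg (hcompl x hx)]
  · intro x hx
    show f x = g x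
    simp [hf, hx]

lemma extend_equiv (τ : Equiv.Perm ℕ)
    (hper : ∀ x, ∃ n, 0 < n ∧ (⇑τ)^[n] x = x) :
    ∀ (N : ℕ) (T : Finset ℕ) (g : ℕ → ℕ),
      (T.image g \ T).card ≤ N →
      (∀ x ∈ T, τ x ∈ T) →
      Set.InjOn g ↑T →
      (∀ x ∈ T, g (τ x) = τ (g x)) →
      ∃ δ : Equiv.Perm ℕ, (∀ x, δ (τ x) = τ (δ x)) ∧ ∀ x ∈ T, δ x = g x := by
  classical
  intro N
  induction N with
  | zero =>
      intro T g hcard hinv hinj heq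
      have hsub : T.image g ⊆ T := by
        rw [← Finset.sdiff_eq_empty_iff_subset]
        exact Finset.card_eq_zero.1 (Nat.le_zero.1 hcard)
      have himg : T.image g = T :=
        Finset.eq_of_subset_of_card_le hsub (le_of_eq (Finset.card_image_of_injOn hinj).symm)
      exact extend_base τ hper T g hinv hinj heq himg
  | succ N ih =>
      intro T g hcard hinv hinj heq
      by_cases hsub : T.image g ⊆ T
      · have himg : T.image g = T :=
          Finset.eq_of_subset_of_card_le hsub (le_of_eq (Finset.card_image_of_injOn hinj).symm)
        exact extend_base τ hper T g hinv hinj heq himg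
      · -- setup
        set S := T.image g with hS
        have hTiter : ∀ j, ∀ x ∈ T, (⇑τ)^[j] x ∈ T := by
          intro j
          induction j with
          | zero => intro x hx; simpa using hx
          | succ j ihj =>
              intro x hx
              rw [Function.iterate_succ_apply' (⇑τ) j x]; exact hinv _ (ihj x hx)
        have hinv' : ∀ x ∈ T, τ⁻¹ x ∈ T := by
          intro x hx
          obtain ⟨m, hm, hmx⟩ := hper x
          have h1 : τ⁻¹ x = (⇑τ)^[m - 1] x := by
            apply τ.injective
            rw [(by simp : τ (τ⁻¹ x) = x),
              ← Function.iterate_succ_apply' (⇑τ) (m - 1) x, show (m - 1).succ = m by omega, hmx]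
          rw [h1]; exact hTiter _ _ hx
        have hback : ∀ k x, (⇑τ)^[k] x ∈ T → x ∈ T := by
          intro k
          induction k with
          | zero => intro x hx; simpa using hx
          | succ k ihk =>
              intro x hx
              rw [Function.iterate_succ_apply (⇑τ) k x] at hx
              have := ihk _ hx
              have h2 := hinv' _ this
              rwa [(by simp : τ⁻¹ (τ x) = x)] at h2
        have hSinv : ∀ y ∈ S, τ y ∈ S := by
          intro y hy
          obtain ⟨x, hx, rfl⟩ := Finset.mem_image.1 hy
          rw [← heq x hx]
          exact Finset.mem_image.2 ⟨τ x, hinv x hx, rfl⟩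
        have hSiter : ∀ j, ∀ y ∈ S, (⇑τ)^[j] y ∈ S := by
          intro j
          induction j with
          | zero => intro y hy; simpa using hy
          | succ j ihj =>
              intro y hy
              rw [Function.iterate_succ_apply' (⇑τ) j y]; exact hSinv _ (ihj y hy)
        have hSinv' : ∀ y ∈ S, τ⁻¹ y ∈ S := by
          intro y hy
          obtain ⟨m, hm, hmy⟩ := hper y
          have h1 : τ⁻¹ y = (⇑τ)^[m - 1] y := by
            apply τ.injective
            rw [(by simp : τ (τ⁻¹ y) = y),
              ← Function.iterate_succ_apply' (⇑τ) (m - 1) y, show (m - 1).succ = m by omega, hmy]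
          rw [h1]; exact hSiter _ _ hy
        have hSback : ∀ k y, (⇑τ)^[k] y ∈ S → y ∈ S := by
          intro k
          induction k with
          | zero => intro y hy; simpa using hy
          | succ k ihk =>
              intro y hy
              rw [Function.iterate_succ_apply (⇑τ) k y] at hy
              have := ihk _ hy
              have h2 := hSinv' _ this
              rwa [(by simp : τ⁻¹ (τ y) = y)] at h2
        obtain ⟨e, heS, heT⟩ := Finset.not_subset.1 hsub
        have hminpos : ∀ x : ℕ, 0 < Function.minimalPeriod (⇑τ) x := by
          intro x
          obtain ⟨m, hm, hmx⟩ := hper x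
          exact Function.IsPeriodicPt.minimalPeriod_pos hm hmx
        set n := Function.minimalPeriod (⇑τ) e with hn
        have hn0 : 0 < n := hminpos e
        -- g commutes with iterates on T
        have hgit : ∀ m, ∀ x ∈ T, g ((⇑τ)^[m] x) = (⇑τ)^[m] (g x) := by
          intro m
          induction m with
          | zero => intro x hx; simp
          | succ m ihm =>
              intro x hx
              rw [Function.iterate_succ_apply' (⇑τ) m x, Function.iterate_succ_apply' (⇑τ) m (g x),
                heq _ (hTiter m x hx), ihm x hx]
        -- g preserves minimal periods on T
        have hminper : ∀ x ∈ T, Function.minimalPeriod (⇑τ) (g x) = Function.minimalPeriod (⇑τ) x := by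
          intro x hx
          apply le_antisymm
          · apply Function.IsPeriodicPt.minimalPeriod_le (hminpos x)
            show (⇑τ)^[Function.minimalPeriod (⇑τ) x] (g x) = g x
            rw [← hgit _ x hx, Function.iterate_minimalPeriod]
          · apply Function.IsPeriodicPt.minimalPeriod_le (hminpos (g x))
            show (⇑τ)^[Function.minimalPeriod (⇑τ) (g x)] x = x
            apply hinj (hTiter _ x hx) hx
            rw [hgit _ x hx, Function.iterate_minimalPeriod]
        set Tn := T.filter (fun x => Function.minimalPeriod (⇑τ) x = n) with hTn
        set Sn := S.filter (fun x => Function.minimalPeriod (⇑τ) x = n) with hSnn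
        have hSnimg : Sn = Tn.image g := by
          ext y
          simp only [hSnn, hTn, Finset.mem_filter, Finset.mem_image, hS]
          constructor
          · rintro ⟨⟨x, hx, rfl⟩, hyn⟩
            exact ⟨x, ⟨hx, by rw [← hminper x hx]; exact hyn⟩, rfl⟩
          · rintro ⟨x, ⟨hx, hxn⟩, rfl⟩
            exact ⟨⟨x, hx, rfl⟩, by rw [hminper x hx]; exact hxn⟩
        have hcardn : Tn.card = Sn.card := by
          rw [hSnimg, Finset.card_image_of_injOn (hinj.mono (by
            intro z hz
            exact (Finset.mem_filter.1 hz).1))]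
        have hSnTn : (Sn \ Tn).Nonempty := by
          refine ⟨e, Finset.mem_sdiff.2 ⟨Finset.mem_filter.2 ⟨heS, rfl⟩, fun h => heT (Finset.mem_filter.1 h).1⟩⟩
        have hTnSn : (Tn \ Sn).Nonempty := by
          rw [← Finset.card_pos, Finset.card_sdiff_comm hcardn, Finset.card_pos]
          exact hSnTn
        obtain ⟨a, ha⟩ := hTnSn
        have haT : a ∈ T := (Finset.mem_filter.1 (Finset.mem_sdiff.1 ha).1).1
        have han : Function.minimalPeriod (⇑τ) a = n := (Finset.mem_filter.1 (Finset.mem_sdiff.1 ha).1).2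
        have haS : a ∉ S := by
          intro h
          exact (Finset.mem_sdiff.1 ha).2 (Finset.mem_filter.2 ⟨h, han⟩)
        -- orbit of e as a finset; P x : x is on the orbit of e
        set P : ℕ → Prop := fun x => ∃ k, k < n ∧ (⇑τ)^[k] e = x with hP
        set E := (Finset.range n).image (fun k => (⇑τ)^[k] e) with hE
        have hPE : ∀ x, P x ↔ x ∈ E := by
          intro x
          constructor
          · rintro ⟨k, hk, hke⟩
            exact Finset.mem_image.2 ⟨k, Finset.mem_range.2 hk, hke⟩
          · intro hx
            obtain ⟨k, hk, hke⟩ := Finset.mem_image.1 hx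
            exact ⟨k, Finset.mem_range.1 hk, hke⟩
        have hEuniq : ∀ j k, j < n → k < n → (⇑τ)^[j] e = (⇑τ)^[k] e → j = k := by
          intro j k hj hk hjk
          exact Function.iterate_injOn_Iio_minimalPeriod
            (by rw [Set.mem_Iio, ← hn]; exact hj) (by rw [Set.mem_Iio, ← hn]; exact hk) hjk
        have hCuniq : ∀ j k, j < n → k < n → (⇑τ)^[j] a = (⇑τ)^[k] a → j = k := by
          intro j k hj hk hjk
          exact Function.iterate_injOn_Iio_minimalPeriod (x := a)
            (by rw [Set.mem_Iio, han]; exact hj) (by rw [Set.mem_Iio, han]; exact hk) hjk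
        have hEmod : ∀ m : ℕ, (⇑τ)^[m] e = (⇑τ)^[m % n] e := by
          intro m
          have := Function.iterate_mod_minimalPeriod_eq (f := ⇑τ) (x := e) (n := m)
          rw [← hn] at this
          exact this.symm
        have hCmod : ∀ m : ℕ, (⇑τ)^[m] a = (⇑τ)^[m % n] a := by
          intro m
          have := Function.iterate_mod_minimalPeriod_eq (f := ⇑τ) (x := a) (n := m)
          rw [han] at this
          exact this.symm
        have hET : ∀ x, P x → x ∉ T := by
          rintro x ⟨k, hk, rfl⟩ hmem
          exact heT (hback k e hmem)
        have hCS : ∀ k, (⇑τ)^[k] a ∉ S := by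
          intro k hk
          exact haS (hSback k a hk)
        -- the extended map
        set g' : ℕ → ℕ := fun x => if hx : P x then (⇑τ)^[Nat.find hx] a else g x with hg'
        have hg'T : ∀ x ∈ T, g' x = g x := by
          intro x hx
          simp only [hg']
          rw [dif_neg (fun h => hET x h hx)]
        have hg'E : ∀ x (hx : P x), g' x = (⇑τ)^[Nat.find hx] a := by
          intro x hx
          simp only [hg']
          rw [dif_pos hx]
        have hfind : ∀ x (hx : P x), Nat.find hx < n ∧ (⇑τ)^[Nat.find hx] e = x :=
          fun x hx => Nat.find_spec hx
        have hfind2 : ∀ k, k < n → ∀ (hx : P ((⇑τ)^[k] e)), Nat.find hx = k := by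
          intro k hk hx
          exact hEuniq _ _ (hfind _ hx).1 hk (hfind _ hx).2
        have hPtau : ∀ x, P x → P (τ x) := by
          rintro x ⟨k, hk, rfl⟩
          refine ⟨(k + 1) % n, Nat.mod_lt _ hn0, ?_⟩
          rw [← hEmod (k + 1), Function.iterate_succ_apply' (⇑τ) k e]
        -- equivariance of g' on T ∪ E
        have heq' : ∀ x ∈ T ∪ E, g' (τ x) = τ (g' x) := by
          intro x hx
          rcases Finset.mem_union.1 hx with hx | hx
          · rw [hg'T x hx, hg'T (τ x) (hinv x hx), heq x hx]
          · have hPx : P x := (hPE x).2 hx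
            obtain ⟨k, hk, rfl⟩ := hPx
            have hPx' : P ((⇑τ)^[k] e) := ⟨k, hk, rfl⟩
            rw [hg'E _ hPx', hfind2 k hk]
            have htau : τ ((⇑τ)^[k] e) = (⇑τ)^[(k + 1) % n] e := by
              rw [← hEmod (k + 1), Function.iterate_succ_apply' (⇑τ) k e]
            have hPtx : P (τ ((⇑τ)^[k] e)) := hPtau _ ⟨k, hk, rfl⟩
            rw [hg'E _ hPtx]
            have : Nat.find hPtx = (k + 1) % n := by
              have h3 := (hfind _ hPtx).2
              exact hEuniq _ _ (hfind _ hPtx).1 (Nat.mod_lt _ hn0) (h3.trans htau)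
            rw [this, ← hCmod (k + 1), Function.iterate_succ_apply' (⇑τ) k a]
        -- injectivity on T ∪ E
        have hinj' : Set.InjOn g' ↑(T ∪ E) := by
          intro x hx y hy hxy
          simp only [Finset.coe_union, Set.mem_union, Finset.mem_coe] at hx hy
          rcases hx with hx | hx <;> rcases hy with hy | hy
          · rw [hg'T x hx, hg'T y hy] at hxy
            exact hinj hx hy hxy
          · exfalso
            have hPy : P y := (hPE y).2 hy
            rw [hg'T x hx, hg'E y hPy] at hxy
            apply hCS (Nat.find hPy)
            rw [← hxy]
            exact Finset.mem_image.2 ⟨x, hx, rfl⟩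
          · exfalso
            have hPx : P x := (hPE x).2 hx
            rw [hg'T y hy, hg'E x hPx] at hxy
            apply hCS (Nat.find hPx)
            rw [hxy]
            exact Finset.mem_image.2 ⟨y, hy, rfl⟩
          · have hPx : P x := (hPE x).2 hx
            have hPy : P y := (hPE y).2 hy
            rw [hg'E x hPx, hg'E y hPy] at hxy
            have := hCuniq _ _ (hfind _ hPx).1 (hfind _ hPy).1 hxy
            rw [← (hfind _ hPx).2, ← (hfind _ hPy).2, this]
        -- invariance of T ∪ E
        have hinv2 : ∀ x ∈ T ∪ E, τ x ∈ T ∪ E := by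
          intro x hx
          rcases Finset.mem_union.1 hx with hx | hx
          · exact Finset.mem_union_left _ (hinv x hx)
          · exact Finset.mem_union_right _ ((hPE _).1 (hPtau x ((hPE x).2 hx)))
        -- measure decreases
        have hmeas : ((T ∪ E).image g' \ (T ∪ E)).card ≤ N := by
          have hsub2 : (T ∪ E).image g' \ (T ∪ E) ⊆ (S \ T).erase e := by
            intro y hy
            obtain ⟨hy1, hy2⟩ := Finset.mem_sdiff.1 hy
            obtain ⟨x, hx, rfl⟩ := Finset.mem_image.1 hy1
            rcases Finset.mem_union.1 hx with hx' | hx'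
            · rw [hg'T x hx']
              refine Finset.mem_erase.2 ⟨?_, Finset.mem_sdiff.2 ⟨Finset.mem_image.2 ⟨x, hx', rfl⟩, ?_⟩⟩
              · intro h
                apply hy2
                rw [hg'T x hx', h]
                exact Finset.mem_union_right _ ((hPE e).1 ⟨0, hn0, rfl⟩)
              · intro h
                exact hy2 (Finset.mem_union_left _ (by rw [hg'T x hx']; exact h))
            · exfalso
              have hPx : P x := (hPE x).2 hx'
              apply hy2
              rw [hg'E x hPx]
              exact Finset.mem_union_left _ (hTiter _ _ haT)
          have h4 := Finset.card_le_card hsub2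
          rw [Finset.card_erase_of_mem (Finset.mem_sdiff.2 ⟨heS, heT⟩)] at h4
          omega
        obtain ⟨δ, hδ1, hδ2⟩ := ih (T ∪ E) g' hmeas hinv2 hinj' heq'
        exact ⟨δ, hδ1, fun x hx => by rw [hδ2 x (Finset.mem_union_left _ hx), hg'T x hx]⟩

lemma exists_conj (ρ : Equiv.Perm ℕ) {p : Set (ℕ × ℕ)} (hp : memPrho ρ p) :
    ∃ σ : Equiv.Perm ℕ, ∀ x ∈ p, (σ * ρ * σ⁻¹) x.1 = x.2 := by
  obtain ⟨⟨hfin, _⟩, γ, hclo, hext⟩ := hp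
  obtain ⟨σ, hσ⟩ := hclo (hfin.image Prod.fst).toFinset
  refine ⟨σ, fun x hx => ?_⟩
  have hx1 : x.1 ∈ (hfin.image Prod.fst).toFinset :=
    (Set.Finite.mem_toFinset _).2 ⟨x, hx, rfl⟩
  rw [← (hσ x.1 hx1).1]
  exact hext x hx

theorem stmt15' (ρ : Equiv.Perm ℕ) (hfin : ∀ x : ℕ, (orbitOf ρ x).Finite) :
    (∀ p, memPrho ρ p → ∃ q, memPrho ρ q ∧ isFinPerm q ∧ p ⊆ q) ∧
    (∀ p₀ p₁ p₂ : Set (ℕ × ℕ),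
      memPrho ρ p₀ → memPrho ρ p₁ → memPrho ρ p₂ →
      isFinPerm p₀ → isFinPerm p₁ → isFinPerm p₂ →
      p₀ ⊆ p₁ → p₀ ⊆ p₂ →
      ∃ (p₃ : Set (ℕ × ℕ)) (σ : Equiv.Perm ℕ),
        memPrho ρ p₃ ∧ isFinPerm p₃ ∧
        (∀ a ∈ Prod.fst '' p₀ ∪ Prod.snd '' p₀, σ a = a) ∧
        p₁ ⊆ p₃ ∧ (fun x : ℕ × ℕ => (σ x.1, σ x.2)) '' p₂ ⊆ p₃) := by
  classical
  constructor
  · -- cofinality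
    intro p hp
    obtain ⟨σ, hσ⟩ := exists_conj ρ hp
    set τ := σ * ρ * σ⁻¹ with hτ
    have hper := hper_of_hfin ρ hfin σ
    set B : Finset ℕ := (hp.1.1.image Prod.fst).toFinset with hB
    obtain ⟨O, hBO, hfwd, hbwd⟩ := orbClo τ hper B
    obtain ⟨hq1, hq2⟩ := finperm_mem ρ σ O hfwd hbwd
    refine ⟨_, hq1, hq2, ?_⟩
    rintro ⟨x, y⟩ hxy
    have hxB : x ∈ B := (Set.Finite.mem_toFinset _).2 ⟨(x, y), hxy, rfl⟩
    exact ⟨x, hBO hxB, by show (x, τ x) = (x, y); rw [show τ x = y from hσ (x, y) hxy]⟩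
  · -- amalgamation
    intro p₀ p₁ p₂ h0 h1 h2 hf0 hf1 hf2 h01 h02
    obtain ⟨σ₁, hσ₁⟩ := exists_conj ρ h1
    obtain ⟨σ₂, hσ₂⟩ := exists_conj ρ h2
    set τ₁ := σ₁ * ρ * σ₁⁻¹ with hτ₁
    set τ₂ := σ₂ * ρ * σ₂⁻¹ with hτ₂
    have hper₁ := hper_of_hfin ρ hfin σ₁
    set A₀ : Finset ℕ := (h0.1.1.image Prod.fst).toFinset with hA₀
    have hA₀mem : ∀ x, x ∈ A₀ ↔ x ∈ Prod.fst '' p₀ := fun x => Set.Finite.mem_toFinset _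
    -- the two conjugates agree with p₀ on A₀ and preserve A₀
    have hA : ∀ x ∈ A₀, τ₁ x ∈ A₀ ∧ τ₂ x ∈ A₀ ∧ τ₁ x = τ₂ x := by
      intro x hx
      obtain ⟨⟨u, v⟩, huv, hux⟩ := (hA₀mem x).1 hx
      subst hux
      have ht1 : τ₁ u = v := hσ₁ (u, v) (h01 huv)
      have ht2 : τ₂ u = v := hσ₂ (u, v) (h02 huv)
      have hv : v ∈ A₀ := by
        rw [hA₀mem, hf0]
        exact ⟨(u, v), huv, rfl⟩
      exact ⟨ht1 ▸ hv, ht2 ▸ hv, ht1.trans ht2.symm⟩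
    set π := σ₁ * σ₂⁻¹ with hπ
    have hconj : ∀ x, π (τ₂ x) = τ₁ (π x) := by
      intro x
      simp [hπ, hτ₁, hτ₂, Equiv.Perm.mul_apply]
    set T : Finset ℕ := A₀.image ⇑π with hT
    have hTinv : ∀ x ∈ T, τ₁ x ∈ T := by
      intro x hx
      obtain ⟨a, ha, rfl⟩ := Finset.mem_image.1 hx
      rw [← hconj a]
      exact Finset.mem_image.2 ⟨τ₂ a, (hA a ha).2.1, rfl⟩
    have hTeq : ∀ x ∈ T, (⇑π⁻¹) (τ₁ x) = τ₁ ((⇑π⁻¹) x) := by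
      intro x hx
      obtain ⟨a, ha, rfl⟩ := Finset.mem_image.1 hx
      rw [← hconj a]
      simp only [Equiv.Perm.coe_inv, Equiv.symm_apply_apply]
      exact ((hA a ha).2.2).symm
    obtain ⟨δ, hδ1, hδ2⟩ := extend_equiv τ₁ hper₁ ((T.image ⇑π⁻¹ \ T).card) T ⇑π⁻¹
      le_rfl hTinv (fun x _ y _ h => π⁻¹.injective h) hTeq
    set σ := δ * π with hσ
    have hσfix : ∀ a ∈ A₀, σ a = a := by
      intro a ha
      have : π a ∈ T := Finset.mem_image.2 ⟨a, ha, rfl⟩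
      show δ (π a) = a
      rw [hδ2 _ this]
      simp
    have hστ : ∀ x, σ (τ₂ x) = τ₁ (σ x) := by
      intro x
      show δ (π (τ₂ x)) = τ₁ (δ (π x))
      rw [hconj x, hδ1]
    set B : Finset ℕ :=
      (h1.1.1.image Prod.fst).toFinset ∪ ((h2.1.1.image Prod.fst).toFinset).image ⇑σ with hBdef
    obtain ⟨O, hBO, hfwd, hbwd⟩ := orbClo τ₁ hper₁ B
    obtain ⟨hq1, hq2⟩ := finperm_mem ρ σ₁ O hfwd hbwd
    refine ⟨_, σ, hq1, hq2, ?_, ?_, ?_⟩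
    · intro a ha
      apply hσfix
      rw [hA₀mem]
      rcases ha with ha | ha
      · exact ha
      · rw [hf0]; exact ha
    · rintro ⟨x, y⟩ hxy
      have hxB : x ∈ B := Finset.mem_union_left _ ((Set.Finite.mem_toFinset _).2 ⟨(x, y), hxy, rfl⟩)
      exact ⟨x, hBO hxB, by show (x, τ₁ x) = (x, y); rw [show τ₁ x = y from hσ₁ (x, y) hxy]⟩
    · rintro ⟨u, v⟩ ⟨⟨x, y⟩, hxy, heq⟩
      simp only [Prod.mk.injEq] at heq
      obtain ⟨rfl, rfl⟩ := heq
      have hxB : σ x ∈ B := Finset.mem_union_right _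
        (Finset.mem_image.2 ⟨x, (Set.Finite.mem_toFinset _).2 ⟨(x, y), hxy, rfl⟩, rfl⟩)
      refine ⟨σ x, hBO hxB, ?_⟩
      show (σ x, τ₁ (σ x)) = (σ x, σ y)
      rw [← hστ x, show τ₂ x = y from hσ₂ (x, y) hxy]

/-- if `ρ` has no infinite cycles, then `P^c_ρ` (the members of `P_ρ`
that are permutations of finite sets) is cofinal in `P_ρ` and has the amalgamation
property. -/
theorem stmt15 (ρ : Equiv.Perm ℕ) (hfin : ∀ x : ℕ, (orbitOf ρ x).Finite) :
    (∀ p, memPrho ρ p → ∃ q, memPrho ρ q ∧ isFinPerm q ∧ p ⊆ q) ∧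
    (∀ p₀ p₁ p₂ : Set (ℕ × ℕ),
      memPrho ρ p₀ → memPrho ρ p₁ → memPrho ρ p₂ →
      isFinPerm p₀ → isFinPerm p₁ → isFinPerm p₂ →
      p₀ ⊆ p₁ → p₀ ⊆ p₂ →
      ∃ (p₃ : Set (ℕ × ℕ)) (σ : Equiv.Perm ℕ),
        memPrho ρ p₃ ∧ isFinPerm p₃ ∧
        (∀ a ∈ Prod.fst '' p₀ ∪ Prod.snd '' p₀, σ a = a) ∧
        p₁ ⊆ p₃ ∧ (fun x : ℕ × ℕ => (σ x.1, σ x.2)) '' p₂ ⊆ p₃) := by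
  exact stmt15' ρ hfin
end

section
/- Let Aut(ℚ, <) act on the set P of finite partial order-isomorphisms of (ℚ, <) by conjugation. Then the set of all p ∈ P with a single colored p-orbital of parity + and with no bad pairs is cofinal in the set P⁺ of all p ∈ P whose colored p-orbitals all have parity +: every p ∈ P⁺ extends to such a partial isomorphism. -/
/-- Piecewise-linear interpolation through the nodes `(a, F a)` for `a` in the
sorted list `l`, with slope-1 extensions outside (and `x + 1` when no nodes). -/
noncomputable def pl (F : ℚ → ℚ) : List ℚ → ℚ → ℚ
  | [], x => x + 1
  | [a], x => x + (F a - a)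
  | a :: a' :: tl, x =>
    if x < a' then
      (if x ≤ a then x + (F a - a)
       else ((a' - x) * F a + (x - a) * F a') / (a' - a))
    else pl F (a' :: tl) x

/-- Minimal displacement of the nodes (capped by 1). -/
def plδ (F : ℚ → ℚ) (l : List ℚ) : ℚ := (l.map (fun a => F a - a)).foldr min 1

lemma plδ_pos (F : ℚ → ℚ) (l : List ℚ) (h : ∀ a ∈ l, a < F a) : 0 < plδ F l := by
  induction l with
  | nil => norm_num [plδ]
  | cons a tl ih =>
      have h1 : 0 < F a - a := by have := h a (by simp); linarith
      have h2 : 0 < plδ F tl := ih (fun b hb => h b (by simp [hb]))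
      simpa [plδ] using lt_min h1 h2

lemma plδ_le (F : ℚ → ℚ) (l : List ℚ) {a : ℚ} (ha : a ∈ l) : plδ F l ≤ F a - a := by
  induction l with
  | nil => simp at ha
  | cons b tl ih =>
      rcases List.mem_cons.1 ha with rfl | ha'
      · simpa [plδ] using min_le_left _ _
      · exact le_trans (by simpa [plδ] using min_le_right _ _) (ih ha')

lemma pl_node (F : ℚ → ℚ) : ∀ (l : List ℚ), l.Pairwise (· < ·) → ∀ a ∈ l, pl F l a = F a := by
  intro l
  induction l with
  | nil => intro _ a ha; simp at ha
  | cons a tl ih =>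
      intro hs b hb
      match tl, hb with
      | [], hb =>
          have : b = a := by simpa using hb
          subst this; simp [pl]
      | a' :: tl', hb =>
          have haa' : a < a' := (List.pairwise_cons.1 hs).1 a' (by simp)
          have hs' : (a' :: tl').Pairwise (· < ·) := (List.pairwise_cons.1 hs).2
          rcases List.mem_cons.1 hb with rfl | hb'
          · have : (b : ℚ) < a' := haa'
            simp [pl, this]
          · have hle : a' ≤ b := by
              rcases List.mem_cons.1 hb' with rfl | hb'' 
              · exact le_refl _
              · exact le_of_lt ((List.pairwise_cons.1 hs').1 b hb'')
            have hnot : ¬ b < a' := not_lt.2 hle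
            simp only [pl, if_neg hnot]
            exact ih hs' b hb'

lemma pl_ge (F : ℚ → ℚ) : ∀ (l : List ℚ), l.Pairwise (· < ·) →
    ∀ x, x + plδ F l ≤ pl F l x := by
  intro l
  induction l with
  | nil => intro _ x; simp [pl, plδ]
  | cons a tl ih =>
      intro hs x
      match tl with
      | [] =>
          have : plδ F [a] ≤ F a - a := plδ_le F [a] (by simp)
          simp only [pl]; linarith
      | a' :: tl' =>
          have haa' : a < a' := (List.pairwise_cons.1 hs).1 a' (by simp)
          have hs' : (a' :: tl').Pairwise (· < ·) := (List.pairwise_cons.1 hs).2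
          have hδa : plδ F (a :: a' :: tl') ≤ F a - a := plδ_le F _ (by simp)
          have hδa' : plδ F (a :: a' :: tl') ≤ F a' - a' := plδ_le F _ (by simp)
          have hδtl : plδ F (a :: a' :: tl') ≤ plδ F (a' :: tl') := by
            simpa [plδ] using min_le_right _ _
          simp only [pl]
          split_ifs with h1 h2
          · linarith
          · -- a < x < a' : interpolation
            push_neg at h2
            rw [le_div_iff₀ (by linarith : (0:ℚ) < a' - a)]
            set δ := plδ F (a :: a' :: tl') with hδ
            have h3 : 0 ≤ (a' - x) * (F a - a - δ) :=
              mul_nonneg (by linarith) (by linarith)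
            have h4 : 0 ≤ (x - a) * (F a' - a' - δ) :=
              mul_nonneg (by linarith) (by linarith)
            nlinarith [h3, h4]
          · exact le_trans (by linarith [ih hs' x]) (le_refl _) |>.trans (le_refl _) |>.trans_eq rfl

lemma pl_strictMono (F : ℚ → ℚ) : ∀ (l : List ℚ), l.Pairwise (· < ·) →
    (∀ a ∈ l, ∀ b ∈ l, a < b → F a < F b) → StrictMono (pl F l) := by
  intro l
  induction l with
  | nil => intro _ _ x y hxy; simpa [pl] using hxy
  | cons a tl ih =>
      intro hs hm x y hxy
      match tl with
      | [] => simp only [pl]; linarith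
      | a' :: tl' =>
          have haa' : a < a' := (List.pairwise_cons.1 hs).1 a' (by simp)
          have hs' : (a' :: tl').Pairwise (· < ·) := (List.pairwise_cons.1 hs).2
          have hm' : ∀ b ∈ (a' :: tl'), ∀ c ∈ (a' :: tl'), b < c → F b < F c :=
            fun b hb c hc => hm b (by simp [hb]) c (by simp [hc])
          have hFa : F a < F a' := hm a (by simp) a' (by simp) haa'
          have ihm : StrictMono (pl F (a' :: tl')) := ih hs' hm'
          have hnode : pl F (a' :: tl') a' = F a' := pl_node F _ hs' a' (by simp)
          have hden : (0:ℚ) < a' - a := by linarith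
          have midlt : ∀ u v : ℚ, u < v →
              ((a' - u) * F a + (u - a) * F a') / (a' - a)
                < ((a' - v) * F a + (v - a) * F a') / (a' - a) := by
            intro u v huv
            rw [div_lt_div_iff₀ hden hden]
            nlinarith [mul_pos (mul_pos (sub_pos.2 huv) (sub_pos.2 hFa)) hden]
          have mida : ((a' - a) * F a + (a - a) * F a') / (a' - a) = F a := by
            field_simp; ring
          have mida' : ((a' - a') * F a + (a' - a) * F a') / (a' - a) = F a' := by
            rw [div_eq_iff (by linarith : a' - a ≠ 0)]; ring
          have tail_ge : ∀ z, a' ≤ z → F a' ≤ pl F (a' :: tl') z := by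
            intro z hz
            rcases eq_or_lt_of_le hz with rfl | hz'
            · exact le_of_eq hnode.symm
            · exact le_of_lt (hnode ▸ ihm hz')
          simp only [pl]
          by_cases hy2 : y < a'
          · have hx2 : x < a' := lt_trans hxy hy2
            rw [if_pos hx2, if_pos hy2]
            by_cases hx1 : x ≤ a
            · rw [if_pos hx1]
              by_cases hy1 : y ≤ a
              · rw [if_pos hy1]; linarith
              · push_neg at hy1
                rw [if_neg (not_le.2 hy1)]
                calc x + (F a - a) ≤ F a := by linarith
                  _ = ((a' - a) * F a + (a - a) * F a') / (a' - a) := mida.symm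
                  _ < _ := midlt a y hy1
            · push_neg at hx1
              rw [if_neg (not_le.2 hx1), if_neg (not_le.2 (lt_trans hx1 hxy))]
              exact midlt x y hxy
          · rw [if_neg hy2]
            push_neg at hy2
            by_cases hx2 : x < a'
            · rw [if_pos hx2]
              by_cases hx1 : x ≤ a
              · rw [if_pos hx1]
                calc x + (F a - a) ≤ F a := by linarith
                  _ < F a' := hFa
                  _ ≤ _ := tail_ge y hy2
              · push_neg at hx1
                rw [if_neg (not_le.2 hx1)]
                calc ((a' - x) * F a + (x - a) * F a') / (a' - a)
                    < ((a' - a') * F a + (a' - a) * F a') / (a' - a) := midlt x a' hx2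
                  _ = F a' := mida'
                  _ ≤ _ := tail_ge y hy2
            · push_neg at hx2
              rw [if_neg (not_lt.2 hx2)]
              exact ihm hxy

/-- A finite partial order-isomorphism of `(ℚ,<)`, given by its graph. -/
def IsFPI (p : Set (ℚ × ℚ)) : Prop :=
  p.Finite ∧ ∀ x ∈ p, ∀ y ∈ p,
    (x.1 < y.1 ↔ x.2 < y.2) ∧ (x.1 = y.1 ↔ x.2 = y.2)

/-- All colored `p`-orbitals of `p` have parity `+`: `p` moves every point up. -/
def allPlus (p : Set (ℚ × ℚ)) : Prop := ∀ x ∈ p, x.1 < x.2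

/-- The domain of the graph `p`. -/
def domS (p : Set (ℚ × ℚ)) : Set ℚ := Prod.fst '' p

/-- The range of the graph `p`. -/
def ranS (p : Set (ℚ × ℚ)) : Set ℚ := Prod.snd '' p

/-- `dom(p) ∪ ran(p)`. -/
def supp (p : Set (ℚ × ℚ)) : Set ℚ := domS p ∪ ranS p

/-- `p`-relatedness for a parity-`+` partial isomorphism `p`:
`a = b` or `a ≤ b ≤ p(a)`, `b ≤ a ≤ p(b)`, `p⁻¹(a) ≤ b ≤ a`, or `p⁻¹(b) ≤ a ≤ b`. -/
def prelPlus (p : Set (ℚ × ℚ)) (a b : ℚ) : Prop :=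
  a = b ∨ ∃ x ∈ p,
    (x.1 = a ∧ a ≤ b ∧ b ≤ x.2) ∨ (x.1 = b ∧ b ≤ a ∧ a ≤ x.2) ∨
    (x.2 = a ∧ x.1 ≤ b ∧ b ≤ a) ∨ (x.2 = b ∧ x.1 ≤ a ∧ a ≤ b)

/-- All elements of `dom(p) ∪ ran(p)` are in a single `p`-orbital. -/
def singleOrbital (p : Set (ℚ × ℚ)) : Prop :=
  ∀ a ∈ supp p, ∀ b ∈ supp p, Relation.EqvGen (prelPlus p) a b

/-- `p` (all of whose colored orbitals have parity `+`) has no bad pairs: there is no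
pair `a < a'` in `dom(p) ∪ ran(p)` with `p(a)` and `p⁻¹(a')` both undefined. -/
def noBadPairs (p : Set (ℚ × ℚ)) : Prop :=
  ¬ ∃ a ∈ supp p, ∃ a' ∈ supp p, a < a' ∧ a ∉ domS p ∧ a' ∉ ranS p

/-- the set of finite partial order-isomorphisms of `(ℚ,<)` with a
single colored `p`-orbital of parity `+` and no bad pairs is cofinal in `P⁺`: every
`p ∈ P⁺` extends to such a partial isomorphism. -/
theorem stmt19 :
    ∀ p : Set (ℚ × ℚ), IsFPI p → allPlus p →
      ∃ q : Set (ℚ × ℚ), IsFPI q ∧ allPlus q ∧ p ⊆ q ∧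
        singleOrbital q ∧ noBadPairs q := by
  classical
  intro p hfpi hall
  rcases Set.eq_empty_or_nonempty p with rfl | hpne
  · refine ⟨∅, ⟨Set.finite_empty, by simp⟩, by simp [allPlus], Set.Subset.refl _, ?_, ?_⟩
    · intro a ha; simp [supp, domS, ranS] at ha
    · rintro ⟨a, ha, _⟩; simp [supp, domS, ranS] at ha
  have hfin : p.Finite := hfpi.1
  have hfun : ∀ {a b c : ℚ}, (a, b) ∈ p → (a, c) ∈ p → b = c :=
    fun h1 h2 => (hfpi.2 _ h1 _ h2).2.mp rfl
  set F : ℚ → ℚ := fun a => if h : ∃ b, (a, b) ∈ p then h.choose else a + 1 with hFdef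
  have hFspec : ∀ {a b : ℚ}, (a, b) ∈ p → F a = b := by
    intro a b hab
    have hex : ∃ b', (a, b') ∈ p := ⟨b, hab⟩
    have h1 : F a = hex.choose := by simp only [hFdef]; rw [dif_pos hex]
    rw [h1]; exact hfun hex.choose_spec hab
  have hdomF : ∀ a ∈ domS p, (a, F a) ∈ p := by
    rintro a ⟨x, hx, rfl⟩
    have hx' : (x.1, x.2) ∈ p := by simpa using hx
    rw [hFspec hx']; exact hx'
  have hDomfin : (domS p).Finite := hfin.image Prod.fst
  set dl : List ℚ := hDomfin.toFinset.sort (· ≤ ·) with hdl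
  have hdl_mem : ∀ a : ℚ, a ∈ dl ↔ a ∈ domS p := by
    intro a; rw [hdl, Finset.mem_sort, Set.Finite.mem_toFinset]
  have hdl_sorted : dl.Pairwise (· < ·) := hDomfin.toFinset.sortedLT_sort.pairwise
  have hmono : ∀ a ∈ dl, ∀ b ∈ dl, a < b → F a < F b := by
    intro a ha b hb hab
    have h1 := hdomF a ((hdl_mem a).1 ha)
    have h2 := hdomF b ((hdl_mem b).1 hb)
    exact (hfpi.2 _ h1 _ h2).1.mp hab
  have hgt : ∀ a ∈ dl, a < F a := fun a ha => hall _ (hdomF a ((hdl_mem a).1 ha))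
  set G : ℚ → ℚ := pl F dl with hGdef
  have hGmono : StrictMono G := pl_strictMono F dl hdl_sorted hmono
  set δ : ℚ := plδ F dl with hδdef
  have hδ : 0 < δ := plδ_pos F dl hgt
  have hGge : ∀ x, x + δ ≤ G x := pl_ge F dl hdl_sorted
  have hxleG : ∀ x : ℚ, x ≤ G x := fun x => by have := hGge x; linarith
  have hxltG : ∀ x : ℚ, x < G x := fun x => by have := hGge x; linarith
  have hGnode : ∀ {a b : ℚ}, (a, b) ∈ p → G a = b := by
    intro a b hab
    have ha : a ∈ dl := (hdl_mem a).2 ⟨(a, b), hab, rfl⟩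
    rw [hGdef, pl_node F dl hdl_sorted a ha]; exact hFspec hab
  set S : Set ℚ := supp p with hSdef
  have hSfin : S.Finite := (hfin.image Prod.fst).union (hfin.image Prod.snd)
  have hSne : S.Nonempty := by
    obtain ⟨x, hx⟩ := hpne
    exact ⟨x.1, Or.inl ⟨x, hx, rfl⟩⟩
  have hSFne : hSfin.toFinset.Nonempty := hSfin.toFinset_nonempty.2 hSne
  set m : ℚ := hSfin.toFinset.min' hSFne with hmdef
  set M : ℚ := hSfin.toFinset.max' hSFne with hMdef
  have hmS : m ∈ S := hSfin.mem_toFinset.1 (hSfin.toFinset.min'_mem hSFne)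
  have hm_le : ∀ s ∈ S, m ≤ s := fun s hs => hSfin.toFinset.min'_le s (hSfin.mem_toFinset.2 hs)
  have hle_M : ∀ s ∈ S, s ≤ M := fun s hs => hSfin.toFinset.le_max' s (hSfin.mem_toFinset.2 hs)
  set N : ℕ := ⌈(M - m) / δ⌉₊ with hNdef
  have hNδ : M - m ≤ N * δ := by
    have h1 := Nat.le_ceil ((M - m) / δ)
    rw [div_le_iff₀ hδ] at h1
    exact h1
  have hiter : ∀ (n : ℕ) (x : ℚ), x + n * δ ≤ G^[n] x := by
    intro n
    induction n with
    | zero => intro x; simp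
    | succ n ih =>
        intro x
        rw [Function.iterate_succ_apply']
        have h1 := hGge (G^[n] x)
        have h2 := ih x
        push_cast
        push_cast at h2
        linarith
  have hesc : ∀ s ∈ S, M < G^[N + 1] s := by
    intro s hs
    have h1 := hiter (N + 1) s
    have h2 := hm_le s hs
    push_cast at h1
    linarith
  set D : Set ℚ := {x | ∃ i ≤ N, ∃ s ∈ S, G^[i] s = x} with hDdef
  have hDfin : D.Finite := by
    apply Set.Finite.subset (Set.Finite.biUnion (Finset.range (N + 1)).finite_toSet
      (fun i _ => hSfin.image G^[i]))
    rintro x ⟨i, hi, s, hs, hx⟩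
    simp only [Set.mem_iUnion, Finset.mem_coe, Finset.mem_range]
    exact ⟨i, Nat.lt_succ_of_le hi, s, hs, hx⟩
  set q : Set (ℚ × ℚ) := (fun x => (x, G x)) '' D with hqdef
  have hdomq : domS q = D := by
    ext y
    simp [domS, hqdef, Set.image_image]
  have hranq : ranS q = G '' D := by
    ext y
    simp [ranS, hqdef, Set.image_image]
  have hsuppq : supp q = D ∪ G '' D := by rw [supp, hdomq, hranq]
  refine ⟨q, ⟨hDfin.image _, ?_⟩, ?_, ?_, ?_, ?_⟩
  · -- order-isomorphism property
    rintro x ⟨u, hu, rfl⟩ y ⟨v, hv, rfl⟩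
    dsimp only
    exact ⟨hGmono.lt_iff_lt.symm, ⟨fun h => by rw [h], fun h => hGmono.injective h⟩⟩
  · -- allPlus
    rintro x ⟨u, hu, rfl⟩
    exact hxltG u

  · -- p ⊆ q
    intro x hx
    have hx' : (x.1, x.2) ∈ p := by simpa using hx
    refine ⟨x.1, ⟨0, Nat.zero_le N, x.1, Or.inl ⟨x, hx, rfl⟩, rfl⟩, ?_⟩
    have h2 : G x.1 = x.2 := hGnode hx'
    dsimp only
    rw [h2]
  · -- singleOrbital
    have hrel : ∀ x ∈ D, ∀ t : ℚ, x ≤ t → t ≤ G x → prelPlus q x t := by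
      intro x hx t h1 h2
      exact Or.inr ⟨(x, G x), ⟨x, hx, rfl⟩, Or.inl ⟨rfl, h1, h2⟩⟩
    have hchain : ∀ j, j ≤ N + 1 → ∀ s ∈ S, Relation.EqvGen (prelPlus q) s (G^[j] s) := by
      intro j
      induction j with
      | zero => intro _ s _; exact Relation.EqvGen.refl s
      | succ j ih =>
          intro hj s hs
          have hj' : j ≤ N := Nat.lt_succ_iff.mp hj
          have hD1 : G^[j] s ∈ D := ⟨j, hj', s, hs, rfl⟩
          have step : Relation.EqvGen (prelPlus q) (G^[j] s) (G^[j + 1] s) := by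
            rw [Function.iterate_succ_apply']
            exact Relation.EqvGen.rel _ _ (hrel _ hD1 _ (hxleG _) (le_refl _))
          exact Relation.EqvGen.trans _ _ _ (ih (Nat.le_of_succ_le hj) s hs) step
    have hm_s : ∀ s ∈ S, Relation.EqvGen (prelPlus q) m s := by
      intro s hs
      have hms : m ≤ s := hm_le s hs
      set P := fun i : ℕ => G^[i] m ≤ s with hPdef
      have hP0 : P 0 := by simpa [hPdef] using hms
      set i : ℕ := Nat.findGreatest P N with hidef
      have hiN : i ≤ N := Nat.findGreatest_le N
      have hPi : P i := Nat.findGreatest_spec (Nat.zero_le N) hP0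
      have hup : s ≤ G^[i + 1] m := by
        by_cases hiN' : i = N
        · have h1 := hesc m hmS
          have h2 := hle_M s hs
          rw [hiN']
          linarith
        · have hlt : i < N := lt_of_le_of_ne hiN hiN'
          have h1 : ¬ P (i + 1) :=
            Nat.findGreatest_is_greatest (Nat.lt_succ_self i) hlt
          exact (not_le.1 h1).le
      have hD1 : G^[i] m ∈ D := ⟨i, hiN, m, hmS, rfl⟩
      have h1 : Relation.EqvGen (prelPlus q) (G^[i] m) s := by
        apply Relation.EqvGen.rel
        apply hrel _ hD1 s hPi
        calc s ≤ G^[i + 1] m := hup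
          _ = G (G^[i] m) := Function.iterate_succ_apply' G i m
      exact Relation.EqvGen.trans _ _ _ (hchain i (Nat.le_succ_of_le hiN) m hmS) h1
    have hm_t : ∀ t ∈ supp q, Relation.EqvGen (prelPlus q) m t := by
      intro t ht
      rw [hsuppq] at ht
      have hrep : ∃ j ≤ N + 1, ∃ s ∈ S, G^[j] s = t := by
        rcases ht with hD' | hG'
        · obtain ⟨i, hi, s, hs, rfl⟩ := hD'
          exact ⟨i, Nat.le_succ_of_le hi, s, hs, rfl⟩
        · obtain ⟨x, hx, rfl⟩ := hG'
          obtain ⟨i, hi, s, hs, rfl⟩ := hx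
          exact ⟨i + 1, Nat.succ_le_succ hi, s, hs, Function.iterate_succ_apply' G i s⟩
      obtain ⟨j, hj, s, hs, rfl⟩ := hrep
      exact Relation.EqvGen.trans _ _ _ (hm_s s hs) (hchain j hj s hs)
    intro a ha b hb
    exact Relation.EqvGen.trans _ _ _
      (Relation.EqvGen.symm _ _ (hm_t a ha)) (hm_t b hb)
  · -- noBadPairs
    rintro ⟨a, ha, a', ha', hlt, hadom, haran⟩
    rw [hsuppq] at ha ha'
    rw [hdomq] at hadom
    rw [hranq] at haran
    have ha'M : a' ≤ M := by
      rcases ha' with h | h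
      · obtain ⟨i, hi, s, hs, rfl⟩ := h
        cases i with
        | zero => exact hle_M s hs
        | succ i' =>
            exfalso
            apply haran
            exact ⟨G^[i'] s, ⟨i', Nat.le_of_succ_le hi, s, hs, rfl⟩,
              (Function.iterate_succ_apply' G i' s).symm⟩
      · exact absurd h haran
    rcases ha with h | h
    · exact absurd h hadom
    obtain ⟨x, hx, rfl⟩ := h
    obtain ⟨i, hi, s, hs, rfl⟩ := hx
    by_cases hiN : i = N
    · have h1 := hesc s hs
      rw [hiN, ← Function.iterate_succ_apply' G N s] at hlt
      linarith
    · apply hadom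
      exact ⟨i + 1, Nat.succ_le_of_lt (lt_of_le_of_ne hi hiN), s, hs,
        Function.iterate_succ_apply' G i s⟩
end
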